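/- arXiv:1410.7098 — 8 statements merged into one kernel-verified Lean document; each statement's English description precedes it below -/
import Mathlib

section
/- Weighted Hall's lemma: Let G = (V₁ ∪ V₂, E) be a finite bipartite graph with positive real weights w(v) on the vertices. If for every subset U ⊆ V₁ one has w(U) ≤ w(N(U)), where N(U) is the neighborhood of U in V₂ and w(S) = Σ_{s∈S} w(s), then there exists a nonnegative edge labeling γ : E → ℝ≥0 such that Σ_{t∈N(s)} γ(s,t) = w(s) for every s ∈ V₁ and Σ_{s∈N(t)} γ(s,t) ≤ w(t) for every t ∈ V₂. -/
open scoped Classical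

open Finset

section Aux

variable {V₁ V₂ : Type*} [Fintype V₁] [Fintype V₂]

/-- The conclusion predicate: a good labeling for the sub-instance `(A, B, w₁, w₂)`. -/
private def Good (E : Finset (V₁ × V₂)) (A : Finset V₁) (B : Finset V₂)
    (w₁ : V₁ → ℝ) (w₂ : V₂ → ℝ) (γ : V₁ × V₂ → ℝ) : Prop :=
  (∀ p, 0 ≤ γ p) ∧
  (∀ p, γ p ≠ 0 → p.1 ∈ A ∧ p.2 ∈ B ∧ p ∈ E) ∧
  (∀ s ∈ A, ∑ t ∈ B.filter (fun t => (s, t) ∈ E), γ (s, t) = w₁ s) ∧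
  (∀ t ∈ B, ∑ s ∈ A.filter (fun s => (s, t) ∈ E), γ (s, t) ≤ w₂ t)

/-- The Hall condition for a sub-instance. -/
private def HallCond (E : Finset (V₁ × V₂)) (A : Finset V₁) (B : Finset V₂)
    (w₁ : V₁ → ℝ) (w₂ : V₂ → ℝ) : Prop :=
  ∀ U ⊆ A, ∑ s ∈ U, w₁ s ≤ ∑ t ∈ B.filter (fun t => ∃ s ∈ U, (s, t) ∈ E), w₂ t

private lemma sum_update_eq {α : Type*} (S : Finset α) (w : α → ℝ) (a : α) (v : ℝ) :
    ∑ x ∈ S, Function.update w a v x = (∑ x ∈ S, w x) + (if a ∈ S then v - w a else 0) := by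
  classical
  by_cases h : a ∈ S
  · rw [if_pos h, Finset.sum_update_of_mem h]
    have e : ∑ x ∈ S \ {a}, w x = ∑ x ∈ S, w x - w a := by
      rw [Finset.sdiff_singleton_eq_erase, Finset.sum_erase_eq_sub h]
    rw [e]; ring
  · rw [if_neg h, add_zero]
    refine Finset.sum_congr rfl fun x hx => ?_
    exact Function.update_of_ne (fun hxa => h (by rwa [hxa] at hx)) _ _

private lemma sum_filter_sub {α : Type*} {S' S : Finset α} (h : S' ⊆ S) (P : α → Prop)
    [DecidablePred P] (f : α → ℝ) (h0 : ∀ x ∈ S, x ∉ S' → f x = 0) :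
    ∑ x ∈ S.filter P, f x = ∑ x ∈ S'.filter P, f x := by
  refine (Finset.sum_subset (Finset.filter_subset_filter P h) ?_).symm
  intro x hx hx'
  exact h0 x (Finset.mem_filter.1 hx).1
    (fun hxS' => hx' (Finset.mem_filter.2 ⟨hxS', (Finset.mem_filter.1 hx).2⟩))

/-- Adding `δ` flow on the single edge `(s₀, t₀)` to an almost-good labeling. -/
private lemma combine (E : Finset (V₁ × V₂)) {A : Finset V₁} {B : Finset V₂}
    {w₁ : V₁ → ℝ} {w₂ : V₂ → ℝ} {s₀ : V₁} {t₀ : V₂} {δ : ℝ}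
    (hδ : 0 ≤ δ) (hs₀ : s₀ ∈ A) (ht₀ : t₀ ∈ B) (he : (s₀, t₀) ∈ E)
    (γ' : V₁ × V₂ → ℝ) (h0 : ∀ p, 0 ≤ γ' p)
    (hsupp : ∀ p, γ' p ≠ 0 → p.1 ∈ A ∧ p.2 ∈ B ∧ p ∈ E)
    (hrow : ∀ s ∈ A, ∑ t ∈ B.filter (fun t => (s, t) ∈ E), γ' (s, t)
      = w₁ s - (if s = s₀ then δ else 0))
    (hcol : ∀ t ∈ B, ∑ s ∈ A.filter (fun s => (s, t) ∈ E), γ' (s, t)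
      ≤ w₂ t - (if t = t₀ then δ else 0)) :
    ∃ γ, Good E A B w₁ w₂ γ := by
  refine ⟨fun p => γ' p + (if p = (s₀, t₀) then δ else 0), ?_, ?_, ?_, ?_⟩
  · intro p
    by_cases h : p = (s₀, t₀)
    · simpa [h] using add_nonneg (h0 (s₀, t₀)) hδ
    · simpa [h] using h0 p
  · intro p hp
    by_cases h : p = (s₀, t₀)
    · subst h; exact ⟨hs₀, ht₀, he⟩
    · simp only [h, if_false, add_zero] at hp
      exact hsupp p hp
  · intro s hs
    have hind : ∑ t ∈ B.filter (fun t => (s, t) ∈ E), (if (s, t) = (s₀, t₀) then δ else 0)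
        = if s = s₀ then δ else 0 := by
      by_cases h : s = s₀
      · have hmem : t₀ ∈ B.filter (fun t => (s, t) ∈ E) :=
          Finset.mem_filter.2 ⟨ht₀, by rw [h]; exact he⟩
        calc ∑ t ∈ B.filter (fun t => (s, t) ∈ E), (if (s, t) = (s₀, t₀) then δ else 0)
            = ∑ t ∈ B.filter (fun t => (s, t) ∈ E), (if t = t₀ then δ else 0) :=
              Finset.sum_congr rfl (fun t _ => by simp [Prod.ext_iff, h])
          _ = δ := by rw [Finset.sum_ite_eq' _ t₀ (fun _ => δ), if_pos hmem]
          _ = if s = s₀ then δ else 0 := by rw [if_pos h]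
      · rw [if_neg h]
        refine Finset.sum_eq_zero fun t _ => ?_
        rw [if_neg]
        intro hc
        exact h (congrArg Prod.fst hc)
    rw [Finset.sum_add_distrib, hrow s hs, hind]
    ring
  · intro t ht
    have hind : ∑ s ∈ A.filter (fun s => (s, t) ∈ E), (if (s, t) = (s₀, t₀) then δ else 0)
        = if t = t₀ then δ else 0 := by
      by_cases h : t = t₀
      · have hmem : s₀ ∈ A.filter (fun s => (s, t) ∈ E) :=
          Finset.mem_filter.2 ⟨hs₀, by rw [h]; exact he⟩
        calc ∑ s ∈ A.filter (fun s => (s, t) ∈ E), (if (s, t) = (s₀, t₀) then δ else 0)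
            = ∑ s ∈ A.filter (fun s => (s, t) ∈ E), (if s = s₀ then δ else 0) :=
              Finset.sum_congr rfl (fun s _ => by simp [Prod.ext_iff, h])
          _ = δ := by rw [Finset.sum_ite_eq' _ s₀ (fun _ => δ), if_pos hmem]
          _ = if t = t₀ then δ else 0 := by rw [if_pos h]
      · rw [if_neg h]
        refine Finset.sum_eq_zero fun s _ => ?_
        rw [if_neg]
        intro hc
        exact h (congrArg Prod.snd hc)
    rw [Finset.sum_add_distrib, hind]
    have := hcol t ht
    linarith

/-- Splitting along a tight set. -/
private lemma split (E : Finset (V₁ × V₂)) {n : ℕ}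
    (IH : ∀ (A : Finset V₁) (B : Finset V₂) (w₁ : V₁ → ℝ) (w₂ : V₂ → ℝ),
      A.card + B.card ≤ n → (∀ s ∈ A, 0 < w₁ s) → (∀ t ∈ B, 0 ≤ w₂ t) →
      HallCond E A B w₁ w₂ → ∃ γ, Good E A B w₁ w₂ γ)
    {A : Finset V₁} {B : Finset V₂} {w₁ : V₁ → ℝ} {w₂ : V₂ → ℝ}
    (hcard : A.card + B.card ≤ n + 1)
    (hpos : ∀ s ∈ A, 0 < w₁ s) (hnn : ∀ t ∈ B, 0 ≤ w₂ t)
    (hall : HallCond E A B w₁ w₂)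
    {U₀ : Finset V₁} (hU₀A : U₀ ⊆ A) (hU₀ne : U₀.Nonempty) (hU₀pr : U₀ ≠ A)
    (htight : ∑ s ∈ U₀, w₁ s
      = ∑ t ∈ B.filter (fun t => ∃ s ∈ U₀, (s, t) ∈ E), w₂ t) :
    ∃ γ, Good E A B w₁ w₂ γ := by
  set B₁ : Finset V₂ := B.filter (fun t => ∃ s ∈ U₀, (s, t) ∈ E) with hB₁
  set B₂ : Finset V₂ := B \ B₁ with hB₂
  set A₂ : Finset V₁ := A \ U₀ with hA₂
  have hB₁B : B₁ ⊆ B := Finset.filter_subset _ _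
  have hB₂B : B₂ ⊆ B := Finset.sdiff_subset
  have hA₂A : A₂ ⊆ A := Finset.sdiff_subset
  have hU₀lt : U₀.card < A.card := Finset.card_lt_card (lt_of_le_of_ne hU₀A hU₀pr)
  have hA₂lt : A₂.card < A.card := by
    obtain ⟨s, hsU₀⟩ := hU₀ne
    refine Finset.card_lt_card ⟨hA₂A, fun hAA₂ => ?_⟩
    have := hAA₂ (hU₀A hsU₀)
    rw [hA₂, Finset.mem_sdiff] at this
    exact this.2 hsU₀
  -- first sub-instance
  have hHall₁ : HallCond E U₀ B₁ w₁ w₂ := by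
    intro U hU
    have hfe : B₁.filter (fun t => ∃ s ∈ U, (s, t) ∈ E)
        = B.filter (fun t => ∃ s ∈ U, (s, t) ∈ E) := by
      ext t
      simp only [hB₁, Finset.mem_filter, and_assoc]
      constructor
      · rintro ⟨htB, _, hU'⟩; exact ⟨htB, hU'⟩
      · rintro ⟨htB, s, hsU, hst⟩; exact ⟨htB, ⟨s, hU hsU, hst⟩, ⟨s, hsU, hst⟩⟩
    rw [hfe]
    exact hall U (hU.trans hU₀A)
  obtain ⟨γ₁, hγ₁0, hγ₁supp, hγ₁row, hγ₁col⟩ :=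
    IH U₀ B₁ w₁ w₂ (Nat.le_of_lt_succ (lt_of_lt_of_le
      (Nat.add_lt_add_of_lt_of_le hU₀lt (Finset.card_le_card hB₁B)) hcard))
      (fun s hs => hpos s (hU₀A hs)) (fun t ht => hnn t (hB₁B ht)) hHall₁
  -- second sub-instance
  have hHall₂ : HallCond E A₂ B₂ w₁ w₂ := by
    intro U hU
    have hdisj : Disjoint U U₀ := by
      refine Finset.disjoint_left.2 fun s hsU hsU₀ => ?_
      have := hU hsU
      rw [hA₂, Finset.mem_sdiff] at this
      exact this.2 hsU₀
    have hsum : ∑ s ∈ U ∪ U₀, w₁ s = ∑ s ∈ U, w₁ s + ∑ s ∈ U₀, w₁ s :=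
      Finset.sum_union hdisj
    have hUA : U ∪ U₀ ⊆ A := Finset.union_subset (hU.trans hA₂A) hU₀A
    have h1 := hall (U ∪ U₀) hUA
    have hsub : B.filter (fun t => ∃ s ∈ U ∪ U₀, (s, t) ∈ E)
        ⊆ B₁ ∪ B₂.filter (fun t => ∃ s ∈ U, (s, t) ∈ E) := by
      intro t ht
      rw [Finset.mem_filter] at ht
      obtain ⟨htB, s, hsU, hst⟩ := ht
      rw [Finset.mem_union] at hsU ⊢
      by_cases htB₁ : t ∈ B₁
      · exact Or.inl htB₁
      · refine Or.inr (Finset.mem_filter.2 ⟨Finset.mem_sdiff.2 ⟨htB, htB₁⟩, ?_⟩)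
        rcases hsU with h | h
        · exact ⟨s, h, hst⟩
        · exact absurd (Finset.mem_filter.2 ⟨htB, s, h, hst⟩) htB₁
    have hdisj2 : Disjoint B₁ (B₂.filter (fun t => ∃ s ∈ U, (s, t) ∈ E)) := by
      refine Finset.disjoint_left.2 fun t ht ht2 => ?_
      have := (Finset.mem_filter.1 ht2).1
      rw [hB₂, Finset.mem_sdiff] at this
      exact this.2 ht
    have h2 : ∑ t ∈ B.filter (fun t => ∃ s ∈ U ∪ U₀, (s, t) ∈ E), w₂ t
        ≤ ∑ t ∈ B₁ ∪ B₂.filter (fun t => ∃ s ∈ U, (s, t) ∈ E), w₂ t := by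
      refine Finset.sum_le_sum_of_subset_of_nonneg hsub fun t ht _ => ?_
      rcases Finset.mem_union.1 ht with h | h
      · exact hnn t (hB₁B h)
      · exact hnn t (hB₂B (Finset.filter_subset _ _ h))
    rw [Finset.sum_union hdisj2] at h2
    rw [hsum] at h1
    have := h1.trans h2
    linarith [htight]
  obtain ⟨γ₂, hγ₂0, hγ₂supp, hγ₂row, hγ₂col⟩ :=
    IH A₂ B₂ w₁ w₂ (Nat.le_of_lt_succ (lt_of_lt_of_le
      (Nat.add_lt_add_of_lt_of_le hA₂lt (Finset.card_le_card hB₂B)) hcard))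
      (fun s hs => hpos s (hA₂A hs)) (fun t ht => hnn t (hB₂B ht)) hHall₂
  refine ⟨γ₁ + γ₂, fun p => add_nonneg (hγ₁0 p) (hγ₂0 p), ?_, ?_, ?_⟩
  · intro p hp
    by_cases h1 : γ₁ p ≠ 0
    · obtain ⟨h, h', h''⟩ := hγ₁supp p h1
      exact ⟨hU₀A h, hB₁B h', h''⟩
    · push_neg at h1
      have h2 : γ₂ p ≠ 0 := by
        intro h2; apply hp; simp [Pi.add_apply, h1, h2]
      obtain ⟨h, h', h''⟩ := hγ₂supp p h2
      exact ⟨hA₂A h, hB₂B h', h''⟩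
  · intro s hs
    by_cases hsU₀ : s ∈ U₀
    · have hz2 : ∀ t, γ₂ (s, t) = 0 := by
        intro t
        by_contra h
        have := (hγ₂supp (s, t) h).1
        rw [hA₂, Finset.mem_sdiff] at this
        exact this.2 hsU₀
      have e1 : ∑ t ∈ B.filter (fun t => (s, t) ∈ E), (γ₁ + γ₂) (s, t)
          = ∑ t ∈ B.filter (fun t => (s, t) ∈ E), γ₁ (s, t) := by
        refine Finset.sum_congr rfl fun t _ => ?_
        simp [Pi.add_apply, hz2 t]
      rw [e1, sum_filter_sub hB₁B _ (fun t => γ₁ (s, t))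
        (fun t _ htB₁ => by
          by_contra h
          exact htB₁ (hγ₁supp (s, t) h).2.1)]
      exact hγ₁row s hsU₀
    · have hsA₂ : s ∈ A₂ := Finset.mem_sdiff.2 ⟨hs, hsU₀⟩
      have hz1 : ∀ t, γ₁ (s, t) = 0 := by
        intro t
        by_contra h
        exact hsU₀ (hγ₁supp (s, t) h).1
      have e1 : ∑ t ∈ B.filter (fun t => (s, t) ∈ E), (γ₁ + γ₂) (s, t)
          = ∑ t ∈ B.filter (fun t => (s, t) ∈ E), γ₂ (s, t) := by
        refine Finset.sum_congr rfl fun t _ => ?_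
        simp [Pi.add_apply, hz1 t]
      rw [e1, sum_filter_sub hB₂B _ (fun t => γ₂ (s, t))
        (fun t _ htB₂ => by
          by_contra h
          exact htB₂ (hγ₂supp (s, t) h).2.1)]
      exact hγ₂row s hsA₂
  · intro t ht
    by_cases htB₁ : t ∈ B₁
    · have hz2 : ∀ s, γ₂ (s, t) = 0 := by
        intro s
        by_contra h
        have := (hγ₂supp (s, t) h).2.1
        rw [hB₂, Finset.mem_sdiff] at this
        exact this.2 htB₁
      have e1 : ∑ s ∈ A.filter (fun s => (s, t) ∈ E), (γ₁ + γ₂) (s, t)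
          = ∑ s ∈ A.filter (fun s => (s, t) ∈ E), γ₁ (s, t) := by
        refine Finset.sum_congr rfl fun s _ => ?_
        simp [Pi.add_apply, hz2 s]
      rw [e1, sum_filter_sub hU₀A _ (fun s => γ₁ (s, t))
        (fun s _ hsU₀ => by
          by_contra h
          exact hsU₀ (hγ₁supp (s, t) h).1)]
      exact hγ₁col t htB₁
    · have htB₂ : t ∈ B₂ := Finset.mem_sdiff.2 ⟨ht, htB₁⟩
      have hz1 : ∀ s, γ₁ (s, t) = 0 := by
        intro s
        by_contra h
        exact htB₁ (hγ₁supp (s, t) h).2.1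
      have e1 : ∑ s ∈ A.filter (fun s => (s, t) ∈ E), (γ₁ + γ₂) (s, t)
          = ∑ s ∈ A.filter (fun s => (s, t) ∈ E), γ₂ (s, t) := by
        refine Finset.sum_congr rfl fun s _ => ?_
        simp [Pi.add_apply, hz1 s]
      rw [e1, sum_filter_sub hA₂A _ (fun s => γ₂ (s, t))
        (fun s _ hsA₂ => by
          by_contra h
          exact hsA₂ (hγ₂supp (s, t) h).1)]
      exact hγ₂col t htB₂


/-- Removing a saturated left vertex `s₀` by pushing all its weight along `(s₀, t₀)`. -/
private lemma remS (E : Finset (V₁ × V₂)) {n : ℕ}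
    (IH : ∀ (A : Finset V₁) (B : Finset V₂) (w₁ : V₁ → ℝ) (w₂ : V₂ → ℝ),
      A.card + B.card ≤ n → (∀ s ∈ A, 0 < w₁ s) → (∀ t ∈ B, 0 ≤ w₂ t) →
      HallCond E A B w₁ w₂ → ∃ γ, Good E A B w₁ w₂ γ)
    {A : Finset V₁} {B : Finset V₂} {w₁ : V₁ → ℝ} {w₂ : V₂ → ℝ}
    (hcard : A.card + B.card ≤ n + 1)
    (hpos : ∀ s ∈ A, 0 < w₁ s) (hnn : ∀ t ∈ B, 0 ≤ w₂ t)
    (hall : HallCond E A B w₁ w₂)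
    {s₀ : V₁} {t₀ : V₂} (hs₀ : s₀ ∈ A) (ht₀ : t₀ ∈ B) (he : (s₀, t₀) ∈ E)
    (h1 : w₁ s₀ ≤ w₂ t₀)
    (h2 : ∀ U ⊆ A, s₀ ∉ U → t₀ ∈ B.filter (fun t => ∃ s ∈ U, (s, t) ∈ E) →
      ∑ s ∈ U, w₁ s + w₁ s₀ ≤ ∑ t ∈ B.filter (fun t => ∃ s ∈ U, (s, t) ∈ E), w₂ t) :
    ∃ γ, Good E A B w₁ w₂ γ := by
  set δ := w₁ s₀ with hδ
  set w₂' := fun t => w₂ t - (if t = t₀ then δ else 0) with hw₂'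
  set A' := A.erase s₀ with hA'
  have hA'A : A' ⊆ A := Finset.erase_subset _ _
  have hcard' : A'.card + B.card ≤ n := by
    have hc : A'.card = A.card - 1 := by rw [hA']; exact Finset.card_erase_of_mem hs₀
    have hc1 : 1 ≤ A.card := Finset.card_pos.2 ⟨s₀, hs₀⟩
    omega
  have hnn' : ∀ t ∈ B, 0 ≤ w₂' t := by
    intro t ht
    show 0 ≤ w₂ t - (if t = t₀ then δ else 0)
    by_cases h : t = t₀
    · subst h; rw [if_pos rfl]; linarith
    · rw [if_neg h, sub_zero]; exact hnn t ht
  have hsumS : ∀ S : Finset V₂, ∑ t ∈ S, w₂' t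
      = (∑ t ∈ S, w₂ t) - (if t₀ ∈ S then δ else 0) := by
    intro S
    simp only [hw₂', Finset.sum_sub_distrib]
    rw [Finset.sum_ite_eq' S t₀ (fun _ => δ)]
  have hall' : HallCond E A' B w₁ w₂' := by
    intro U hU
    rw [hsumS]
    by_cases hmem : t₀ ∈ B.filter (fun t => ∃ s ∈ U, (s, t) ∈ E)
    · have hs₀U : s₀ ∉ U := fun h => (Finset.mem_erase.1 (hU h)).1 rfl
      have := h2 U (hU.trans hA'A) hs₀U hmem
      rw [if_pos hmem]
      linarith
    · rw [if_neg hmem, sub_zero]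
      exact hall U (hU.trans hA'A)
  obtain ⟨γ', h0', hsupp', hrow', hcol'⟩ := IH A' B w₁ w₂' hcard'
    (fun s hs => hpos s (hA'A hs)) hnn' hall'
  refine combine E (le_of_lt (hpos s₀ hs₀)) hs₀ ht₀ he γ' h0'
    (fun p hp => ⟨hA'A (hsupp' p hp).1, (hsupp' p hp).2.1, (hsupp' p hp).2.2⟩) ?_ ?_
  · intro s hs
    by_cases h : s = s₀
    · rw [h, if_pos rfl]
      have hz : ∀ t ∈ B.filter (fun t => (s₀, t) ∈ E), γ' (s₀, t) = 0 := by
        intro t _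
        by_contra hc
        exact (Finset.mem_erase.1 (hsupp' (s₀, t) hc).1).1 rfl
      rw [Finset.sum_eq_zero hz]
      simp [hδ]
    · rw [if_neg h, sub_zero]
      exact hrow' s (Finset.mem_erase.2 ⟨h, hs⟩)
  · intro t ht
    have hc := hcol' t ht
    rw [sum_filter_sub hA'A _ (fun s => γ' (s, t)) (fun s _ hsA' => by
      by_contra hcc
      exact hsA' (hsupp' (s, t) hcc).1)]
    simpa [hw₂'] using hc

/-- Removing a saturated right vertex `t₀`. -/
private lemma remT (E : Finset (V₁ × V₂)) {n : ℕ}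
    (IH : ∀ (A : Finset V₁) (B : Finset V₂) (w₁ : V₁ → ℝ) (w₂ : V₂ → ℝ),
      A.card + B.card ≤ n → (∀ s ∈ A, 0 < w₁ s) → (∀ t ∈ B, 0 ≤ w₂ t) →
      HallCond E A B w₁ w₂ → ∃ γ, Good E A B w₁ w₂ γ)
    {A : Finset V₁} {B : Finset V₂} {w₁ : V₁ → ℝ} {w₂ : V₂ → ℝ}
    (hcard : A.card + B.card ≤ n + 1)
    (hpos : ∀ s ∈ A, 0 < w₁ s) (hnn : ∀ t ∈ B, 0 ≤ w₂ t)
    (hall : HallCond E A B w₁ w₂)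
    {s₀ : V₁} {t₀ : V₂} (hs₀ : s₀ ∈ A) (ht₀ : t₀ ∈ B) (he : (s₀, t₀) ∈ E)
    (h1 : w₂ t₀ < w₁ s₀)
    (h2 : ∀ U ⊆ A, s₀ ∉ U → t₀ ∈ B.filter (fun t => ∃ s ∈ U, (s, t) ∈ E) →
      ∑ s ∈ U, w₁ s + w₂ t₀ ≤ ∑ t ∈ B.filter (fun t => ∃ s ∈ U, (s, t) ∈ E), w₂ t) :
    ∃ γ, Good E A B w₁ w₂ γ := by
  set δ := w₂ t₀ with hδ
  have hδ0 : 0 ≤ δ := hnn t₀ ht₀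
  set w₁' := fun s => w₁ s - (if s = s₀ then δ else 0) with hw₁'
  set B' := B.erase t₀ with hB'
  have hB'B : B' ⊆ B := Finset.erase_subset _ _
  have hcard' : A.card + B'.card ≤ n := by
    have hc : B'.card = B.card - 1 := by rw [hB']; exact Finset.card_erase_of_mem ht₀
    have hc1 : 1 ≤ B.card := Finset.card_pos.2 ⟨t₀, ht₀⟩
    omega
  have hpos' : ∀ s ∈ A, 0 < w₁' s := by
    intro s hs
    show 0 < w₁ s - (if s = s₀ then δ else 0)
    by_cases h : s = s₀
    · subst h; rw [if_pos rfl]; linarith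
    · rw [if_neg h, sub_zero]; exact hpos s hs
  have hsumS : ∀ S : Finset V₁, ∑ s ∈ S, w₁' s
      = (∑ s ∈ S, w₁ s) - (if s₀ ∈ S then δ else 0) := by
    intro S
    simp only [hw₁', Finset.sum_sub_distrib]
    rw [Finset.sum_ite_eq' S s₀ (fun _ => δ)]
  have hall' : HallCond E A B' w₁' w₂ := by
    intro U hU
    rw [hsumS]
    have hfe : B'.filter (fun t => ∃ s ∈ U, (s, t) ∈ E)
        = (B.filter (fun t => ∃ s ∈ U, (s, t) ∈ E)).erase t₀ := by
      rw [hB', Finset.filter_erase]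
    rw [hfe]
    by_cases hmem : t₀ ∈ B.filter (fun t => ∃ s ∈ U, (s, t) ∈ E)
    · rw [Finset.sum_erase_eq_sub hmem]
      by_cases hsU : s₀ ∈ U
      · rw [if_pos hsU]
        have := hall U hU
        linarith
      · rw [if_neg hsU, sub_zero]
        have := h2 U hU hsU hmem
        linarith
    · rw [Finset.erase_eq_of_notMem hmem]
      have hsU : s₀ ∉ U := fun h => hmem (Finset.mem_filter.2 ⟨ht₀, s₀, h, he⟩)
      rw [if_neg hsU, sub_zero]
      exact hall U hU
  obtain ⟨γ', h0', hsupp', hrow', hcol'⟩ := IH A B' w₁' w₂ hcard' hpos'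
    (fun t ht => hnn t (hB'B ht)) hall'
  refine combine E hδ0 hs₀ ht₀ he γ' h0'
    (fun p hp => ⟨(hsupp' p hp).1, hB'B (hsupp' p hp).2.1, (hsupp' p hp).2.2⟩) ?_ ?_
  · intro s hs
    rw [sum_filter_sub hB'B _ (fun t => γ' (s, t)) (fun t _ htB' => by
      by_contra hcc
      exact htB' (hsupp' (s, t) hcc).2.1)]
    simpa [hw₁'] using hrow' s hs
  · intro t ht
    by_cases h : t = t₀
    · have hz : ∀ s ∈ A.filter (fun s => (s, t) ∈ E), γ' (s, t) = 0 := by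
        intro s _
        by_contra hc
        have := (hsupp' (s, t) hc).2.1
        rw [hB', h] at this
        exact (Finset.mem_erase.1 this).1 rfl
      rw [Finset.sum_eq_zero hz, h, if_pos rfl]
      simp [hδ]
    · rw [if_neg h, sub_zero]
      exact hcol' t (Finset.mem_erase.2 ⟨h, ht⟩)

/-- Pushing flow along `(s₀, t₀)` until some set becomes tight, then splitting. -/
private lemma push (E : Finset (V₁ × V₂)) {n : ℕ}
    (IH : ∀ (A : Finset V₁) (B : Finset V₂) (w₁ : V₁ → ℝ) (w₂ : V₂ → ℝ),
      A.card + B.card ≤ n → (∀ s ∈ A, 0 < w₁ s) → (∀ t ∈ B, 0 ≤ w₂ t) →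
      HallCond E A B w₁ w₂ → ∃ γ, Good E A B w₁ w₂ γ)
    {A : Finset V₁} {B : Finset V₂} {w₁ : V₁ → ℝ} {w₂ : V₂ → ℝ}
    (hcard : A.card + B.card ≤ n + 1)
    (hpos : ∀ s ∈ A, 0 < w₁ s) (hnn : ∀ t ∈ B, 0 ≤ w₂ t)
    (hall : HallCond E A B w₁ w₂)
    {s₀ : V₁} {t₀ : V₂} (hs₀ : s₀ ∈ A) (ht₀ : t₀ ∈ B) (he : (s₀, t₀) ∈ E)
    {U₀ : Finset V₁} (hU₀A : U₀ ⊆ A) (hs₀U₀ : s₀ ∉ U₀)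
    (ht₀U₀ : t₀ ∈ B.filter (fun t => ∃ s ∈ U₀, (s, t) ∈ E))
    {δ : ℝ} (hδ0 : 0 ≤ δ)
    (hδdef : ∑ s ∈ U₀, w₁ s + δ
      = ∑ t ∈ B.filter (fun t => ∃ s ∈ U₀, (s, t) ∈ E), w₂ t)
    (hδ1 : δ < w₁ s₀) (hδ2 : δ < w₂ t₀)
    (hmin : ∀ U ⊆ A, s₀ ∉ U → t₀ ∈ B.filter (fun t => ∃ s ∈ U, (s, t) ∈ E) →
      ∑ s ∈ U, w₁ s + δ ≤ ∑ t ∈ B.filter (fun t => ∃ s ∈ U, (s, t) ∈ E), w₂ t) :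
    ∃ γ, Good E A B w₁ w₂ γ := by
  set w₁' := fun s => w₁ s - (if s = s₀ then δ else 0) with hw₁'
  set w₂' := fun t => w₂ t - (if t = t₀ then δ else 0) with hw₂'
  have hpos' : ∀ s ∈ A, 0 < w₁' s := by
    intro s hs
    show 0 < w₁ s - (if s = s₀ then δ else 0)
    by_cases h : s = s₀
    · subst h; rw [if_pos rfl]; linarith
    · rw [if_neg h, sub_zero]; exact hpos s hs
  have hnn' : ∀ t ∈ B, 0 ≤ w₂' t := by
    intro t ht
    show 0 ≤ w₂ t - (if t = t₀ then δ else 0)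
    by_cases h : t = t₀
    · subst h; rw [if_pos rfl]; linarith
    · rw [if_neg h, sub_zero]; exact hnn t ht
  have hsum₁ : ∀ S : Finset V₁, ∑ s ∈ S, w₁' s
      = (∑ s ∈ S, w₁ s) - (if s₀ ∈ S then δ else 0) := by
    intro S
    simp only [hw₁', Finset.sum_sub_distrib]
    rw [Finset.sum_ite_eq' S s₀ (fun _ => δ)]
  have hsum₂ : ∀ S : Finset V₂, ∑ t ∈ S, w₂' t
      = (∑ t ∈ S, w₂ t) - (if t₀ ∈ S then δ else 0) := by
    intro S
    simp only [hw₂', Finset.sum_sub_distrib]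
    rw [Finset.sum_ite_eq' S t₀ (fun _ => δ)]
  have hall' : HallCond E A B w₁' w₂' := by
    intro U hU
    rw [hsum₁, hsum₂]
    by_cases hsU : s₀ ∈ U
    · have hmemt : t₀ ∈ B.filter (fun t => ∃ s ∈ U, (s, t) ∈ E) :=
        Finset.mem_filter.2 ⟨ht₀, s₀, hsU, he⟩
      rw [if_pos hsU, if_pos hmemt]
      have := hall U hU
      linarith
    · rw [if_neg hsU, sub_zero]
      by_cases hmemt : t₀ ∈ B.filter (fun t => ∃ s ∈ U, (s, t) ∈ E)
      · rw [if_pos hmemt]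
        have := hmin U hU hsU hmemt
        linarith
      · rw [if_neg hmemt, sub_zero]
        exact hall U hU
  have hU₀ne : U₀.Nonempty := by
    obtain ⟨-, s, hsU₀, -⟩ := Finset.mem_filter.1 ht₀U₀
    exact ⟨s, hsU₀⟩
  have hU₀pr : U₀ ≠ A := fun h => hs₀U₀ (h ▸ hs₀)
  have htight' : ∑ s ∈ U₀, w₁' s
      = ∑ t ∈ B.filter (fun t => ∃ s ∈ U₀, (s, t) ∈ E), w₂' t := by
    rw [hsum₁, hsum₂, if_neg hs₀U₀, if_pos ht₀U₀]
    linarith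
  obtain ⟨γ', h0', hsupp', hrow', hcol'⟩ :=
    split E IH hcard hpos' hnn' hall' hU₀A hU₀ne hU₀pr htight'
  refine combine E hδ0 hs₀ ht₀ he γ' h0' hsupp' ?_ ?_
  · intro s hs
    simpa [hw₁'] using hrow' s hs
  · intro t ht
    simpa [hw₂'] using hcol' t ht

private lemma emptySol (E : Finset (V₁ × V₂)) {A : Finset V₁} {B : Finset V₂}
    {w₁ : V₁ → ℝ} {w₂ : V₂ → ℝ} (hA : A = ∅) (hnn : ∀ t ∈ B, 0 ≤ w₂ t) :
    ∃ γ, Good E A B w₁ w₂ γ := by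
  refine ⟨fun _ => 0, fun p => le_refl 0, fun p hp => absurd rfl hp, ?_, ?_⟩
  · intro s hs
    rw [hA] at hs
    exact absurd hs (Finset.notMem_empty s)
  · intro t ht
    rw [hA, Finset.filter_empty, Finset.sum_empty]
    exact hnn t ht

private lemma core (E : Finset (V₁ × V₂)) :
    ∀ (n : ℕ) (A : Finset V₁) (B : Finset V₂) (w₁ : V₁ → ℝ) (w₂ : V₂ → ℝ),
      A.card + B.card ≤ n → (∀ s ∈ A, 0 < w₁ s) → (∀ t ∈ B, 0 ≤ w₂ t) →
      HallCond E A B w₁ w₂ → ∃ γ, Good E A B w₁ w₂ γ := by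
  intro n
  induction n with
  | zero =>
    intro A B w₁ w₂ hcard _ hnn _
    exact emptySol E (Finset.card_eq_zero.1 (by omega)) hnn
  | succ n IH =>
    intro A B w₁ w₂ hcard hpos hnn hall
    by_cases hA : A = ∅
    · exact emptySol E hA hnn
    obtain ⟨s₀, hs₀⟩ := Finset.nonempty_iff_ne_empty.2 hA
    by_cases hT : ∃ U₀ : Finset V₁, U₀ ⊆ A ∧ U₀.Nonempty ∧ U₀ ≠ A ∧
        ∑ s ∈ U₀, w₁ s = ∑ t ∈ B.filter (fun t => ∃ s ∈ U₀, (s, t) ∈ E), w₂ t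
    · obtain ⟨U₀, h1, h2, h3, h4⟩ := hT
      exact split E IH hcard hpos hnn hall h1 h2 h3 h4
    push_neg at hT
    have hne : (B.filter (fun t => (s₀, t) ∈ E)).Nonempty := by
      by_contra hempty
      rw [Finset.not_nonempty_iff_eq_empty] at hempty
      have hh := hall {s₀} (Finset.singleton_subset_iff.2 hs₀)
      have hfe : B.filter (fun t => ∃ s ∈ ({s₀} : Finset V₁), (s, t) ∈ E)
          = B.filter (fun t => (s₀, t) ∈ E) := by
        apply Finset.filter_congr
        intro t _
        simp
      rw [hfe, hempty, Finset.sum_empty, Finset.sum_singleton] at hh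
      exact absurd hh (not_le.2 (hpos s₀ hs₀))
    obtain ⟨t₀, ht₀f⟩ := hne
    have ht₀ : t₀ ∈ B := (Finset.mem_filter.1 ht₀f).1
    have he : (s₀, t₀) ∈ E := (Finset.mem_filter.1 ht₀f).2
    have hq : ∀ U ⊆ A, s₀ ∉ U → t₀ ∈ B.filter (fun t => ∃ s ∈ U, (s, t) ∈ E) →
        ∑ s ∈ U, w₁ s < ∑ t ∈ B.filter (fun t => ∃ s ∈ U, (s, t) ∈ E), w₂ t := by
      intro U hU hsU htU
      have hUne : U.Nonempty := by
        obtain ⟨-, s, hsU', -⟩ := Finset.mem_filter.1 htU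
        exact ⟨s, hsU'⟩
      have hUA : U ≠ A := fun h => hsU (h ▸ hs₀)
      exact lt_of_le_of_ne (hall U hU) (hT U hU hUne hUA)
    set F := A.powerset.filter
        (fun U => s₀ ∉ U ∧ t₀ ∈ B.filter (fun t => ∃ s ∈ U, (s, t) ∈ E)) with hFdef
    by_cases hFne : F.Nonempty
    · obtain ⟨U₀, hU₀F, hUmin⟩ := Finset.exists_min_image F
        (fun U => (∑ t ∈ B.filter (fun t => ∃ s ∈ U, (s, t) ∈ E), w₂ t) - ∑ s ∈ U, w₁ s) hFne
      rw [hFdef, Finset.mem_filter, Finset.mem_powerset] at hU₀F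
      obtain ⟨hU₀A, hs₀U₀, ht₀U₀⟩ := hU₀F
      set m := (∑ t ∈ B.filter (fun t => ∃ s ∈ U₀, (s, t) ∈ E), w₂ t) - ∑ s ∈ U₀, w₁ s
        with hm
      have hm0 : 0 < m := by
        have := hq U₀ hU₀A hs₀U₀ ht₀U₀
        rw [hm]
        linarith
      have hminU : ∀ U ⊆ A, s₀ ∉ U → t₀ ∈ B.filter (fun t => ∃ s ∈ U, (s, t) ∈ E) →
          ∑ s ∈ U, w₁ s + m ≤ ∑ t ∈ B.filter (fun t => ∃ s ∈ U, (s, t) ∈ E), w₂ t := by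
        intro U hU hh1 hh2
        have := hUmin U (by
          rw [hFdef, Finset.mem_filter, Finset.mem_powerset]
          exact ⟨hU, hh1, hh2⟩)
        linarith
      by_cases c1 : w₁ s₀ ≤ w₂ t₀ ∧ w₁ s₀ ≤ m
      · exact remS E IH hcard hpos hnn hall hs₀ ht₀ he c1.1
          (fun U hU hh1 hh2 => by have := hminU U hU hh1 hh2; linarith [c1.2])
      · by_cases c2 : w₂ t₀ ≤ m
        · have hlt : w₂ t₀ < w₁ s₀ := by
            rcases not_and_or.1 c1 with h | h
            · exact not_le.1 h
            · exact lt_of_le_of_lt c2 (not_le.1 h)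
          exact remT E IH hcard hpos hnn hall hs₀ ht₀ he hlt
            (fun U hU hh1 hh2 => by have := hminU U hU hh1 hh2; linarith)
        · have hm2 : m < w₂ t₀ := not_le.1 c2
          have hm1 : m < w₁ s₀ := by
            rcases not_and_or.1 c1 with h | h
            · exact hm2.trans (not_le.1 h)
            · exact not_le.1 h
          exact push E IH hcard hpos hnn hall hs₀ ht₀ he hU₀A hs₀U₀ ht₀U₀
            (le_of_lt hm0) (by rw [hm]; ring) hm1 hm2 hminU
    · have hnoq : ∀ U ⊆ A, s₀ ∉ U →
          t₀ ∈ B.filter (fun t => ∃ s ∈ U, (s, t) ∈ E) → False := by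
        intro U hU hh1 hh2
        exact hFne ⟨U, by
          rw [hFdef, Finset.mem_filter, Finset.mem_powerset]
          exact ⟨hU, hh1, hh2⟩⟩
      by_cases c1 : w₁ s₀ ≤ w₂ t₀
      · exact remS E IH hcard hpos hnn hall hs₀ ht₀ he c1
          (fun U hU hh1 hh2 => (hnoq U hU hh1 hh2).elim)
      · exact remT E IH hcard hpos hnn hall hs₀ ht₀ he (not_le.1 c1)
          (fun U hU hh1 hh2 => (hnoq U hU hh1 hh2).elim)

end Aux

/-- Weighted Hall's lemma: in a finite bipartite graph with positive vertex weights,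
if `w(U) ≤ w(N(U))` for every `U ⊆ V₁`, then there exists a nonnegative edge labeling `γ`
saturating `V₁`. -/
theorem stmt1 {V₁ V₂ : Type*} [Fintype V₁] [Fintype V₂] (E : Finset (V₁ × V₂))
    (w₁ : V₁ → ℝ) (w₂ : V₂ → ℝ) (hw₁ : ∀ s, 0 < w₁ s) (hw₂ : ∀ t, 0 < w₂ t)
    (hHall : ∀ U : Finset V₁,
      ∑ s ∈ U, w₁ s ≤ ∑ t ∈ Finset.univ.filter (fun t => ∃ s ∈ U, (s, t) ∈ E), w₂ t) :
    ∃ γ : V₁ × V₂ → ℝ,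
      (∀ p, 0 ≤ γ p) ∧ (∀ p, p ∉ E → γ p = 0) ∧
      (∀ s, ∑ t ∈ Finset.univ.filter (fun t => (s, t) ∈ E), γ (s, t) = w₁ s) ∧
      (∀ t, ∑ s ∈ Finset.univ.filter (fun s => (s, t) ∈ E), γ (s, t) ≤ w₂ t) := by
  obtain ⟨γ, h0, hsupp, hrow, hcol⟩ :=
    core E ((Finset.univ : Finset V₁).card + (Finset.univ : Finset V₂).card)
      Finset.univ Finset.univ w₁ w₂ le_rfl (fun s _ => hw₁ s) (fun t _ => (hw₂ t).le)
      (fun U _ => hHall U)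
  exact ⟨γ, h0, fun p hp => by by_contra hne; exact hp (hsupp p hne).2.2,
    fun s => hrow s (Finset.mem_univ s), fun t => hcol t (Finset.mem_univ t)⟩
end

section
/- Let G = (V₁ ∪ V₂, E) be a finite bipartite graph with rational positive vertex weights satisfying w(U) ≤ w(N(U)) for all U ⊆ V₁. Then there exists a rational-valued nonnegative edge labeling γ saturating V₁, i.e., Σ_{t∈N(s)} γ(s,t) = w(s) for all s ∈ V₁ and Σ_{s∈N(t)} γ(s,t) ≤ w(t) for all t ∈ V₂. -/
open scoped Classical

/-- If `q`'s denominator divides `N` and `0 < q`, then `N * q` is a natural number. -/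
lemma aux_nat_mul (N : ℕ) (q : ℚ) (hq : 0 < q) (h : q.den ∣ N) :
    ∃ m : ℕ, (m : ℚ) = N * q := by
  obtain ⟨k, hk⟩ := h
  have hden : ((q.den : ℚ)) * q = q.num := by
    have hd : ((q.den : ℚ)) ≠ 0 := by exact_mod_cast q.den_pos.ne'
    have h := div_mul_cancel₀ ((q.num : ℚ)) hd
    rw [q.num_div_den] at h
    rw [mul_comm]; exact h
  have hnum : 0 < q.num := Rat.num_pos.mpr hq
  refine ⟨k * q.num.toNat, ?_⟩
  have htn : ((q.num.toNat : ℕ) : ℚ) = (q.num : ℚ) := by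
    exact_mod_cast congrArg (Int.cast : ℤ → ℚ) (Int.toNat_of_nonneg hnum.le)
  push_cast
  rw [htn, hk]
  push_cast
  rw [mul_comm ((q.den : ℚ)) ((k : ℚ)), mul_assoc, hden]

/-- Weighted Hall's lemma with rational weights: if the positive rational vertex weights
satisfy `w(U) ≤ w(N(U))` for all `U ⊆ V₁`, then there exists a rational-valued nonnegative
edge labeling `γ` saturating `V₁`. -/
theorem stmt3 {V₁ V₂ : Type*} [Fintype V₁] [Fintype V₂] (E : Finset (V₁ × V₂))
    (w₁ : V₁ → ℚ) (w₂ : V₂ → ℚ) (hw₁ : ∀ s, 0 < w₁ s) (hw₂ : ∀ t, 0 < w₂ t)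
    (hHall : ∀ U : Finset V₁,
      ∑ s ∈ U, w₁ s ≤ ∑ t ∈ Finset.univ.filter (fun t => ∃ s ∈ U, (s, t) ∈ E), w₂ t) :
    ∃ γ : V₁ × V₂ → ℚ,
      (∀ p, 0 ≤ γ p) ∧ (∀ p, p ∉ E → γ p = 0) ∧
      (∀ s, ∑ t ∈ Finset.univ.filter (fun t => (s, t) ∈ E), γ (s, t) = w₁ s) ∧
      (∀ t, ∑ s ∈ Finset.univ.filter (fun s => (s, t) ∈ E), γ (s, t) ≤ w₂ t) := by
  classical
  set N : ℕ := (∏ s : V₁, (w₁ s).den) * (∏ t : V₂, (w₂ t).den) with hNdef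
  have hNpos : 0 < N := by
    apply Nat.mul_pos <;> exact Finset.prod_pos (fun _ _ => Rat.den_pos _)
  have hNQ : (0 : ℚ) < N := by exact_mod_cast hNpos
  have h1 : ∀ s : V₁, ∃ m : ℕ, (m : ℚ) = N * w₁ s := by
    intro s
    exact aux_nat_mul N (w₁ s) (hw₁ s)
      (Dvd.dvd.mul_right (Finset.dvd_prod_of_mem _ (Finset.mem_univ s)) _)
  have h2 : ∀ t : V₂, ∃ m : ℕ, (m : ℚ) = N * w₂ t := by
    intro t
    exact aux_nat_mul N (w₂ t) (hw₂ t)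
      (Dvd.dvd.mul_left (Finset.dvd_prod_of_mem _ (Finset.mem_univ t)) _)
  choose m₁ hm₁ using h1
  choose m₂ hm₂ using h2
  -- blown-up graph
  set A := Σ s : V₁, Fin (m₁ s) with hA
  set B := Σ t : V₂, Fin (m₂ t) with hB
  set r : A → Finset B := fun a => Finset.univ.filter (fun b => (a.1, b.1) ∈ E) with hr
  have hall : ∀ S : Finset A, S.card ≤ (S.biUnion r).card := by
    intro S
    set U : Finset V₁ := S.image Sigma.fst with hU
    set W : Finset V₂ := Finset.univ.filter (fun t => ∃ s ∈ U, (s, t) ∈ E) with hW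
    have step1 : S.card ≤ ∑ s ∈ U, m₁ s := by
      have hsub : S ⊆ U.sigma (fun s => (Finset.univ : Finset (Fin (m₁ s)))) := by
        intro a ha
        rw [Finset.mem_sigma]
        exact ⟨Finset.mem_image_of_mem Sigma.fst ha, Finset.mem_univ _⟩
      calc S.card ≤ (U.sigma (fun s => (Finset.univ : Finset (Fin (m₁ s))))).card :=
            Finset.card_le_card hsub
        _ = ∑ s ∈ U, m₁ s := by simp [Finset.card_sigma]
    have step2 : ∑ s ∈ U, m₁ s ≤ ∑ t ∈ W, m₂ t := by
      have := hHall U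
      have hq : (↑(∑ s ∈ U, m₁ s) : ℚ) ≤ (↑(∑ t ∈ W, m₂ t) : ℚ) := by
        push_cast
        rw [Finset.sum_congr rfl (fun s _ => hm₁ s), Finset.sum_congr rfl (fun t _ => hm₂ t),
          ← Finset.mul_sum, ← Finset.mul_sum]
        exact mul_le_mul_of_nonneg_left this hNQ.le
      exact_mod_cast hq
    have step3 : ∑ t ∈ W, m₂ t ≤ (S.biUnion r).card := by
      have hsub : W.sigma (fun t => (Finset.univ : Finset (Fin (m₂ t)))) ⊆ S.biUnion r := by
        intro b hb
        rw [Finset.mem_sigma] at hb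
        have hbW : b.1 ∈ W := hb.1
        rw [hW, Finset.mem_filter] at hbW
        obtain ⟨-, s, hsU, hE⟩ := hbW
        rw [hU, Finset.mem_image] at hsU
        obtain ⟨a, haS, rfl⟩ := hsU
        refine Finset.mem_biUnion.mpr ⟨a, haS, ?_⟩
        simp [hr, hE]
      calc ∑ t ∈ W, m₂ t = (W.sigma (fun t => (Finset.univ : Finset (Fin (m₂ t))))).card := by
            simp [Finset.card_sigma]
        _ ≤ (S.biUnion r).card := Finset.card_le_card hsub
    exact step1.trans (step2.trans step3)
  obtain ⟨f, hfinj, hf⟩ := (Finset.all_card_le_biUnion_card_iff_exists_injective r).mp hall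
  have hfE : ∀ a : A, (a.1, (f a).1) ∈ E := by
    intro a
    have := hf a
    rw [hr, Finset.mem_filter] at this
    exact this.2
  set c : V₁ → V₂ → ℕ :=
    fun s t => (Finset.univ.filter (fun i : Fin (m₁ s) => (f ⟨s, i⟩).1 = t)).card with hc
  refine ⟨fun p => (c p.1 p.2 : ℚ) / N, ?_, ?_, ?_, ?_⟩
  · intro p; positivity
  · rintro ⟨s, t⟩ hp
    have : c s t = 0 := by
      rw [hc, Finset.card_eq_zero, Finset.filter_eq_empty_iff]
      intro i _ hi
      exact hp (by rw [← hi]; exact hfE ⟨s, i⟩)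
    simp [this]
  · intro s
    rw [← Finset.sum_div]
    have hpart : ∑ t : V₂, c s t = m₁ s := by
      rw [hc]
      have := Finset.card_eq_sum_card_fiberwise
        (f := fun i : Fin (m₁ s) => (f ⟨s, i⟩).1) (s := Finset.univ) (t := Finset.univ)
        (fun x _ => Finset.mem_univ _)
      simpa using this.symm
    have hext : ∑ t ∈ Finset.univ.filter (fun t => (s, t) ∈ E), (c s t : ℚ)
        = ∑ t : V₂, (c s t : ℚ) := by
      apply Finset.sum_subset (Finset.subset_univ _)
      intro t _ ht
      rw [Finset.mem_filter] at ht
      push_neg at ht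
      have hE : (s, t) ∉ E := ht (Finset.mem_univ t)
      have : c s t = 0 := by
        rw [hc, Finset.card_eq_zero, Finset.filter_eq_empty_iff]
        intro i _ hi
        exact hE (by rw [← hi]; exact hfE ⟨s, i⟩)
      simp [this]
    rw [hext]
    have : ∑ t : V₂, (c s t : ℚ) = (m₁ s : ℚ) := by exact_mod_cast congrArg Nat.cast hpart
    rw [this, hm₁ s, mul_comm, mul_div_assoc, div_self hNQ.ne', mul_one]
  · intro t
    rw [← Finset.sum_div, div_le_iff₀ hNQ]
    -- key cardinality bound
    set T : Finset A := Finset.univ.filter (fun a : A => (f a).1 = t) with hT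
    have hfib : ∀ s : V₁, T.filter (fun a => a.1 = s)
        = (Finset.univ.filter (fun i : Fin (m₁ s) => (f ⟨s, i⟩).1 = t)).image
            (fun i => (⟨s, i⟩ : A)) := by
      intro s
      ext ⟨s', i⟩
      simp only [Finset.mem_filter, Finset.mem_image, Finset.mem_univ, true_and, hT]
      constructor
      · rintro ⟨h1id, rfl⟩
        exact ⟨i, h1id, rfl⟩
      · rintro ⟨j, hj, hji⟩
        obtain ⟨rfl, h⟩ := Sigma.mk.inj_iff.mp hji
        cases eq_of_heq h
        exact ⟨hj, rfl⟩
    have hTcard : T.card = ∑ s : V₁, c s t := by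
      rw [Finset.card_eq_sum_card_fiberwise
        (f := fun a : A => a.1) (s := T) (t := Finset.univ) (fun x _ => Finset.mem_univ _)]
      refine Finset.sum_congr rfl (fun s _ => ?_)
      rw [hfib s, Finset.card_image_of_injective _ sigma_mk_injective, hc]
    have hTle : T.card ≤ m₂ t := by
      have himg : T.image f ⊆ Finset.univ.filter (fun b : B => b.1 = t) := by
        intro b hb
        rw [Finset.mem_image] at hb
        obtain ⟨a, ha, rfl⟩ := hb
        rw [hT, Finset.mem_filter] at ha
        simp [ha.2]
      have hcardimg : (T.image f).card = T.card :=
        Finset.card_image_of_injective _ hfinj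
      have hfibercard : (Finset.univ.filter (fun b : B => b.1 = t)).card = m₂ t := by
        have : Finset.univ.filter (fun b : B => b.1 = t)
            = (Finset.univ : Finset (Fin (m₂ t))).image (fun j => (⟨t, j⟩ : B)) := by
          ext ⟨t', j⟩
          simp only [Finset.mem_filter, Finset.mem_image, Finset.mem_univ, true_and]
          constructor
          · rintro rfl; exact ⟨j, rfl⟩
          · rintro ⟨j', hj'⟩
            obtain ⟨rfl, -⟩ := Sigma.mk.inj_iff.mp hj'
            rfl
        rw [this, Finset.card_image_of_injective _ sigma_mk_injective, Finset.card_univ,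
          Fintype.card_fin]
      calc T.card = (T.image f).card := hcardimg.symm
        _ ≤ _ := Finset.card_le_card himg
        _ = m₂ t := hfibercard
    have hsum : ∑ s ∈ Finset.univ.filter (fun s => (s, t) ∈ E), (c s t : ℚ)
        ≤ (m₂ t : ℚ) := by
      have h1 : ∑ s ∈ Finset.univ.filter (fun s => (s, t) ∈ E), c s t
          ≤ ∑ s : V₁, c s t :=
        Finset.sum_le_sum_of_subset (Finset.subset_univ _)
      have h2 : ∑ s : V₁, c s t ≤ m₂ t := by rw [← hTcard]; exact hTle
      exact_mod_cast h1.trans h2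
    calc ∑ s ∈ Finset.univ.filter (fun s => (s, t) ∈ E), (c s t : ℚ)
        ≤ (m₂ t : ℚ) := hsum
      _ = N * w₂ t := hm₂ t
      _ = w₂ t * N := mul_comm _ _
end

section
/- Let G = (V,E) be a finite graph and F' ⊆ E a set of edges whose edge-induced subgraph is a single-cycle forest. Then for every U ⊆ V, Σ over edges e ∈ F' with e ∩ U ≠ ∅ of (|e ∩ U| − 1) is at most |U|. -/
open scoped Classical

/-- A graph is a single-cycle forest if every connected component contains at most one cycle. -/
def IsSingleCycleForest {W : Type*} (G : SimpleGraph W) : Prop :=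
  ∀ c : G.ConnectedComponent,
    {e ∈ G.edgeSet | ∀ v ∈ e, G.connectedComponentMk v = c}.ncard ≤
      {v : W | G.connectedComponentMk v = c}.ncard

/-- The graph on `V` whose edges are the two-element sets belonging to `F'`. -/
def pairGraph {V : Type*} [DecidableEq V] (F' : Finset (Finset V)) : SimpleGraph V where
  Adj u v := u ≠ v ∧ ({u, v} : Finset V) ∈ F'
  symm := by
    constructor
    intro u v h
    exact ⟨h.1.symm, by rw [Finset.pair_comm]; exact h.2⟩
  loopless := by
    constructor
    intro u h
    exact h.1 rfl

section Aux

variable {V : Type*} [Fintype V] [DecidableEq V]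

lemma pairGraph_adj {F' : Finset (Finset V)} {u v : V} :
    (pairGraph F').Adj u v ↔ u ≠ v ∧ ({u, v} : Finset V) ∈ F' := Iff.rfl

/-- Transfer of the single-cycle-forest cardinality bound to finsets of pair-edges. -/
lemma edge_card_le {F' : Finset (Finset V)}
    (hpair : ∀ e ∈ F', ∃ u v, u ≠ v ∧ e = {u, v})
    (hSCF : IsSingleCycleForest (pairGraph F'))
    (c : (pairGraph F').ConnectedComponent) :
    (F'.filter (fun e => ∀ v ∈ e, (pairGraph F').connectedComponentMk v = c)).card ≤
      (Finset.univ.filter (fun v => (pairGraph F').connectedComponentMk v = c)).card := by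
  set A : Set (Sym2 V) := {e ∈ (pairGraph F').edgeSet | ∀ v ∈ e, (pairGraph F').connectedComponentMk v = c} with hA
  set σ : Sym2 V → Finset V :=
    Sym2.lift ⟨fun u v => ({u, v} : Finset V), fun a b => Finset.pair_comm a b⟩ with hσ
  have hσval : ∀ u v : V, σ s(u, v) = {u, v} := fun u v => rfl
  have hinj : Set.InjOn σ A := by
    intro e1 he1 e2 he2 heq
    induction e1 using Sym2.inductionOn with
    | hf u v =>
      induction e2 using Sym2.inductionOn with
      | hf x y =>
        have huv : u ≠ v := ((pairGraph F').ne_of_adj (by exact he1.1))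
        have heq' : ({u, v} : Finset V) = {x, y} := heq
        have hu : u = x ∨ u = y := by
          have : u ∈ ({x, y} : Finset V) := heq' ▸ (by simp)
          simpa using this
        have hv : v = x ∨ v = y := by
          have : v ∈ ({x, y} : Finset V) := heq' ▸ (by simp)
          simpa using this
        rw [Sym2.eq_iff]
        rcases hu with hu | hu <;> rcases hv with hv | hv
        · exact absurd (hu.trans hv.symm) huv
        · exact Or.inl ⟨hu, hv⟩
        · exact Or.inr ⟨hu, hv⟩
        · exact absurd (hu.trans hv.symm) huv
  have himg : σ '' A =
      ↑(F'.filter (fun e => ∀ v ∈ e, (pairGraph F').connectedComponentMk v = c)) := by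
    ext e
    constructor
    · rintro ⟨s, hs, rfl⟩
      induction s using Sym2.inductionOn with
      | hf u v =>
        obtain ⟨hadj, hcomp⟩ := hs
        simp only [Finset.coe_filter, Set.mem_setOf_eq]
        refine ⟨hadj.2, ?_⟩
        intro w hw
        have hw' : w ∈ ({u, v} : Finset V) := hw
        have : w = u ∨ w = v := by simpa using hw'
        rcases this with rfl | rfl
        · exact hcomp w (Sym2.mem_mk_left _ _)
        · exact hcomp w (Sym2.mem_mk_right _ _)
    · intro he
      simp only [Finset.coe_filter, Set.mem_setOf_eq] at he
      obtain ⟨heF, hcomp⟩ := he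
      obtain ⟨u, v, huv, rfl⟩ := hpair _ heF
      refine ⟨s(u, v), ⟨⟨huv, heF⟩, ?_⟩, rfl⟩
      intro w hw
      rcases Sym2.mem_iff.mp hw with rfl | rfl
      · exact hcomp w (by simp)
      · exact hcomp w (by simp)
  have h1 : (F'.filter (fun e => ∀ v ∈ e, (pairGraph F').connectedComponentMk v = c)).card = A.ncard := by
    rw [← Set.ncard_coe_finset, ← himg, Set.ncard_image_of_injOn hinj]
  have h2 : {v : V | (pairGraph F').connectedComponentMk v = c}.ncard =
      (Finset.univ.filter (fun v => (pairGraph F').connectedComponentMk v = c)).card := by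
    rw [← Set.ncard_coe_finset]
    congr 1
    ext v; simp
  calc (F'.filter (fun e => ∀ v ∈ e, (pairGraph F').connectedComponentMk v = c)).card
      = A.ncard := h1
    _ ≤ {v : V | (pairGraph F').connectedComponentMk v = c}.ncard := hSCF c
    _ = _ := h2

/-- Per-component bound: a set of pair-edges lying in a single component covers at least
as many vertices as there are edges. -/
lemma comp_bound {F' : Finset (Finset V)}
    (hpair : ∀ e ∈ F', ∃ u v, u ≠ v ∧ e = {u, v})
    (hSCF : IsSingleCycleForest (pairGraph F'))
    (c : (pairGraph F').ConnectedComponent) (S : Finset (Finset V))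
    (hS : ∀ e ∈ S, e ∈ F' ∧ ∀ v ∈ e, (pairGraph F').connectedComponentMk v = c) :
    S.card ≤ (S.biUnion id).card := by
  rcases S.eq_empty_or_nonempty with rfl | ⟨e0, he0⟩
  · simp
  set Vc : Finset V := Finset.univ.filter (fun v => (pairGraph F').connectedComponentMk v = c) with hVc
  set Ec : Finset (Finset V) :=
    F'.filter (fun e => ∀ v ∈ e, (pairGraph F').connectedComponentMk v = c) with hEc
  set W : Finset V := S.biUnion id with hW
  have hSEc : S ⊆ Ec := by
    intro e he
    rw [hEc, Finset.mem_filter]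
    exact hS e he
  have hWVc : W ⊆ Vc := by
    intro x hx
    rw [hW, Finset.mem_biUnion] at hx
    obtain ⟨e, heS, hxe⟩ := hx
    rw [hVc, Finset.mem_filter]
    exact ⟨Finset.mem_univ _, (hS e heS).2 x hxe⟩
  -- pick a root
  obtain ⟨u0, v0, hu0v0, he0eq⟩ := hpair e0 (hS e0 he0).1
  set r : V := u0 with hr
  have hrW : r ∈ W := by
    rw [hW, Finset.mem_biUnion]
    exact ⟨e0, he0, by rw [he0eq]; simp⟩
  have hrc : (pairGraph F').connectedComponentMk r = c := (hS e0 he0).2 r (by rw [he0eq]; simp)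
  -- parent function
  have hex : ∀ x ∈ Vc \ W, ∃ y, (pairGraph F').Adj x y ∧ (pairGraph F').dist y r < (pairGraph F').dist x r := by
    intro x hx
    rw [Finset.mem_sdiff] at hx
    have hxc : (pairGraph F').connectedComponentMk x = c := by
      have := hx.1; rw [hVc, Finset.mem_filter] at this; exact this.2
    have hxr : x ≠ r := fun h => hx.2 (h ▸ hrW)
    have hreach : (pairGraph F').Reachable x r := SimpleGraph.ConnectedComponent.exact (hxc.trans hrc.symm)
    obtain ⟨p, hp⟩ := hreach.exists_walk_length_eq_dist
    cases p with
    | nil => exact absurd rfl hxr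
    | cons hadj q =>
      refine ⟨_, hadj, ?_⟩
      have h1 := SimpleGraph.dist_le q
      rw [← hp, SimpleGraph.Walk.length_cons]
      omega
  set p : V → V := fun x =>
    if h : ∃ y, (pairGraph F').Adj x y ∧ (pairGraph F').dist y r < (pairGraph F').dist x r then h.choose else x with hpdef
  have hp : ∀ x ∈ Vc \ W, (pairGraph F').Adj x (p x) ∧ (pairGraph F').dist (p x) r < (pairGraph F').dist x r := by
    intro x hx
    have h := hex x hx
    simp only [hpdef, dif_pos h]
    exact h.choose_spec
  -- the injection
  have hcard : (Vc \ W).card ≤ (Ec \ S).card := by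
    apply Finset.card_le_card_of_injOn (fun x => ({x, p x} : Finset V))
    · intro x hx
      obtain ⟨hadj, _⟩ := hp x hx
      rw [Finset.mem_coe, Finset.mem_sdiff]
      constructor
      · rw [hEc, Finset.mem_filter]
        refine ⟨hadj.2, ?_⟩
        intro w hw
        have hxc : (pairGraph F').connectedComponentMk x = c := by
          have := (Finset.mem_sdiff.mp hx).1
          rw [hVc, Finset.mem_filter] at this; exact this.2
        have hpxc : (pairGraph F').connectedComponentMk (p x) = c := by
          rw [← hxc]
          exact (SimpleGraph.ConnectedComponent.sound hadj.reachable).symm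
        have : w = x ∨ w = p x := by simpa using hw
        rcases this with rfl | rfl
        · exact hxc
        · exact hpxc
      · intro hcon
        apply (Finset.mem_sdiff.mp hx).2
        rw [hW, Finset.mem_biUnion]
        exact ⟨_, hcon, by simp⟩
    · intro x hx y hy hxy
      by_contra hne
      have hx' := hp x (by simpa using hx)
      have hy' := hp y (by simpa using hy)
      have hxy' : ({x, p x} : Finset V) = {y, p y} := hxy
      have hxmem : x ∈ ({y, p y} : Finset V) := by
        rw [← hxy']; simp
      have hymem : y ∈ ({x, p x} : Finset V) := by
        rw [hxy']; simp
      have hx2 : x = p y := by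
        rcases Finset.mem_insert.mp hxmem with h | h
        · exact absurd h hne
        · simpa using h
      have hy2 : y = p x := by
        rcases Finset.mem_insert.mp hymem with h | h
        · exact absurd h (fun h' => hne h'.symm)
        · simpa using h
      have h1 := hx'.2
      have h2 := hy'.2
      rw [← hy2] at h1
      rw [← hx2] at h2
      omega
  have e1 : (Vc \ W).card = Vc.card - W.card := Finset.card_sdiff_of_subset hWVc
  have e2 : (Ec \ S).card = Ec.card - S.card := Finset.card_sdiff_of_subset hSEc
  have e3 : Ec.card ≤ Vc.card := edge_card_le hpair hSCF c
  have e4 : W.card ≤ Vc.card := Finset.card_le_card hWVc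
  have e5 : S.card ≤ Ec.card := Finset.card_le_card hSEc
  rw [e1, e2] at hcard
  omega

end Aux

/-- If `F'` is a set of edges of a finite graph `G` whose edge-induced subgraph is a
single-cycle forest, then for every `U ⊆ V`,
`Σ_{e ∈ F', e ∩ U ≠ ∅} (|e ∩ U| − 1) ≤ |U|`. -/
theorem stmt5 {V : Type*} [Fintype V] [DecidableEq V] (G : SimpleGraph V)
    (F' : Finset (Finset V)) (hFE : ∀ e ∈ F', ∃ u v, G.Adj u v ∧ e = {u, v})
    (hSCF : IsSingleCycleForest (pairGraph F')) :
    ∀ U : Finset V,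
      ∑ e ∈ F'.filter (fun e => (e ∩ U).Nonempty), ((e ∩ U).card - 1) ≤ U.card := by
  intro U
  have hpair : ∀ e ∈ F', ∃ u v, u ≠ v ∧ e = {u, v} := by
    intro e he
    obtain ⟨u, v, hadj, heq⟩ := hFE e he
    exact ⟨u, v, hadj.ne, heq⟩
  set H := pairGraph F' with hH
  -- Step 1: the sum equals the number of edges inside U
  have hsum : ∑ e ∈ F'.filter (fun e => (e ∩ U).Nonempty), ((e ∩ U).card - 1)
      = (F'.filter (fun e => e ⊆ U)).card := by
    rw [Finset.sum_filter, Finset.card_filter]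
    apply Finset.sum_congr rfl
    intro e he
    obtain ⟨u, v, huv, rfl⟩ := hpair e he
    have hcard2 : ({u, v} : Finset V).card = 2 := Finset.card_pair huv
    by_cases hsub : ({u, v} : Finset V) ⊆ U
    · have h1 : ({u, v} : Finset V) ∩ U = {u, v} := Finset.inter_eq_left.mpr hsub
      rw [if_pos hsub, h1, if_pos ⟨u, by simp⟩, hcard2]
    · have hss : ({u, v} : Finset V) ∩ U ⊂ {u, v} :=
        (Finset.inter_subset_left).ssubset_of_ne
          (fun h => hsub (Finset.inter_eq_left.mp h))
      have hlt : (({u, v} : Finset V) ∩ U).card < 2 := hcard2 ▸ Finset.card_lt_card hss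
      rw [if_neg hsub]
      split <;> omega
  rw [hsum]
  set S : Finset (Finset V) := F'.filter (fun e => e ⊆ U) with hSdef
  -- component assignment
  set κ : Finset V → Option H.ConnectedComponent := fun e =>
    if h : e.Nonempty then some (H.connectedComponentMk h.choose) else none with hκ
  have hfib := Finset.card_eq_sum_card_fiberwise
    (f := κ) (s := S) (t := S.image κ) (fun e he => Finset.mem_image_of_mem κ he)
  rw [hfib]
  -- all vertices of an edge have the same component
  have hsamecomp : ∀ e ∈ F', ∀ w ∈ e, ∀ w' ∈ e,
      H.connectedComponentMk w = H.connectedComponentMk w' := by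
    intro e he w hw w' hw'
    obtain ⟨u, v, huv, rfl⟩ := hpair e he
    have hadj : H.Adj u v := ⟨huv, he⟩
    have huveq : H.connectedComponentMk u = H.connectedComponentMk v :=
      SimpleGraph.ConnectedComponent.sound hadj.reachable
    have hw1 : w = u ∨ w = v := by simpa using hw
    have hw2 : w' = u ∨ w' = v := by simpa using hw'
    rcases hw1 with rfl | rfl <;> rcases hw2 with rfl | rfl <;>
      simp [huveq]
  -- bound each fiber
  have hstep : ∀ co ∈ S.image κ,
      (S.filter (fun e => κ e = co)).card ≤
        (U.filter (fun v => some (H.connectedComponentMk v) = co)).card := by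
    intro co hco
    obtain ⟨e1, he1S, he1κ⟩ := Finset.mem_image.mp hco
    have he1F : e1 ∈ F' := (Finset.mem_filter.mp he1S).1
    obtain ⟨u1, v1, hu1v1, he1eq⟩ := hpair e1 he1F
    have hne1 : e1.Nonempty := ⟨u1, by rw [he1eq]; simp⟩
    set c : H.ConnectedComponent := H.connectedComponentMk hne1.choose with hc
    have hco_eq : co = some c := by
      rw [← he1κ, hκ]
      simp only [dif_pos hne1]
      rfl
    set T : Finset (Finset V) := S.filter (fun e => κ e = co) with hT
    have hTprop : ∀ e ∈ T, e ∈ F' ∧ ∀ v ∈ e, H.connectedComponentMk v = c := by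
      intro e he
      rw [hT, Finset.mem_filter] at he
      obtain ⟨heS, heκ⟩ := he
      have heF : e ∈ F' := (Finset.mem_filter.mp heS).1
      have hne : e.Nonempty := by
        obtain ⟨u, v, _, heq⟩ := hpair e heF
        exact ⟨u, by rw [heq]; simp⟩
      have : some (H.connectedComponentMk hne.choose) = co := by
        rw [← heκ, hκ]; simp only [dif_pos hne]
      rw [hco_eq] at this
      have hchoose : H.connectedComponentMk hne.choose = c := Option.some_injective _ this
      refine ⟨heF, fun v hv => ?_⟩
      rw [← hchoose]
      exact hsamecomp e heF v hv hne.choose hne.choose_spec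
    have hcb := comp_bound hpair hSCF c T hTprop
    refine hcb.trans (Finset.card_le_card ?_)
    intro x hx
    rw [Finset.mem_biUnion] at hx
    obtain ⟨e, heT, hxe⟩ := hx
    have heS : e ∈ S := (Finset.mem_filter.mp (hT ▸ heT)).1
    have hxU : x ∈ U := (Finset.mem_filter.mp heS).2 hxe
    rw [Finset.mem_filter]
    refine ⟨hxU, ?_⟩
    rw [hco_eq, Option.some_inj]
    exact (hTprop e heT).2 x hxe
  calc ∑ co ∈ S.image κ, (S.filter (fun e => κ e = co)).card
      ≤ ∑ co ∈ S.image κ,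
        (U.filter (fun v => some (H.connectedComponentMk v) = co)).card :=
        Finset.sum_le_sum hstep
    _ = ((S.image κ).biUnion
        (fun co => U.filter (fun v => some (H.connectedComponentMk v) = co))).card := by
        rw [Finset.card_biUnion]
        intro c1 _ c2 _ h12
        simp only [Finset.disjoint_left, Finset.mem_filter]
        rintro x ⟨_, h1⟩ ⟨_, h2⟩
        exact h12 (h1 ▸ h2 ▸ rfl)
    _ ≤ U.card := Finset.card_le_card
        (Finset.biUnion_subset.mpr fun co _ => Finset.filter_subset _ _)
end

section
/- Let G = (V,F) be a finite hypergraph (F a collection of subsets of V, each of size at least 2), and let F' ⊆ F be such that the bipartite incidence graph of F' together with its incident vertices is a single-cycle forest. Then for every U ⊆ V, Σ_{α∈F' : α∩U ≠ ∅} (|α ∩ U| − 1) ≤ |U|. -/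
open scoped Classical

/-- The bipartite incidence graph of the hyperedges `A i`, `i ∈ S`, and their incident
vertices: `s ∈ V` is joined to `i ∈ S` whenever `s ∈ A i`. -/
def incidenceGraph {V ι : Type*} (A : ι → Finset V) (S : Finset ι) :
    SimpleGraph (V ⊕ ι) where
  Adj x y :=
    (∃ s i, x = Sum.inl s ∧ y = Sum.inr i ∧ i ∈ S ∧ s ∈ A i) ∨
    (∃ s i, y = Sum.inl s ∧ x = Sum.inr i ∧ i ∈ S ∧ s ∈ A i)
  symm := by
    constructor
    rintro x y (⟨s, i, h1, h2, h3, h4⟩ | ⟨s, i, h1, h2, h3, h4⟩)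
    · exact Or.inr ⟨s, i, h1, h2, h3, h4⟩
    · exact Or.inl ⟨s, i, h1, h2, h3, h4⟩
  loopless := by
    constructor
    rintro x (⟨s, i, h1, h2, -, -⟩ | ⟨s, i, h1, h2, -, -⟩) <;> subst h1 <;> simp_all

open SimpleGraph

/-- Each connected component of a finite graph has at least `#vertices - 1` edges. -/
lemma comp_vert_le {W : Type*} [Fintype W] (G : SimpleGraph W) (c : G.ConnectedComponent) :
    {v : W | G.connectedComponentMk v = c}.ncard ≤
      {e ∈ G.edgeSet | ∀ v ∈ e, G.connectedComponentMk v = c}.ncard + 1 := by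
  obtain ⟨r, hr⟩ := c.exists_rep
  have hstep : ∀ v, G.connectedComponentMk v = c → v ≠ r →
      ∃ w, G.Adj v w ∧ G.dist w r < G.dist v r := by
    intro v hv hvr
    have hreach : G.Reachable v r := ConnectedComponent.eq.mp (hv.trans hr.symm)
    obtain ⟨p, hp⟩ := hreach.exists_walk_length_eq_dist
    have hpos : 0 < G.dist v r := hreach.pos_dist_of_ne hvr
    cases p with
    | nil => exact absurd rfl hvr
    | @cons _ w _ h q =>
      refine ⟨w, h, ?_⟩
      have h1 : G.dist w r ≤ q.length := dist_le q
      simp only [Walk.length_cons] at hp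
      omega
  set f : W → Sym2 W := fun v =>
    if h : ∃ w, G.Adj v w ∧ G.dist w r < G.dist v r then s(v, h.choose) else s(v, v) with hf
  have main : ({v : W | G.connectedComponentMk v = c} \ {r}).ncard ≤
      {e ∈ G.edgeSet | ∀ v ∈ e, G.connectedComponentMk v = c}.ncard := by
    apply Set.ncard_le_ncard_of_injOn f ?_ ?_ (Set.toFinite _)
    · rintro v ⟨hv, hvr⟩
      have hex := hstep v hv (by simpa using hvr)
      have hfv : f v = s(v, hex.choose) := dif_pos hex
      obtain ⟨hadj, -⟩ := hex.choose_spec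
      rw [hfv]
      refine ⟨hadj, ?_⟩
      intro x hx
      rcases Sym2.mem_iff.mp hx with rfl | rfl
      · exact hv
      · calc G.connectedComponentMk _ = G.connectedComponentMk v :=
              ConnectedComponent.eq.mpr hadj.symm.reachable
          _ = c := hv
    · rintro v ⟨hv, hvr⟩ v' ⟨hv', hvr'⟩ heq
      have hex := hstep v hv (by simpa using hvr)
      have hex' := hstep v' hv' (by simpa using hvr')
      have e1 : f v = s(v, hex.choose) := dif_pos hex
      have e2 : f v' = s(v', hex'.choose) := dif_pos hex'
      rw [e1, e2] at heq
      rcases Sym2.eq_iff.mp heq with ⟨h1, -⟩ | ⟨h1, h2⟩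
      · exact h1
      · exfalso
        obtain ⟨-, hd⟩ := hex.choose_spec
        obtain ⟨-, hd'⟩ := hex'.choose_spec
        rw [h2] at hd
        rw [← h1] at hd'
        omega
  have hmem : r ∈ {v : W | G.connectedComponentMk v = c} := hr
  have := Set.ncard_diff_singleton_add_one hmem (Set.toFinite _)
  omega



lemma reach_delete {W : Type*} {G : SimpleGraph W} {a b : W} {x y : W}
    (p : G.Walk x y) :
    (G.deleteEdges {s(a,b)}).Reachable x y ∨
    ((G.deleteEdges {s(a,b)}).Reachable x a ∧ (G.deleteEdges {s(a,b)}).Reachable b y) ∨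
    ((G.deleteEdges {s(a,b)}).Reachable x b ∧ (G.deleteEdges {s(a,b)}).Reachable a y) := by
  set G' := G.deleteEdges {s(a,b)} with hG'
  induction p with
  | nil => exact Or.inl (Reachable.refl _)
  | @cons x z y h p ih =>
    by_cases hs : s(x, z) = s(a, b)
    · rcases Sym2.eq_iff.mp hs with ⟨rfl, rfl⟩ | ⟨rfl, rfl⟩
      · rcases ih with h1 | ⟨h1, h2⟩ | ⟨h1, h2⟩
        · exact Or.inr (Or.inl ⟨Reachable.refl _, h1⟩)
        · exact Or.inr (Or.inl ⟨Reachable.refl _, h2⟩)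
        · exact Or.inl h2
      · rcases ih with h1 | ⟨h1, h2⟩ | ⟨h1, h2⟩
        · exact Or.inr (Or.inr ⟨Reachable.refl _, h1⟩)
        · exact Or.inl h2
        · exact Or.inr (Or.inr ⟨Reachable.refl _, h2⟩)
    · have hadj : G'.Adj x z := by
        rw [hG', deleteEdges_adj]
        exact ⟨h, by simpa using hs⟩
      rcases ih with h1 | ⟨h1, h2⟩ | ⟨h1, h2⟩
      · exact Or.inl (hadj.reachable.trans h1)
      · exact Or.inr (Or.inl ⟨hadj.reachable.trans h1, h2⟩)
      · exact Or.inr (Or.inr ⟨hadj.reachable.trans h1, h2⟩)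

lemma del_edge_half {W : Type*} [Fintype W] {G : SimpleGraph W}
    (hscf : IsSingleCycleForest G) {a b : W} (hab : G.Adj a b)
    (hnr : ¬ (G.deleteEdges {s(a,b)}).Reachable a b) :
    {e ∈ (G.deleteEdges {s(a,b)}).edgeSet | ∀ v ∈ e,
        (G.deleteEdges {s(a,b)}).connectedComponentMk v =
          (G.deleteEdges {s(a,b)}).connectedComponentMk a}.ncard ≤
    {v : W | (G.deleteEdges {s(a,b)}).connectedComponentMk v =
          (G.deleteEdges {s(a,b)}).connectedComponentMk a}.ncard := by
  set G' := G.deleteEdges {s(a,b)} with hG'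
  have hle : G' ≤ G := deleteEdges_le _
  set d := G.connectedComponentMk a with hd
  -- every vertex of d is in one of the two G'-components
  have hsplit : ∀ v, G.connectedComponentMk v = d →
      G'.connectedComponentMk v = G'.connectedComponentMk a ∨
      G'.connectedComponentMk v = G'.connectedComponentMk b := by
    intro v hv
    have : G.Reachable v a := ConnectedComponent.eq.mp hv
    obtain ⟨p⟩ := this
    rcases reach_delete (a := a) (b := b) p with h1 | ⟨h1, h2⟩ | ⟨h1, h2⟩
    · exact Or.inl (ConnectedComponent.eq.mpr h1)
    · exact Or.inl (ConnectedComponent.eq.mpr h1)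
    · exact Or.inr (ConnectedComponent.eq.mpr h1)
  have hVa : {v : W | G'.connectedComponentMk v = G'.connectedComponentMk a} ⊆
      {v : W | G.connectedComponentMk v = d} := by
    intro v hv
    have : G'.Reachable v a := ConnectedComponent.eq.mp hv
    exact ConnectedComponent.eq.mpr (this.mono hle)
  have hVb : {v : W | G'.connectedComponentMk v = G'.connectedComponentMk b} ⊆
      {v : W | G.connectedComponentMk v = d} := by
    intro v hv
    have : G'.Reachable v b := ConnectedComponent.eq.mp hv
    have : G.Reachable v a := (this.mono hle).trans hab.symm.reachable
    exact ConnectedComponent.eq.mpr this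
  have hdisjV : Disjoint {v : W | G'.connectedComponentMk v = G'.connectedComponentMk a}
      {v : W | G'.connectedComponentMk v = G'.connectedComponentMk b} := by
    rw [Set.disjoint_left]
    rintro v hva hvb
    exact hnr (ConnectedComponent.eq.mp ((hva.symm.trans hvb) ▸ rfl : G'.connectedComponentMk a = G'.connectedComponentMk b))
  have hVunion : {v : W | G.connectedComponentMk v = d} =
      {v : W | G'.connectedComponentMk v = G'.connectedComponentMk a} ∪
      {v : W | G'.connectedComponentMk v = G'.connectedComponentMk b} := by
    apply Set.Subset.antisymm
    · intro v hv
      rcases hsplit v hv with h | h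
      · exact Or.inl h
      · exact Or.inr h
    · exact Set.union_subset hVa hVb
  -- edges
  have hEsub : ∀ c₀ : G'.ConnectedComponent,
      (∀ v, G'.connectedComponentMk v = c₀ → G.connectedComponentMk v = d) →
      {e ∈ G'.edgeSet | ∀ v ∈ e, G'.connectedComponentMk v = c₀} ⊆
      {e ∈ G.edgeSet | ∀ v ∈ e, G.connectedComponentMk v = d} \ {s(a,b)} := by
    rintro c₀ hc₀ e ⟨he, hev⟩
    have heG : e ∈ G.edgeSet := edgeSet_subset_edgeSet.mpr hle he
    refine ⟨⟨heG, fun v hv => hc₀ v (hev v hv)⟩, ?_⟩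
    intro hmem
    rw [Set.mem_singleton_iff] at hmem
    rw [hG', edgeSet_deleteEdges] at he
    exact he.2 (by simp [hmem])
  have hdisjE : Disjoint {e ∈ G'.edgeSet | ∀ v ∈ e, G'.connectedComponentMk v = G'.connectedComponentMk a}
      {e ∈ G'.edgeSet | ∀ v ∈ e, G'.connectedComponentMk v = G'.connectedComponentMk b} := by
    rw [Set.disjoint_left]
    rintro e ⟨he, heva⟩ ⟨-, hevb⟩
    obtain ⟨x, y, rfl⟩ : ∃ x y, e = s(x, y) := by
      induction e using Sym2.ind with
      | _ x y => exact ⟨x, y, rfl⟩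
    have h1 := heva x (Sym2.mem_mk_left _ _)
    have h2 := hevb x (Sym2.mem_mk_left _ _)
    exact hnr (ConnectedComponent.eq.mp ((h1.symm.trans h2) ▸ rfl : G'.connectedComponentMk a = G'.connectedComponentMk b))
  have habd : s(a, b) ∈ {e ∈ G.edgeSet | ∀ v ∈ e, G.connectedComponentMk v = d} := by
    refine ⟨hab, ?_⟩
    intro v hv
    rcases Sym2.mem_iff.mp hv with rfl | rfl
    · rfl
    · exact ConnectedComponent.eq.mpr hab.symm.reachable
  -- the counting
  set Ea := {e ∈ G'.edgeSet | ∀ v ∈ e, G'.connectedComponentMk v = G'.connectedComponentMk a}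
  set Eb := {e ∈ G'.edgeSet | ∀ v ∈ e, G'.connectedComponentMk v = G'.connectedComponentMk b}
  set Va := {v : W | G'.connectedComponentMk v = G'.connectedComponentMk a}
  set Vb := {v : W | G'.connectedComponentMk v = G'.connectedComponentMk b}
  have hEa := hEsub (G'.connectedComponentMk a) (fun v hv => hVa hv)
  have hEb := hEsub (G'.connectedComponentMk b) (fun v hv => hVb hv)
  have hnotmem : s(a,b) ∉ Ea ∪ Eb := by
    intro hmem
    rcases hmem with h | h
    · exact (hEa h).2 rfl
    · exact (hEb h).2 rfl
  have hins : insert s(a,b) (Ea ∪ Eb) ⊆ {e ∈ G.edgeSet | ∀ v ∈ e, G.connectedComponentMk v = d} := by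
    rintro e (rfl | he)
    · exact habd
    · rcases he with h | h
      · exact (hEa h).1
      · exact (hEb h).1
  have h1 : (insert s(a,b) (Ea ∪ Eb)).ncard = Ea.ncard + Eb.ncard + 1 := by
    rw [Set.ncard_insert_of_notMem hnotmem (Set.toFinite _),
        Set.ncard_union_eq hdisjE (Set.toFinite _) (Set.toFinite _)]
  have h2 : (insert s(a,b) (Ea ∪ Eb)).ncard ≤
      {e ∈ G.edgeSet | ∀ v ∈ e, G.connectedComponentMk v = d}.ncard :=
    Set.ncard_le_ncard hins (Set.toFinite _)
  have h3 := hscf d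
  have h4 : {v : W | G.connectedComponentMk v = d}.ncard = Va.ncard + Vb.ncard := by
    rw [hVunion, Set.ncard_union_eq hdisjV (Set.toFinite _) (Set.toFinite _)]
  have h5 : Vb.ncard ≤ Eb.ncard + 1 := comp_vert_le G' (G'.connectedComponentMk b)
  -- h5 : Vb.ncard ≤ Eb.ncard + 1
  omega

lemma del_edge_comp {W : Type*} [Fintype W] {G : SimpleGraph W}
    (hscf : IsSingleCycleForest G) {a b : W} (hab : G.Adj a b) (v₀ : W) :
    {e ∈ (G.deleteEdges {s(a,b)}).edgeSet | ∀ v ∈ e,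
        (G.deleteEdges {s(a,b)}).connectedComponentMk v =
          (G.deleteEdges {s(a,b)}).connectedComponentMk v₀}.ncard ≤
    {v : W | (G.deleteEdges {s(a,b)}).connectedComponentMk v =
          (G.deleteEdges {s(a,b)}).connectedComponentMk v₀}.ncard := by
  set G' := G.deleteEdges {s(a,b)} with hG'
  have hle : G' ≤ G := deleteEdges_le _
  by_cases hV : {v : W | G.connectedComponentMk v = G.connectedComponentMk v₀} ⊆
      {v : W | G'.connectedComponentMk v = G'.connectedComponentMk v₀}
  · -- component unchanged as a vertex set
    have hVsub : {v : W | G'.connectedComponentMk v = G'.connectedComponentMk v₀} ⊆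
        {v : W | G.connectedComponentMk v = G.connectedComponentMk v₀} := by
      intro v hv
      have h1 : G'.Reachable v v₀ := ConnectedComponent.eq.mp hv
      exact ConnectedComponent.eq.mpr (h1.mono hle)
    have hVeq : {v : W | G'.connectedComponentMk v = G'.connectedComponentMk v₀} =
        {v : W | G.connectedComponentMk v = G.connectedComponentMk v₀} :=
      Set.Subset.antisymm hVsub hV
    have hEsub : {e ∈ G'.edgeSet | ∀ v ∈ e, G'.connectedComponentMk v = G'.connectedComponentMk v₀} ⊆
        {e ∈ G.edgeSet | ∀ v ∈ e, G.connectedComponentMk v = G.connectedComponentMk v₀} := by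
      rintro e ⟨he, hev⟩
      exact ⟨edgeSet_subset_edgeSet.mpr hle he, fun v hv => hVsub (hev v hv)⟩
    calc {e ∈ G'.edgeSet | ∀ v ∈ e, G'.connectedComponentMk v = G'.connectedComponentMk v₀}.ncard
        ≤ {e ∈ G.edgeSet | ∀ v ∈ e, G.connectedComponentMk v = G.connectedComponentMk v₀}.ncard :=
          Set.ncard_le_ncard hEsub (Set.toFinite _)
      _ ≤ {v : W | G.connectedComponentMk v = G.connectedComponentMk v₀}.ncard :=
          hscf (G.connectedComponentMk v₀)
      _ = {v : W | G'.connectedComponentMk v = G'.connectedComponentMk v₀}.ncard := by rw [hVeq]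
  · -- the deleted edge split the component; v₀ is in the component of a or of b
    rw [Set.not_subset] at hV
    obtain ⟨u, hu, hu'⟩ := hV
    have hru : G.Reachable u v₀ := ConnectedComponent.eq.mp hu
    obtain ⟨p⟩ := hru
    have hnru : ¬ G'.Reachable u v₀ := fun h => hu' (ConnectedComponent.eq.mpr h)
    have hkey : ((G'.Reachable u a ∧ G'.Reachable b v₀) ∨ (G'.Reachable u b ∧ G'.Reachable a v₀)) ∧
        ¬ G'.Reachable a b := by
      rcases reach_delete (a := a) (b := b) p with h1 | ⟨h1, h2⟩ | ⟨h1, h2⟩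
      · exact absurd h1 hnru
      · refine ⟨Or.inl ⟨h1, h2⟩, fun hR => hnru ((h1.trans hR).trans h2)⟩
      · refine ⟨Or.inr ⟨h1, h2⟩, fun hR => hnru ((h1.trans hR.symm).trans h2)⟩
    obtain ⟨hcase, hnr⟩ := hkey
    rcases hcase with ⟨-, h2⟩ | ⟨-, h2⟩
    · -- v₀ is in the G'-component of b
      have hbv : G'.connectedComponentMk v₀ = G'.connectedComponentMk b :=
        (ConnectedComponent.eq.mpr h2).symm
      rw [hG', hbv]
      have hnr' : ¬ (G.deleteEdges {s(b,a)}).Reachable b a := by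
        rw [show s(b,a) = s(a,b) from Sym2.eq_swap]
        exact fun h => hnr h.symm
      have := del_edge_half hscf hab.symm hnr'
      rwa [show s(b,a) = s(a,b) from Sym2.eq_swap] at this
    · -- v₀ is in the G'-component of a
      have hav : G'.connectedComponentMk v₀ = G'.connectedComponentMk a :=
        (ConnectedComponent.eq.mpr h2).symm
      rw [hG', hav]
      exact del_edge_half hscf hab hnr

lemma del_edge_scf {W : Type*} [Fintype W] {G : SimpleGraph W} {a b : W} (hab : G.Adj a b)
    (hscf : IsSingleCycleForest G) : IsSingleCycleForest (G.deleteEdges {s(a,b)}) := by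
  intro c'
  obtain ⟨v₀, hv₀⟩ := c'.exists_rep
  rw [← hv₀]
  exact del_edge_comp hscf hab v₀

lemma scf_mono_aux {W : Type*} [Fintype W] :
    ∀ (n : ℕ) (G H : SimpleGraph W), G.edgeSet.ncard ≤ n →
      H ≤ G → IsSingleCycleForest G → IsSingleCycleForest H := by
  intro n
  induction n with
  | zero =>
    intro G H hn hle hscf
    have hGbot : G = ⊥ := by
      rw [← edgeSet_eq_empty]
      exact (Set.ncard_eq_zero (Set.toFinite _)).mp (Nat.le_zero.mp hn)
    have : H = G := by rw [hGbot] at hle ⊢; exact le_bot_iff.mp hle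
    rwa [this]
  | succ n ih =>
    intro G H hn hle hscf
    by_cases heq : H = G
    · rwa [heq]
    · have hss : H.edgeSet ⊆ G.edgeSet := edgeSet_subset_edgeSet.mpr hle
      have hne : H.edgeSet ≠ G.edgeSet := fun h => heq (edgeSet_inj.mp h)
      obtain ⟨e, he1, he2⟩ : ∃ e, e ∈ G.edgeSet ∧ e ∉ H.edgeSet := by
        by_contra hc
        push_neg at hc
        exact hne (Set.Subset.antisymm hss hc)
      obtain ⟨x, y, rfl⟩ : ∃ x y, e = s(x, y) := by
        induction e using Sym2.ind with
        | _ x y => exact ⟨x, y, rfl⟩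
      have hab : G.Adj x y := he1
      have h1 : H ≤ G.deleteEdges {s(x,y)} := by
        intro u v huv
        rw [deleteEdges_adj]
        refine ⟨hle huv, ?_⟩
        intro hmem
        rw [Set.mem_singleton_iff] at hmem
        exact he2 (hmem ▸ (huv : s(u,v) ∈ H.edgeSet))
      have h2 : IsSingleCycleForest (G.deleteEdges {s(x,y)}) := del_edge_scf hab hscf
      apply ih (G.deleteEdges {s(x,y)}) H ?_ h1 h2
      rw [edgeSet_deleteEdges]
      have := Set.ncard_diff_singleton_lt_of_mem he1 (Set.toFinite _)
      omega

lemma scf_edge_bound {W : Type*} [Fintype W] {G : SimpleGraph W}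
    (hscf : IsSingleCycleForest G) :
    G.edgeSet.ncard ≤ {v : W | ∃ w, G.Adj v w}.ncard := by
  classical
  haveI : Fintype G.ConnectedComponent := Fintype.ofFinite _
  haveI : Fintype G.edgeSet := Fintype.ofFinite _
  set NI : Finset W := Finset.univ.filter (fun v => ∃ w, G.Adj v w) with hNIdef
  have hNI : {v : W | ∃ w, G.Adj v w}.ncard = NI.card := by
    rw [← Set.ncard_coe_finset]
    congr 1
    ext v
    simp [hNIdef]
  have hE : G.edgeSet.ncard = G.edgeFinset.card := by
    rw [← Set.ncard_coe_finset]
    congr 1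
    simp
  have hgex : ∀ e : Sym2 W, ∃ c : G.ConnectedComponent,
      e ∈ G.edgeSet → ∀ v ∈ e, G.connectedComponentMk v = c := by
    intro e
    induction e using Sym2.ind with
    | _ x y =>
      refine ⟨G.connectedComponentMk x, fun he v hv => ?_⟩
      have hadj : G.Adj x y := (G.mem_edgeSet).mp he
      rcases Sym2.mem_iff.mp hv with rfl | rfl
      · rfl
      · exact ConnectedComponent.eq.mpr hadj.symm.reachable
  choose g hg using hgex
  have hsplitE : G.edgeFinset.card =
      ∑ c : G.ConnectedComponent, (G.edgeFinset.filter (fun e => g e = c)).card :=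
    Finset.card_eq_sum_card_fiberwise (fun e _ => Finset.mem_univ _)
  have hsplitV : NI.card =
      ∑ c : G.ConnectedComponent, (NI.filter (fun v => G.connectedComponentMk v = c)).card :=
    Finset.card_eq_sum_card_fiberwise (fun v _ => Finset.mem_univ _)
  rw [hE, hNI, hsplitE, hsplitV]
  apply Finset.sum_le_sum
  intro c _
  by_cases hne : (G.edgeFinset.filter (fun e => g e = c)).Nonempty
  · obtain ⟨e₀, he₀⟩ := hne
    rw [Finset.mem_filter, SimpleGraph.mem_edgeFinset] at he₀
    obtain ⟨he₀E, he₀c⟩ := he₀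
    obtain ⟨x₀, y₀, rfl⟩ : ∃ x y, e₀ = s(x, y) := by
      induction e₀ using Sym2.ind with
      | _ x y => exact ⟨x, y, rfl⟩
    have hadj₀ : G.Adj x₀ y₀ := (G.mem_edgeSet).mp he₀E
    have hx₀ : G.connectedComponentMk x₀ = c := by
      rw [← he₀c]; exact hg _ he₀E x₀ (Sym2.mem_mk_left _ _)
    -- every vertex of the component is non-isolated
    have hVsub : ∀ v, G.connectedComponentMk v = c → ∃ w, G.Adj v w := by
      intro v hv
      have : G.Reachable v x₀ := ConnectedComponent.eq.mp (hv.trans hx₀.symm)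
      obtain ⟨p⟩ := this
      cases p with
      | nil => exact ⟨y₀, hadj₀⟩
      | cons h q => exact ⟨_, h⟩
    have hEeq : {e ∈ G.edgeSet | ∀ v ∈ e, G.connectedComponentMk v = c} =
        ↑(G.edgeFinset.filter (fun e => g e = c)) := by
      ext e
      simp only [Set.mem_setOf_eq, Finset.coe_filter, SimpleGraph.mem_edgeFinset,
        Set.mem_setOf_eq]
      constructor
      · rintro ⟨he, hev⟩
        refine ⟨he, ?_⟩
        obtain ⟨x, y, rfl⟩ : ∃ x y, e = s(x, y) := by
          induction e using Sym2.ind with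
          | _ x y => exact ⟨x, y, rfl⟩
        rw [← hev x (Sym2.mem_mk_left _ _)]
        exact (hg _ he x (Sym2.mem_mk_left _ _)).symm
      · rintro ⟨he, hec⟩
        exact ⟨he, fun v hv => (hg _ he v hv).trans hec⟩
    have hVeq : {v : W | G.connectedComponentMk v = c} =
        ↑(NI.filter (fun v => G.connectedComponentMk v = c)) := by
      ext v
      simp only [Set.mem_setOf_eq, Finset.coe_filter, Set.mem_setOf_eq, hNIdef,
        Finset.mem_filter, Finset.mem_univ, true_and]
      constructor
      · intro hv
        exact ⟨hVsub v hv, hv⟩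
      · rintro ⟨-, hv⟩
        exact hv
    have := hscf c
    rw [hEeq, hVeq, Set.ncard_coe_finset, Set.ncard_coe_finset] at this
    exact this
  · rw [Finset.not_nonempty_iff_eq_empty] at hne
    simp [hne]

lemma incidenceGraph_adj {V ι : Type*} (A : ι → Finset V) (S : Finset ι) (x y : V ⊕ ι) :
    (incidenceGraph A S).Adj x y ↔
      (∃ s i, x = Sum.inl s ∧ y = Sum.inr i ∧ i ∈ S ∧ s ∈ A i) ∨
      (∃ s i, y = Sum.inl s ∧ x = Sum.inr i ∧ i ∈ S ∧ s ∈ A i) := Iff.rfl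

/-- Kikuchi/Bethe polytope containment at vertices: if `F' ⊆ F` is a set of hyperedges whose
incidence graph (together with its incident vertices) is a single-cycle forest, then for
every `U ⊆ V` one has `Σ_{α ∈ F', α ∩ U ≠ ∅} (|α ∩ U| − 1) ≤ |U|`. -/
theorem stmt6 {V ι : Type*} [Fintype V] [DecidableEq V] [Fintype ι]
    (A : ι → Finset V) (F F' : Finset ι)
    (hcard : ∀ i ∈ F, 2 ≤ (A i).card) (hsub : F' ⊆ F)
    (hSCF : IsSingleCycleForest (incidenceGraph A F')) :
    ∀ U : Finset V,
      ∑ i ∈ F'.filter (fun i => (A i ∩ U).Nonempty), ((A i ∩ U).card - 1) ≤ U.card := by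
  intro U
  set G := incidenceGraph A F' with hG
  set H := incidenceGraph (fun i => A i ∩ U) F' with hH
  have hHG : H ≤ G := by
    rintro x y (⟨s, i, h1, h2, h3, h4⟩ | ⟨s, i, h1, h2, h3, h4⟩)
    · exact Or.inl ⟨s, i, h1, h2, h3, Finset.mem_of_mem_inter_left h4⟩
    · exact Or.inr ⟨s, i, h1, h2, h3, Finset.mem_of_mem_inter_left h4⟩
  have hscfH : IsSingleCycleForest H := scf_mono_aux (G.edgeSet.ncard) G H le_rfl hHG hSCF
  have hbound := scf_edge_bound hscfH
  set act : Finset ι := F'.filter (fun i => (A i ∩ U).Nonempty) with hact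
  -- compute the number of edges of `H`
  have himg : H.edgeSet = ↑(((F'.sigma (fun i => A i ∩ U)).image
      (fun p => s(Sum.inl p.2, Sum.inr p.1))) : Finset (Sym2 (V ⊕ ι))) := by
    ext e
    induction e using Sym2.ind with
    | _ x y =>
      simp only [Finset.coe_image, Set.mem_image, Finset.mem_coe, Finset.mem_sigma]
      constructor
      · intro he
        rcases (incidenceGraph_adj _ _ _ _).mp ((H.mem_edgeSet).mp he) with
          ⟨s, i, rfl, rfl, h3, h4⟩ | ⟨s, i, rfl, rfl, h3, h4⟩
        · exact ⟨⟨i, s⟩, ⟨h3, h4⟩, rfl⟩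
        · exact ⟨⟨i, s⟩, ⟨h3, h4⟩, Sym2.eq_swap⟩
      · rintro ⟨⟨i, s⟩, hp, hpe⟩
        rw [← hpe, H.mem_edgeSet]
        exact Or.inl ⟨s, i, rfl, rfl, hp.1, hp.2⟩
  have hEcard : H.edgeSet.ncard = ∑ i ∈ F', (A i ∩ U).card := by
    rw [himg, Set.ncard_coe_finset, Finset.card_image_of_injOn, Finset.card_sigma]
    rintro ⟨i, s⟩ - ⟨i', s'⟩ - hpe
    simp only at hpe
    rcases Sym2.eq_iff.mp hpe with ⟨hs, hi⟩ | ⟨hs, hi⟩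
    · obtain rfl := Sum.inl.inj hs
      obtain rfl := Sum.inr.inj hi
      rfl
    · exact absurd hs (by simp)
  -- non-isolated vertices of `H`
  have hNIsub : {v : V ⊕ ι | ∃ w, H.Adj v w} ⊆
      ↑(U.image Sum.inl ∪ act.image Sum.inr : Finset (V ⊕ ι)) := by
    rintro v ⟨w, hvw⟩
    rw [Finset.coe_union, Finset.coe_image, Finset.coe_image]
    rcases (incidenceGraph_adj _ _ _ _).mp hvw with
      ⟨s, i, rfl, rfl, h3, h4⟩ | ⟨s, i, h1, rfl, h3, h4⟩
    · exact Or.inl ⟨s, Finset.mem_of_mem_inter_right h4, rfl⟩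
    · exact Or.inr ⟨i, Finset.mem_filter.mpr ⟨h3, ⟨s, h4⟩⟩, rfl⟩
  have hNIcard : {v : V ⊕ ι | ∃ w, H.Adj v w}.ncard ≤ U.card + act.card := by
    calc {v : V ⊕ ι | ∃ w, H.Adj v w}.ncard
        ≤ (↑(U.image Sum.inl ∪ act.image Sum.inr : Finset (V ⊕ ι)) : Set (V ⊕ ι)).ncard :=
          Set.ncard_le_ncard hNIsub (Set.toFinite _)
      _ = (U.image Sum.inl ∪ act.image Sum.inr : Finset (V ⊕ ι)).card :=
          Set.ncard_coe_finset _
      _ ≤ (U.image Sum.inl).card + (act.image Sum.inr).card := Finset.card_union_le _ _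
      _ ≤ U.card + act.card := add_le_add (Finset.card_image_le) (Finset.card_image_le)
  have hkey : ∑ i ∈ F', (A i ∩ U).card ≤ U.card + act.card := by
    rw [← hEcard]
    exact hbound.trans hNIcard
  have hfil : ∑ i ∈ act, (A i ∩ U).card = ∑ i ∈ F', (A i ∩ U).card := by
    rw [hact]
    exact Finset.sum_filter_of_ne (fun i _ h => Finset.card_pos.mp (Nat.pos_of_ne_zero h))
  have hsum1 : ∑ i ∈ act, ((A i ∩ U).card - 1) + act.card = ∑ i ∈ act, (A i ∩ U).card := by
    rw [Finset.card_eq_sum_ones act, ← Finset.sum_add_distrib]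
    apply Finset.sum_congr rfl
    intro i hi
    have h1 : 1 ≤ (A i ∩ U).card := Finset.card_pos.mpr ((Finset.mem_filter.mp hi).2)
    omega
  omega
end

section
/- The polytope ℂ = {x ∈ [0,1]^E : Σ_{e ∈ E(U)} x_e ≤ |U| for all U ⊆ V} of a finite graph G = (V,E) is integral: for every c ∈ ℝ^E, the maximum of Σ_e c_e x_e over ℂ is attained at a 0/1 vector (which is the indicator of a single-cycle forest). -/
open scoped Classical

/-- Membership in the polytope `ℂ = {x ∈ [0,1]^E : Σ_{e ∈ E(U)} x_e ≤ |U| for all U ⊆ V}`. -/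
def inPolytope {V : Type*} [DecidableEq V] (E : Finset (Finset V))
    (x : Finset V → ℝ) : Prop :=
  (∀ e ∈ E, 0 ≤ x e ∧ x e ≤ 1) ∧
    ∀ U : Finset V, ∑ e ∈ E.filter (fun e => e ⊆ U), x e ≤ (U.card : ℝ)

namespace SCFAux

open Finset

variable {V : Type*} [Fintype V] [DecidableEq V]

/-- Sparsity: every vertex set spans at most `|U|` edges. -/
def Sparse (B : Finset (Finset V)) : Prop :=
  ∀ U : Finset V, (B.filter (fun e => e ⊆ U)).card ≤ U.card

lemma Sparse.mono {B B' : Finset (Finset V)} (h : B' ⊆ B) (hB : Sparse B) : Sparse B' :=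
  fun U => le_trans (Finset.card_le_card (Finset.filter_subset_filter _ h)) (hB U)

lemma notSparse_mono {B B' : Finset (Finset V)} (h : B ⊆ B') {e : Finset V}
    (hne : ¬ Sparse (insert e B)) : ¬ Sparse (insert e B') :=
  fun hs => hne (hs.mono (Finset.insert_subset_insert _ h))

lemma sparse_empty : Sparse (∅ : Finset (Finset V)) := by
  intro U; simp

lemma tight_union {B : Finset (Finset V)} (hB : Sparse B) {U W : Finset V}
    (hU : (B.filter (fun e => e ⊆ U)).card = U.card)
    (hW : (B.filter (fun e => e ⊆ W)).card = W.card) :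
    (B.filter (fun e => e ⊆ (U ∪ W))).card = (U ∪ W).card := by
  have h1 : B.filter (fun e => e ⊆ U) ∪ B.filter (fun e => e ⊆ W)
      ⊆ B.filter (fun e => e ⊆ (U ∪ W)) := by
    intro e he
    simp only [mem_union, mem_filter] at he ⊢
    rcases he with ⟨h, h2⟩ | ⟨h, h2⟩
    · exact ⟨h, h2.trans subset_union_left⟩
    · exact ⟨h, h2.trans subset_union_right⟩
  have h2 : B.filter (fun e => e ⊆ U) ∩ B.filter (fun e => e ⊆ W)
      = B.filter (fun e => e ⊆ (U ∩ W)) := by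
    ext e
    simp only [mem_inter, mem_filter, Finset.subset_inter_iff]
    tauto
  have h3 := Finset.card_union_add_card_inter (B.filter (fun e => e ⊆ U))
      (B.filter (fun e => e ⊆ W))
  rw [h2] at h3
  have h4 := Finset.card_le_card h1
  have h5 := Finset.card_union_add_card_inter U W
  have h6 := hB (U ∪ W)
  have h7 := hB (U ∩ W)
  omega

/-- Main LP bound: if `B` is a maximal sparse subset of `A`, then for every fractional `x`
satisfying the polytope constraints on `A`, we have `x(A) ≤ |B|`. -/
lemma main_bound (A B : Finset (Finset V)) (x : Finset V → ℝ)
    (hBA : B ⊆ A) (hB : Sparse B)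
    (hmax : ∀ e ∈ A, e ∉ B → ¬ Sparse (insert e B))
    (hx0 : ∀ e ∈ A, 0 ≤ x e) (hx1 : ∀ e ∈ A, x e ≤ 1)
    (hcut : ∀ U : Finset V, ∑ e ∈ A.filter (fun e => e ⊆ U), x e ≤ (U.card : ℝ)) :
    ∑ e ∈ A, x e ≤ (B.card : ℝ) := by
  set 𝒯 : Finset (Finset V) :=
    (Finset.univ : Finset V).powerset.filter
      (fun U => (B.filter (fun e => e ⊆ U)).card = U.card) with h𝒯
  set T : Finset V := 𝒯.sup id with hTdef
  have hTtight : (B.filter (fun e => e ⊆ T)).card = T.card := by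
    rw [hTdef]
    apply Finset.sup_induction (p := fun (U : Finset V) => (B.filter (fun e => e ⊆ U)).card = U.card)
    · have h := hB ∅
      have : (B.filter (fun e => e ⊆ (∅ : Finset V))).card = 0 := Nat.le_zero.mp (by simpa using h)
      simpa using this
    · intro U hU W hW
      exact tight_union hB hU hW
    · intro U hU
      simp only [h𝒯, mem_filter, mem_powerset] at hU
      exact hU.2
  have hsub : ∀ e ∈ A, e ∉ B → e ⊆ T := by
    intro e he heB
    have h := hmax e he heB
    rw [Sparse] at h
    push_neg at h
    obtain ⟨U, hUlt⟩ := h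
    by_cases heU : e ⊆ U
    · have h1 : (insert e B).filter (fun f => f ⊆ U) ⊆ insert e (B.filter (fun f => f ⊆ U)) := by
        intro f hf
        simp only [mem_filter, mem_insert] at hf ⊢
        tauto
      have h2 := le_trans (Finset.card_le_card h1) (Finset.card_insert_le _ _)
      have h3 := hB U
      have htightU : (B.filter (fun f => f ⊆ U)).card = U.card := by omega
      have hUT : U ⊆ T := by
        intro a haU
        rw [hTdef]
        rw [Finset.mem_sup]
        refine ⟨U, ?_, haU⟩
        rw [h𝒯, Finset.mem_filter]
        exact ⟨Finset.mem_powerset.mpr (Finset.subset_univ U), htightU⟩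
      exact heU.trans hUT
    · exfalso
      have heq : (insert e B).filter (fun f => f ⊆ U) = B.filter (fun f => f ⊆ U) := by
        rw [Finset.filter_insert, if_neg heU]
      rw [heq] at hUlt
      exact absurd (hB U) (not_le.mpr hUlt)
  have hsub2 : A.filter (fun e => ¬ e ⊆ T) ⊆ B.filter (fun e => ¬ e ⊆ T) := by
    intro e he
    simp only [mem_filter] at he ⊢
    refine ⟨?_, he.2⟩
    by_contra hB'
    exact he.2 (hsub e he.1 hB')
  have h1 : ∑ e ∈ A.filter (fun e => e ⊆ T), x e ≤ (T.card : ℝ) := hcut T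
  have h2 : ∑ e ∈ A.filter (fun e => ¬ e ⊆ T), x e
      ≤ ((B.filter (fun e => ¬ e ⊆ T)).card : ℝ) := by
    calc ∑ e ∈ A.filter (fun e => ¬ e ⊆ T), x e
        ≤ ∑ _e ∈ A.filter (fun e => ¬ e ⊆ T), (1 : ℝ) :=
          Finset.sum_le_sum (fun e he => hx1 e (Finset.filter_subset _ _ he))
      _ = ((A.filter (fun e => ¬ e ⊆ T)).card : ℝ) := by simp
      _ ≤ ((B.filter (fun e => ¬ e ⊆ T)).card : ℝ) := by
          exact_mod_cast Finset.card_le_card hsub2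
  have hcards : (B.filter (fun e => e ⊆ T)).card + (B.filter (fun e => ¬ e ⊆ T)).card
      = B.card := Finset.card_filter_add_card_filter_not _
  calc ∑ e ∈ A, x e
      = ∑ e ∈ A.filter (fun e => e ⊆ T), x e + ∑ e ∈ A.filter (fun e => ¬ e ⊆ T), x e :=
        (Finset.sum_filter_add_sum_filter_not A _ x).symm
    _ ≤ (T.card : ℝ) + ((B.filter (fun e => ¬ e ⊆ T)).card : ℝ) := add_le_add h1 h2
    _ = (B.card : ℝ) := by
        rw [← hcards, ← hTtight]
        push_cast
        ring

/-- A sparse edge family yields a single-cycle forest. -/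
lemma sparse_isSingleCycleForest {F : Finset (Finset V)} (hF : Sparse F) :
    IsSingleCycleForest (pairGraph F) := by
  intro comp
  set U : Finset V := Finset.univ.filter (fun v => (pairGraph F).connectedComponentMk v = comp) with hU
  have hvset : {v : V | (pairGraph F).connectedComponentMk v = comp} = (↑U : Set V) := by
    ext v; simp [hU]
  set f : Sym2 V → Finset V :=
    Sym2.lift ⟨fun a b => ({a, b} : Finset V), fun a b => Finset.pair_comm a b⟩ with hf
  have key : {e ∈ (pairGraph F).edgeSet | ∀ v ∈ e, (pairGraph F).connectedComponentMk v = comp}.ncard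
      ≤ (↑(F.filter (fun e => e ⊆ U)) : Set (Finset V)).ncard := by
    apply Set.ncard_le_ncard_of_injOn f
    · rintro e ⟨he, hc⟩
      induction e using Sym2.ind with
      | _ a b =>
        have hadj : (pairGraph F).Adj a b := he
        have ha : (pairGraph F).connectedComponentMk a = comp := hc a (Sym2.mem_mk_left a b)
        have hb : (pairGraph F).connectedComponentMk b = comp := hc b (Sym2.mem_mk_right a b)
        have hfe : f s(a, b) = ({a, b} : Finset V) := Sym2.lift_mk _ a b
        rw [hfe]
        simp only [Finset.coe_filter, Set.mem_setOf_eq]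
        refine ⟨hadj.2, ?_⟩
        intro v hv
        rcases Finset.mem_insert.mp hv with rfl | hv
        · simp [hU, ha]
        · rw [Finset.mem_singleton.mp hv]
          simp [hU, hb]
    · rintro e1 ⟨he1, -⟩ e2 ⟨he2, -⟩ heq
      induction e1 using Sym2.ind with
      | _ a b =>
        induction e2 using Sym2.ind with
        | _ a' b' =>
          have hadj1 : (pairGraph F).Adj a b := he1
          have hadj2 : (pairGraph F).Adj a' b' := he2
          have hab : a ≠ b := hadj1.1
          have h12 : ({a, b} : Finset V) = ({a', b'} : Finset V) := by
            have h1 : f s(a, b) = ({a, b} : Finset V) := Sym2.lift_mk _ a b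
            have h2 : f s(a', b') = ({a', b'} : Finset V) := Sym2.lift_mk _ a' b'
            rw [← h1, ← h2, heq]
          have ha : a = a' ∨ a = b' := by
            have : a ∈ ({a', b'} : Finset V) := h12 ▸ Finset.mem_insert_self a {b}
            simpa using this
          have hbm : b = a' ∨ b = b' := by
            have : b ∈ ({a', b'} : Finset V) := by
              rw [← h12]; simp
            simpa using this
          have ham : a' ∈ ({a, b} : Finset V) := by rw [h12]; simp
          have hbm' : b' ∈ ({a, b} : Finset V) := by rw [h12]; simp
          simp only [Finset.mem_insert, Finset.mem_singleton] at ham hbm'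
          rw [Sym2.eq_iff]
          rcases ha with h1 | h1 <;> rcases hbm with h2 | h2
          · exact absurd (h1.trans h2.symm) hab
          · exact Or.inl ⟨h1, h2⟩
          · exact Or.inr ⟨h1, h2⟩
          · exact absurd (h1.trans h2.symm) hab
  calc {e ∈ (pairGraph F).edgeSet | ∀ v ∈ e, (pairGraph F).connectedComponentMk v = comp}.ncard
      ≤ (↑(F.filter (fun e => e ⊆ U)) : Set (Finset V)).ncard := key
    _ = (F.filter (fun e => e ⊆ U)).card := Set.ncard_coe_finset _
    _ ≤ U.card := hF U
    _ = {v : V | (pairGraph F).connectedComponentMk v = comp}.ncard := by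
        rw [hvset, Set.ncard_coe_finset]

/-- Greedy algorithm: process `es 0, es 1, ...` in order, keeping an edge whenever
the result stays sparse. -/
noncomputable def greedy (es : ℕ → Finset V) : ℕ → Finset (Finset V)
  | 0 => ∅
  | (k+1) =>
      if Sparse (insert (es k) (greedy es k)) then insert (es k) (greedy es k)
      else greedy es k

lemma greedy_succ (es : ℕ → Finset V) (k : ℕ) :
    greedy es (k+1) =
      if Sparse (insert (es k) (greedy es k)) then insert (es k) (greedy es k)
      else greedy es k := by
  rw [greedy]

lemma greedy_sparse (es : ℕ → Finset V) : ∀ k, Sparse (greedy es k)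
  | 0 => by rw [greedy]; exact sparse_empty
  | (k+1) => by
      rw [greedy_succ]
      split_ifs with h
      · exact h
      · exact greedy_sparse es k

lemma greedy_mono (es : ℕ → Finset V) (k : ℕ) : greedy es k ⊆ greedy es (k+1) := by
  rw [greedy_succ]
  split_ifs with h
  · exact Finset.subset_insert _ _
  · exact Finset.Subset.refl _

lemma greedy_le_mono (es : ℕ → Finset V) {k m : ℕ} (h : k ≤ m) :
    greedy es k ⊆ greedy es m := by
  induction h with
  | refl => exact Finset.Subset.refl _
  | step _ ih => exact ih.trans (greedy_mono es _)

lemma greedy_subset_image (es : ℕ → Finset V) : ∀ k,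
    greedy es k ⊆ (Finset.range k).image es
  | 0 => by rw [greedy]; exact Finset.empty_subset _
  | (k+1) => by
      rw [greedy_succ]
      have hsub : (Finset.range k).image es ⊆ (Finset.range (k+1)).image es :=
        Finset.image_subset_image (by intro i hi; simp at hi ⊢; omega)
      have ih := greedy_subset_image es k
      split_ifs with h
      · refine Finset.insert_subset ?_ (ih.trans hsub)
        exact Finset.mem_image.mpr ⟨k, by simp, rfl⟩
      · exact ih.trans hsub

lemma greedy_not_added (es : ℕ → Finset V) (k : ℕ) (h : es k ∉ greedy es (k+1)) :
    ¬ Sparse (insert (es k) (greedy es k)) := by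
  intro hs
  apply h
  rw [greedy_succ, if_pos hs]
  exact Finset.mem_insert_self _ _

lemma greedy_mem_succ (es : ℕ → Finset V) (k : ℕ) (e : Finset V)
    (h : e ∈ greedy es (k+1)) : e ∈ greedy es k ∨ e = es k := by
  rw [greedy_succ] at h
  split_ifs at h with hs
  · rcases Finset.mem_insert.mp h with h' | h'
    · exact Or.inr h'
    · exact Or.inl h'
  · exact Or.inl h

lemma greedy_mem_early (es : ℕ → Finset V) (n : ℕ)
    (hinj : ∀ i j, i < n → j < n → es i = es j → i = j)
    (j : ℕ) (hj : j < n) : ∀ m, m ≤ n → es j ∈ greedy es m → es j ∈ greedy es (j+1) := by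
  intro m
  induction m with
  | zero => intro _ h; rw [greedy] at h; exact absurd h (Finset.notMem_empty _)
  | succ k ih =>
      intro hk h
      rcases greedy_mem_succ es k _ h with h' | h'
      · exact ih (by omega) h'
      · have hjk : j = k := hinj j k hj (by omega) h'
        rw [hjk] at h ⊢
        exact h

/-- A sorted (by decreasing `c`) injective enumeration of a finite edge family. -/
lemma exists_enum (P : Finset (Finset V)) (c : Finset V → ℝ) :
    ∃ es : ℕ → Finset V,
      (∀ i, i < P.card → es i ∈ P) ∧
      (∀ i j, i < P.card → j < P.card → es i = es j → i = j) ∧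
      (∀ i j, i ≤ j → j < P.card → c (es j) ≤ c (es i)) ∧
      (Finset.range P.card).image es = P := by
  classical
  let b : Fin P.card → Finset V := fun i => ((P.equivFin.symm i : P) : Finset V)
  have hbinj : Function.Injective b := by
    intro i j h
    have := Subtype.coe_injective h
    exact (Equiv.injective P.equivFin.symm) this
  have hbmem : ∀ i, b i ∈ P := fun i => (P.equivFin.symm i).2
  let σ := Tuple.sort (fun i => -c (b i))
  let es : ℕ → Finset V := fun i => if h : i < P.card then b (σ ⟨i, h⟩) else ∅
  have hmono := Tuple.monotone_sort (fun i => -c (b i))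
  refine ⟨es, ?_, ?_, ?_, ?_⟩
  · intro i hi
    simp only [es, dif_pos hi]
    exact hbmem _
  · intro i j hi hj hij
    simp only [es, dif_pos hi, dif_pos hj] at hij
    have h2 : (⟨i, hi⟩ : Fin P.card) = ⟨j, hj⟩ := σ.injective (hbinj hij)
    exact congrArg Fin.val h2
  · intro i j hij hj
    have hi : i < P.card := lt_of_le_of_lt hij hj
    simp only [es, dif_pos hi, dif_pos hj]
    have := hmono (a := ⟨i, hi⟩) (b := ⟨j, hj⟩) (Fin.mk_le_mk.mpr hij)
    simp only [Function.comp_apply] at this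
    linarith
  · apply Finset.eq_of_subset_of_card_le
    · intro e he
      rcases Finset.mem_image.mp he with ⟨i, hi, rfl⟩
      rw [Finset.mem_range] at hi
      simp only [es, dif_pos hi]
      exact hbmem _
    · rw [Finset.card_image_of_injOn]
      · simp
      · intro i hi j hj hij
        rw [Finset.mem_coe, Finset.mem_range] at hi hj
        simp only [es, dif_pos hi, dif_pos hj] at hij
        exact congrArg Fin.val (σ.injective (hbinj hij))

end SCFAux

/-- Integrality of the polytope `ℂ`: for every objective `c`, the maximum of `Σ_e c_e x_e`
over `ℂ` is attained at a `0/1` vector which is the indicator of a single-cycle forest. -/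
theorem stmt8 {V : Type*} [Fintype V] [DecidableEq V] (E : Finset (Finset V))
    (hE : ∀ e ∈ E, e.card = 2) (c : Finset V → ℝ) :
    ∃ xstar : Finset V → ℝ, inPolytope E xstar ∧
      (∀ e ∈ E, xstar e = 0 ∨ xstar e = 1) ∧
      IsSingleCycleForest (pairGraph (E.filter (fun e => xstar e = 1))) ∧
      ∀ x : Finset V → ℝ, inPolytope E x →
        ∑ e ∈ E, c e * x e ≤ ∑ e ∈ E, c e * xstar e := by
  classical
  obtain ⟨es, hmem, hinj, hanti, himage⟩ :=
    SCFAux.exists_enum (E.filter (fun e => 0 < c e)) c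
  set P : Finset (Finset V) := E.filter (fun e => 0 < c e) with hP
  have hPE : P ⊆ E := Finset.filter_subset _ _
  set n : ℕ := P.card with hn
  set Fs : Finset (Finset V) := SCFAux.greedy es n with hFs
  have hFsSp : SCFAux.Sparse Fs := SCFAux.greedy_sparse es n
  have hFsP : Fs ⊆ P := by
    rw [hFs, ← himage]
    exact SCFAux.greedy_subset_image es n
  have hFsE : Fs ⊆ E := hFsP.trans hPE
  refine ⟨fun e => if e ∈ Fs then (1 : ℝ) else 0, ?_, ?_, ?_, ?_⟩
  · constructor
    · intro e _
      show 0 ≤ (if e ∈ Fs then (1:ℝ) else 0) ∧ (if e ∈ Fs then (1:ℝ) else 0) ≤ 1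
      split_ifs <;> norm_num
    · intro U
      show ∑ e ∈ E.filter (fun e => e ⊆ U), (if e ∈ Fs then (1:ℝ) else 0) ≤ (U.card : ℝ)
      have h1 : ∑ e ∈ E.filter (fun e => e ⊆ U), (if e ∈ Fs then (1 : ℝ) else 0)
          = (((E.filter (fun e => e ⊆ U)).filter (fun e => e ∈ Fs)).card : ℝ) :=
        Finset.sum_boole _ _
      have h2 : (E.filter (fun e => e ⊆ U)).filter (fun e => e ∈ Fs)
          = Fs.filter (fun e => e ⊆ U) := by
        ext e
        simp only [Finset.mem_filter]
        constructor
        · rintro ⟨⟨_, h⟩, hm⟩; exact ⟨hm, h⟩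
        · rintro ⟨hm, h⟩; exact ⟨⟨hFsE hm, h⟩, hm⟩
      rw [h1, h2]
      exact_mod_cast hFsSp U
  · intro e _
    show (if e ∈ Fs then (1:ℝ) else 0) = 0 ∨ (if e ∈ Fs then (1:ℝ) else 0) = 1
    split_ifs
    · exact Or.inr rfl
    · exact Or.inl rfl
  · show IsSingleCycleForest (pairGraph (E.filter (fun e => (if e ∈ Fs then (1:ℝ) else 0) = 1)))
    have heq : E.filter (fun e => (if e ∈ Fs then (1 : ℝ) else 0) = 1) = Fs := by
      ext e
      simp only [Finset.mem_filter]
      constructor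
      · rintro ⟨heE, h⟩
        split_ifs at h with hf
        · exact hf
        · norm_num at h
      · intro h
        exact ⟨hFsE h, by rw [if_pos h]⟩
    rw [heq]
    exact SCFAux.sparse_isSingleCycleForest hFsSp
  · intro x hx
    show ∑ e ∈ E, c e * x e ≤ ∑ e ∈ E, c e * (if e ∈ Fs then (1:ℝ) else 0)
    obtain ⟨hx01, hxcut⟩ := hx
    set a : ℕ → ℝ := fun i => c (es i) with ha
    set gx : ℕ → ℝ := fun i => x (es i) with hgx
    set gy : ℕ → ℝ := fun i => if es i ∈ Fs then (1 : ℝ) else 0 with hgy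
    have hinjOn : ∀ k, k ≤ n → ∀ i ∈ Finset.range k, ∀ j ∈ Finset.range k,
        es i = es j → i = j := by
      intro k hk i hi j hj hij
      rw [Finset.mem_range] at hi hj
      exact hinj i j (by omega) (by omega) hij
    have hImP : ∀ k, k ≤ n → (Finset.range k).image es ⊆ P := by
      intro k hk
      rw [← himage]
      exact Finset.image_subset_image (by intro i hi; rw [Finset.mem_range] at hi ⊢; omega)
    have hfilter2 : ∀ k, k ≤ n →
        ((Finset.range k).image es).filter (fun e => e ∈ Fs) = SCFAux.greedy es k := by
      intro k hk
      apply Finset.Subset.antisymm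
      · intro e he
        simp only [Finset.mem_filter, Finset.mem_image, Finset.mem_range] at he
        obtain ⟨⟨j, hj, rfl⟩, hm⟩ := he
        have h1 : es j ∈ SCFAux.greedy es (j+1) :=
          SCFAux.greedy_mem_early es n hinj j (by omega) n le_rfl hm
        exact SCFAux.greedy_le_mono es (by omega) h1
      · intro e he
        refine Finset.mem_filter.mpr ⟨SCFAux.greedy_subset_image es k he, ?_⟩
        exact SCFAux.greedy_le_mono es hk he
    have hmaxk : ∀ k, k ≤ n → ∀ e ∈ (Finset.range k).image es,
        e ∉ SCFAux.greedy es k → ¬ SCFAux.Sparse (insert e (SCFAux.greedy es k)) := by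
      intro k hk e he hem
      rcases Finset.mem_image.mp he with ⟨j, hj, rfl⟩
      rw [Finset.mem_range] at hj
      have h1 : es j ∉ SCFAux.greedy es (j+1) := by
        intro hcon
        exact hem (SCFAux.greedy_le_mono es (by omega) hcon)
      have h2 := SCFAux.greedy_not_added es j h1
      exact SCFAux.notSparse_mono (SCFAux.greedy_le_mono es (by omega : j ≤ k)) h2
    have hcomp : ∀ k, k ≤ n →
        (∑ j ∈ Finset.range k, gx j) ≤ ∑ j ∈ Finset.range k, gy j := by
      intro k hk
      have hXx : ∑ j ∈ Finset.range k, gx j = ∑ e ∈ (Finset.range k).image es, x e :=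
        (Finset.sum_image (hinjOn k hk)).symm
      have hXy : ∑ j ∈ Finset.range k, gy j = ((SCFAux.greedy es k).card : ℝ) := by
        have h := Finset.sum_image (f := fun e => if e ∈ Fs then (1:ℝ) else 0)
          (hinjOn k hk)
        simp only [hgy]
        rw [← h, Finset.sum_boole, hfilter2 k hk]
      rw [hXx, hXy]
      apply SCFAux.main_bound _ _ x (SCFAux.greedy_subset_image es k)
          (SCFAux.greedy_sparse es k) (hmaxk k hk)
      · intro e he
        exact (hx01 e (hPE (hImP k hk he))).1
      · intro e he
        exact (hx01 e (hPE (hImP k hk he))).2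
      · intro U
        refine le_trans (Finset.sum_le_sum_of_subset_of_nonneg ?_ ?_) (hxcut U)
        · exact Finset.filter_subset_filter _ ((hImP k hk).trans hPE)
        · intro e heE _
          exact (hx01 e (Finset.mem_filter.mp heE).1).1
    have hstep : (∑ i ∈ Finset.range n, a i * gx i) ≤ ∑ i ∈ Finset.range n, a i * gy i := by
      rcases Nat.eq_zero_or_pos n with h0 | hpos
      · simp [h0]
      have hAbx := Finset.sum_range_by_parts a gx n
      have hAby := Finset.sum_range_by_parts a gy n
      have h1 : a (n-1) * (∑ j ∈ Finset.range n, gx j)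
          ≤ a (n-1) * (∑ j ∈ Finset.range n, gy j) := by
        apply mul_le_mul_of_nonneg_left (hcomp n le_rfl)
        have hm : es (n-1) ∈ P := hmem (n-1) (by omega)
        have : 0 < c (es (n-1)) := (Finset.mem_filter.mp hm).2
        rw [ha]
        linarith
      have h2 : (∑ i ∈ Finset.range (n-1), (a (i+1) - a i) * (∑ j ∈ Finset.range (i+1), gy j))
          ≤ ∑ i ∈ Finset.range (n-1), (a (i+1) - a i) * (∑ j ∈ Finset.range (i+1), gx j) := by
        apply Finset.sum_le_sum
        intro i hi
        rw [Finset.mem_range] at hi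
        have hc : a (i+1) - a i ≤ 0 := sub_nonpos.mpr (hanti i (i+1) (by omega) (by omega))
        exact mul_le_mul_of_nonpos_left (hcomp (i+1) (by omega)) hc
      calc ∑ i ∈ Finset.range n, a i * gx i
          = a (n-1) * (∑ j ∈ Finset.range n, gx j)
            - ∑ i ∈ Finset.range (n-1), (a (i+1) - a i) * (∑ j ∈ Finset.range (i+1), gx j) := by
            simpa [smul_eq_mul] using hAbx
        _ ≤ a (n-1) * (∑ j ∈ Finset.range n, gy j)
            - ∑ i ∈ Finset.range (n-1), (a (i+1) - a i) * (∑ j ∈ Finset.range (i+1), gy j) :=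
            sub_le_sub h1 h2
        _ = ∑ i ∈ Finset.range n, a i * gy i := by
            simpa [smul_eq_mul] using hAby.symm
    have hPx : ∑ e ∈ P, c e * x e = ∑ i ∈ Finset.range n, a i * gx i := by
      simp only [ha, hgx]
      rw [← himage, Finset.sum_image (hinjOn n le_rfl)]
    have hPy : ∑ e ∈ P, c e * (if e ∈ Fs then (1:ℝ) else 0)
        = ∑ i ∈ Finset.range n, a i * gy i := by
      simp only [ha, hgy]
      rw [← himage, Finset.sum_image (hinjOn n le_rfl)]
    calc ∑ e ∈ E, c e * x e
        = ∑ e ∈ P, c e * x e + ∑ e ∈ E.filter (fun e => ¬ 0 < c e), c e * x e :=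
          (Finset.sum_filter_add_sum_filter_not E _ _).symm
      _ ≤ ∑ e ∈ P, c e * x e := by
          have hle : ∑ e ∈ E.filter (fun e => ¬ 0 < c e), c e * x e ≤ 0 := by
            apply Finset.sum_nonpos
            intro e he
            rw [Finset.mem_filter] at he
            have hc : c e ≤ 0 := not_lt.mp he.2
            have hx0 : 0 ≤ x e := (hx01 e he.1).1
            exact mul_nonpos_of_nonpos_of_nonneg hc hx0
          linarith
      _ = ∑ i ∈ Finset.range n, a i * gx i := hPx
      _ ≤ ∑ i ∈ Finset.range n, a i * gy i := hstep
      _ = ∑ e ∈ P, c e * (if e ∈ Fs then (1:ℝ) else 0) := hPy.symm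
      _ = ∑ e ∈ E, c e * (if e ∈ Fs then (1:ℝ) else 0) := by
          rw [← Finset.sum_filter_add_sum_filter_not E (fun e => 0 < c e)
            (fun e => c e * (if e ∈ Fs then (1:ℝ) else 0))]
          have hz : ∑ e ∈ E.filter (fun e => ¬ 0 < c e),
              c e * (if e ∈ Fs then (1:ℝ) else 0) = 0 := by
            apply Finset.sum_eq_zero
            intro e he
            rw [Finset.mem_filter] at he
            have : e ∉ Fs := fun h => he.2 (Finset.mem_filter.mp (hFsP h)).2
            rw [if_neg this, mul_zero]
          rw [hz, add_zero]
end

section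
/- For a finite graph G = (V,E), the polytope {x ∈ [0,1]^E : Σ_{e∈E(U)} x_e ≤ |U| for all U ⊆ V} equals the convex hull of the indicator vectors of single-cycle forests of G. -/
open scoped Classical

set_option linter.unusedSectionVars false
set_option maxHeartbeats 1000000

namespace SCF

variable {V : Type*} [Fintype V] [DecidableEq V]

def vtx (S : Finset (Finset V)) : Finset V := S.biUnion id

lemma mem_vtx {S : Finset (Finset V)} {v : V} : v ∈ vtx S ↔ ∃ e ∈ S, v ∈ e := by
  simp [vtx]

lemma pairGraph_mono {S T : Finset (Finset V)} (h : S ⊆ T) : pairGraph S ≤ pairGraph T :=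
  fun _ _ hadj => ⟨hadj.1, h hadj.2⟩

instance {G : SimpleGraph V} : Finite G.ConnectedComponent :=
  Finite.of_surjective G.connectedComponentMk (fun c => Quot.exists_rep c)

noncomputable def ncomp (S : Finset (Finset V)) : ℕ := Nat.card (pairGraph S).ConnectedComponent

lemma pair_eq_pair {u w a b : V} (huw : u ≠ w) (h : ({u, w} : Finset V) = {a, b}) :
    (u = a ∧ w = b) ∨ (u = b ∧ w = a) := by
  have hu : u ∈ ({a, b} : Finset V) := h ▸ Finset.mem_insert_self u {w}
  have hw : w ∈ ({a, b} : Finset V) := h ▸ Finset.mem_insert_of_mem (Finset.mem_singleton_self w)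
  simp only [Finset.mem_insert, Finset.mem_singleton] at hu hw
  rcases hu with hu | hu <;> rcases hw with hw | hw
  · exact absurd (hu.trans hw.symm) huw
  · exact Or.inl ⟨hu, hw⟩
  · exact Or.inr ⟨hu, hw⟩
  · exact absurd (hu.trans hw.symm) huw

lemma walk_insert {T : Finset (Finset V)} {a b u v : V}
    (w : (pairGraph (insert ({a, b} : Finset V) T)).Walk u v) :
    (pairGraph T).Reachable u v ∨
      (((pairGraph T).Reachable u a ∨ (pairGraph T).Reachable u b) ∧
       ((pairGraph T).Reachable v a ∨ (pairGraph T).Reachable v b)) := by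
  induction w with
  | nil => exact Or.inl (SimpleGraph.Reachable.refl _)
  | @cons x y z hadj p ih =>
    obtain ⟨hxy, hmem⟩ := hadj
    rcases Finset.mem_insert.mp hmem with heq | hT
    · -- the edge {x,y} is the new edge {a,b}
      rcases pair_eq_pair hxy heq with ⟨hx, hy⟩ | ⟨hx, hy⟩
      · subst hx; subst hy
        refine Or.inr ⟨Or.inl (SimpleGraph.Reachable.refl _), ?_⟩
        rcases ih with h | h
        · exact Or.inr h.symm
        · exact h.2
      · subst hx; subst hy
        refine Or.inr ⟨Or.inr (SimpleGraph.Reachable.refl _), ?_⟩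
        rcases ih with h | h
        · exact Or.inl h.symm
        · exact h.2
    · have hadjT : (pairGraph T).Adj x y := ⟨hxy, hT⟩
      rcases ih with h | ⟨hy', hz'⟩
      · exact Or.inl (hadjT.reachable.trans h)
      · refine Or.inr ⟨?_, hz'⟩
        rcases hy' with h | h
        · exact Or.inl (hadjT.reachable.trans h)
        · exact Or.inr (hadjT.reachable.trans h)

lemma ncomp_insert_le {T : Finset (Finset V)} {f : Finset V} :
    ncomp (insert f T) ≤ ncomp T := by
  apply Nat.card_le_card_of_surjective
    (SimpleGraph.ConnectedComponent.map
      (SimpleGraph.Hom.ofLE (pairGraph_mono (Finset.subset_insert f T))))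
  intro c
  refine c.ind (fun v => ?_)
  exact ⟨(pairGraph T).connectedComponentMk v, rfl⟩

lemma le_ncomp_insert {T : Finset (Finset V)} {f : Finset V} (hf : f.card = 2) :
    ncomp T ≤ ncomp (insert f T) + 1 := by
  obtain ⟨a, b, hab, rfl⟩ := Finset.card_eq_two.mp hf
  set G := pairGraph T
  set G' := pairGraph (insert ({a, b} : Finset V) T)
  set ψ : G.ConnectedComponent → G'.ConnectedComponent :=
    SimpleGraph.ConnectedComponent.map
      (SimpleGraph.Hom.ofLE (pairGraph_mono (Finset.subset_insert _ T)))
  have key : ∀ x y : G.ConnectedComponent, ψ x = ψ y → x = y ∨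
      ((x = G.connectedComponentMk a ∨ x = G.connectedComponentMk b) ∧
       (y = G.connectedComponentMk a ∨ y = G.connectedComponentMk b)) := by
    intro x y
    refine SimpleGraph.ConnectedComponent.ind₂ (fun u v hψ => ?_) x y
    have hr : G'.Reachable u v := SimpleGraph.ConnectedComponent.exact hψ
    obtain ⟨w⟩ := hr
    rcases walk_insert w with h | ⟨hu, hv⟩
    · exact Or.inl (SimpleGraph.ConnectedComponent.sound h)
    · refine Or.inr ⟨?_, ?_⟩
      · rcases hu with h | h
        · exact Or.inl (SimpleGraph.ConnectedComponent.sound h)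
        · exact Or.inr (SimpleGraph.ConnectedComponent.sound h)
      · rcases hv with h | h
        · exact Or.inl (SimpleGraph.ConnectedComponent.sound h)
        · exact Or.inr (SimpleGraph.ConnectedComponent.sound h)
  have hinj : Function.Injective (fun x : G.ConnectedComponent =>
      if x = G.connectedComponentMk a then (none : Option G'.ConnectedComponent) else some (ψ x)) := by
    intro x y hxy
    by_cases hx : x = G.connectedComponentMk a <;> by_cases hy : y = G.connectedComponentMk a <;>
      simp only [hx, hy, if_pos, if_neg, reduceIte] at hxy
    · exact hx.trans hy.symm
    · exact absurd hxy (by simp)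
    · exact absurd hxy (by simp)
    · rcases key x y (Option.some_injective _ hxy) with h | ⟨h1, h2⟩
      · exact h
      · rcases h1 with h1 | h1
        · exact absurd h1 hx
        · rcases h2 with h2 | h2
          · exact absurd h2 hy
          · exact h1.trans h2.symm
  calc ncomp T ≤ Nat.card (Option G'.ConnectedComponent) :=
        Nat.card_le_card_of_injective _ hinj
    _ = ncomp (insert ({a, b} : Finset V) T) + 1 := by
        simp [ncomp, Nat.card_eq_fintype_card, Fintype.card_option]
        exact Fintype.card_congr (Equiv.refl _)


lemma delta_mono : ∀ (k : ℕ) (S T : Finset (Finset V)), (∀ g ∈ T, g.card = 2) → S ⊆ T →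
    (T \ S).card = k → S.card + ncomp S ≤ T.card + ncomp T := by
  intro k
  induction k with
  | zero =>
    intro S T _ hST hcard
    have : T ⊆ S := by
      intro g hg
      by_contra hgS
      have : g ∈ T \ S := Finset.mem_sdiff.mpr ⟨hg, hgS⟩
      simp [Finset.card_eq_zero.mp hcard] at this
    rw [Finset.Subset.antisymm hST this]
  | succ k ih =>
    intro S T h2 hST hcard
    have hne : (T \ S).Nonempty := by
      rw [← Finset.card_pos, hcard]; omega
    obtain ⟨g, hg⟩ := hne
    obtain ⟨hgT, hgS⟩ := Finset.mem_sdiff.mp hg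
    have hstep : S.card + ncomp S ≤ (insert g S).card + ncomp (insert g S) := by
      rw [Finset.card_insert_of_notMem hgS]
      have := le_ncomp_insert (T := S) (h2 g hgT)
      omega
    have hsub : insert g S ⊆ T := Finset.insert_subset hgT hST
    have hcard' : (T \ insert g S).card = k := by
      have : T \ insert g S = (T \ S).erase g := by
        ext e; simp [Finset.mem_sdiff, Finset.mem_erase, Finset.mem_insert]; tauto
      rw [this, Finset.card_erase_of_mem hg, hcard]; omega
    exact hstep.trans (ih _ T h2 hsub hcard')

lemma isolated_reachable {T : Finset (Finset V)} {v u : V} (hv : v ∉ vtx T)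
    (h : (pairGraph T).Reachable v u) : v = u := by
  obtain ⟨w⟩ := h
  cases w with
  | nil => rfl
  | cons hadj p =>
    exact absurd (mem_vtx.mpr ⟨_, hadj.2, Finset.mem_insert_self _ _⟩) hv

-- upper bound on ncomp

lemma ncomp_le {T : Finset (Finset V)} :
    ncomp T ≤ ((vtx T).image (pairGraph T).connectedComponentMk).card + (Finset.univ \ vtx T).card := by
  set s1 := (vtx T).image (pairGraph T).connectedComponentMk with hs1
  set s2 := (Finset.univ \ vtx T : Finset V) with hs2
  set f : (s1 : Finset _) ⊕ (s2 : Finset V) → (pairGraph T).ConnectedComponent :=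
    fun p => match p with
      | Sum.inl c => (c : (pairGraph T).ConnectedComponent)
      | Sum.inr v => (pairGraph T).connectedComponentMk v with hf
  have hsurj : Function.Surjective f := by
    intro c
    refine c.ind (fun v => ?_)
    by_cases hv : v ∈ vtx T
    · exact ⟨Sum.inl ⟨_, Finset.mem_image_of_mem _ hv⟩, rfl⟩
    · exact ⟨Sum.inr ⟨v, Finset.mem_sdiff.mpr ⟨Finset.mem_univ v, hv⟩⟩, rfl⟩
  have h := Nat.card_le_card_of_surjective _ hsurj
  rw [Nat.card_sum, Nat.card_eq_fintype_card (α := (s1 : Finset _)), Fintype.card_coe,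
    Nat.card_eq_fintype_card (α := (s2 : Finset V)), Fintype.card_coe] at h
  exact h

-- lower bound on ncomp

lemma le_ncomp {T : Finset (Finset V)} (hne : (vtx T).Nonempty) :
    (Finset.univ \ vtx T).card + 1 ≤ ncomp T := by
  obtain ⟨u₀, hu₀⟩ := hne
  set s2 := (Finset.univ \ vtx T : Finset V) with hs2
  set f : (s2 : Finset V) ⊕ Unit → (pairGraph T).ConnectedComponent :=
    fun p => match p with
      | Sum.inl v => (pairGraph T).connectedComponentMk v
      | Sum.inr _ => (pairGraph T).connectedComponentMk u₀ with hf
  have hinj : Function.Injective f := by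
    rintro (⟨v, hv⟩ | ⟨⟩) (⟨w, hw⟩ | ⟨⟩) h <;>
      simp only [hf, SimpleGraph.ConnectedComponent.eq] at h
    · have hv' : v ∉ vtx T := (Finset.mem_sdiff.mp hv).2
      simp [isolated_reachable hv' h]
    · exact absurd (isolated_reachable (Finset.mem_sdiff.mp hv).2 h) (by rintro rfl; exact (Finset.mem_sdiff.mp hv).2 hu₀)
    · exact absurd (isolated_reachable (Finset.mem_sdiff.mp hw).2 h.symm) (by rintro rfl; exact (Finset.mem_sdiff.mp hw).2 hu₀)
    · rfl
  have h := Nat.card_le_card_of_injective _ hinj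
  rw [Nat.card_sum, Nat.card_eq_fintype_card (α := (s2 : Finset V)), Fintype.card_coe,
    Nat.card_eq_fintype_card (α := Unit), Fintype.card_unit] at h
  exact h


noncomputable def comC (F' : Finset (Finset V)) (c : (pairGraph F').ConnectedComponent) :
    Finset (Finset V) :=
  F'.filter (fun e => ∀ v ∈ e, (pairGraph F').connectedComponentMk v = c)

lemma walk_transfer {F' : Finset (Finset V)} {c : (pairGraph F').ConnectedComponent} :
    ∀ {u v : V}, (pairGraph F').Walk u v → (pairGraph F').connectedComponentMk u = c →
      (pairGraph (comC F' c)).Reachable u v := by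
  intro u v w
  induction w with
  | nil => exact fun _ => SimpleGraph.Reachable.refl _
  | @cons x y z hadj p ih =>
    intro hx
    have hy : (pairGraph F').connectedComponentMk y = c :=
      (SimpleGraph.ConnectedComponent.connectedComponentMk_eq_of_adj hadj).symm.trans hx
    have hedge : ({x, y} : Finset V) ∈ comC F' c := by
      refine Finset.mem_filter.mpr ⟨hadj.2, fun z hz => ?_⟩
      rcases Finset.mem_insert.mp hz with rfl | hz
      · exact hx
      · rw [Finset.mem_singleton.mp hz]; exact hy
    exact (show (pairGraph (comC F' c)).Adj x y from ⟨hadj.1, hedge⟩).reachable.trans (ih hy)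

lemma comC_vertex_reach {F' : Finset (Finset V)} {c : (pairGraph F').ConnectedComponent}
    {u u' : V} (hu : u ∈ vtx (comC F' c)) (hu' : u' ∈ vtx (comC F' c)) :
    (pairGraph (comC F' c)).Reachable u u' := by
  obtain ⟨e, he, hue⟩ := mem_vtx.mp hu
  obtain ⟨e', he', hue'⟩ := mem_vtx.mp hu'
  have hcu : (pairGraph F').connectedComponentMk u = c := (Finset.mem_filter.mp he).2 u hue
  have hcu' : (pairGraph F').connectedComponentMk u' = c := (Finset.mem_filter.mp he').2 u' hue'
  obtain ⟨w⟩ := SimpleGraph.ConnectedComponent.exact (hcu.trans hcu'.symm)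
  exact walk_transfer w hcu

lemma comp_subset_vtx {F' : Finset (Finset V)} (h2 : ∀ g ∈ F', g.card = 2)
    {c : (pairGraph F').ConnectedComponent} (hne : (comC F' c).Nonempty) {v : V}
    (hv : (pairGraph F').connectedComponentMk v = c) : v ∈ vtx (comC F' c) := by
  obtain ⟨e₀, he₀⟩ := hne
  obtain ⟨p, q, hpq, hpe⟩ := Finset.card_eq_two.mp (h2 e₀ (Finset.mem_filter.mp he₀).1)
  have hp : (pairGraph F').connectedComponentMk p = c :=
    (Finset.mem_filter.mp he₀).2 p (by rw [hpe]; exact Finset.mem_insert_self _ _)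
  by_cases hvp : v = p
  · subst hvp
    exact mem_vtx.mpr ⟨e₀, he₀, by rw [hpe]; exact Finset.mem_insert_self _ _⟩
  · obtain ⟨w⟩ := SimpleGraph.ConnectedComponent.exact (hv.trans hp.symm)
    cases w with
    | nil => exact absurd rfl hvp
    | @cons _ y _ hadj p' =>
      have hy : (pairGraph F').connectedComponentMk y = c :=
        (SimpleGraph.ConnectedComponent.connectedComponentMk_eq_of_adj hadj).symm.trans hv
      have : ({v, y} : Finset V) ∈ comC F' c := by
        refine Finset.mem_filter.mpr ⟨hadj.2, fun z hz => ?_⟩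
        rcases Finset.mem_insert.mp hz with rfl | hz
        · exact hv
        · rw [Finset.mem_singleton.mp hz]; exact hy
      exact mem_vtx.mpr ⟨_, this, Finset.mem_insert_self _ _⟩

lemma percomp {F' : Finset (Finset V)} (h2 : ∀ g ∈ F', g.card = 2)
    {c : (pairGraph F').ConnectedComponent}
    (hcount : (comC F' c).card ≤ (Finset.univ.filter
      (fun v => (pairGraph F').connectedComponentMk v = c)).card)
    {S : Finset (Finset V)} (hS : S ⊆ comC F' c) (hSne : S.Nonempty) :
    S.card ≤ (vtx S).card := by
  set Tc := comC F' c with hTc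
  have hTcne : Tc.Nonempty := ⟨hSne.choose, hS hSne.choose_spec⟩
  have h2T : ∀ g ∈ Tc, g.card = 2 := fun g hg => h2 g (Finset.mem_filter.mp hg).1
  -- component c's vertex set is inside vtx Tc
  have hcomp_sub : Finset.univ.filter
      (fun v => (pairGraph F').connectedComponentMk v = c) ⊆ vtx Tc := by
    intro v hv
    exact comp_subset_vtx h2 hTcne (Finset.mem_filter.mp hv).2
  have hTcbound : Tc.card ≤ (vtx Tc).card :=
    hcount.trans (Finset.card_le_card hcomp_sub)
  -- delta chain
  have hdelta : S.card + ncomp S ≤ Tc.card + ncomp Tc :=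
    delta_mono _ S Tc h2T hS rfl
  -- ncomp Tc upper bound : image of vtx Tc under mk has card ≤ 1
  have himg : ((vtx Tc).image (pairGraph Tc).connectedComponentMk).card ≤ 1 := by
    refine Finset.card_le_one.mpr (fun a ha b hb => ?_)
    obtain ⟨u, hu, rfl⟩ := Finset.mem_image.mp ha
    obtain ⟨u', hu', rfl⟩ := Finset.mem_image.mp hb
    exact SimpleGraph.ConnectedComponent.sound (comC_vertex_reach hu hu')
  have hup : ncomp Tc ≤ 1 + (Finset.univ \ vtx Tc).card :=
    ncomp_le.trans (by omega)
  -- ncomp S lower bound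
  have hSvne : (vtx S).Nonempty := by
    obtain ⟨e, he⟩ := hSne
    obtain ⟨p, q, hpq, hpe⟩ := Finset.card_eq_two.mp (h2T e (hS he))
    exact ⟨p, mem_vtx.mpr ⟨e, he, by rw [hpe]; exact Finset.mem_insert_self _ _⟩⟩
  have hlow : (Finset.univ \ vtx S).card + 1 ≤ ncomp S := le_ncomp hSvne
  have hvS : vtx S ⊆ vtx Tc := by
    intro v hv
    obtain ⟨e, he, hve⟩ := mem_vtx.mp hv
    exact mem_vtx.mpr ⟨e, hS he, hve⟩
  have c1 : (Finset.univ \ vtx S).card = Fintype.card V - (vtx S).card := by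
    rw [Finset.card_sdiff_of_subset (Finset.subset_univ _), Finset.card_univ]
  have c2 : (Finset.univ \ vtx Tc).card = Fintype.card V - (vtx Tc).card := by
    rw [Finset.card_sdiff_of_subset (Finset.subset_univ _), Finset.card_univ]
  have b1 : (vtx S).card ≤ Fintype.card V := by
    rw [← Finset.card_univ]; exact Finset.card_le_card (Finset.subset_univ _)
  have b2 : (vtx Tc).card ≤ Fintype.card V := by
    rw [← Finset.card_univ]; exact Finset.card_le_card (Finset.subset_univ _)
  omega


def sym2ToFinset : Sym2 V → Finset V :=
  Sym2.lift ⟨fun u v => ({u, v} : Finset V), fun u v => Finset.pair_comm u v⟩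

@[simp] lemma sym2ToFinset_mk (u v : V) : sym2ToFinset (s(u, v)) = ({u, v} : Finset V) := rfl

lemma mem_sym2ToFinset {e : Sym2 V} {v : V} : v ∈ sym2ToFinset e ↔ v ∈ e := by
  refine Sym2.inductionOn e (fun x y => ?_)
  simp [Sym2.mem_iff]

lemma edge_count_translate (F' : Finset (Finset V)) (h2 : ∀ g ∈ F', g.card = 2)
    (c : (pairGraph F').ConnectedComponent) :
    {e ∈ (pairGraph F').edgeSet |
        ∀ v ∈ e, (pairGraph F').connectedComponentMk v = c}.ncard = (comC F' c).card := by
  set A := {e ∈ (pairGraph F').edgeSet |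
      ∀ v ∈ e, (pairGraph F').connectedComponentMk v = c} with hA
  have hinj : Set.InjOn sym2ToFinset A := by
    intro e1 he1 e2 he2 heq
    induction e1 with
    | _ x y =>
      induction e2 with
      | _ x' y' =>
        have hxy : x ≠ y := ((he1 : _ ∧ _).1 : (pairGraph F').Adj x y).1
        simp only [sym2ToFinset_mk] at heq
        rcases pair_eq_pair hxy heq with ⟨rfl, rfl⟩ | ⟨rfl, rfl⟩
        · rfl
        · exact Sym2.eq_swap
  have himg : sym2ToFinset '' A = ↑(comC F' c) := by
    ext f
    constructor
    · rintro ⟨e, he, rfl⟩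
      induction e with
      | _ x y =>
        obtain ⟨hadj, hc⟩ := he
        refine Finset.mem_coe.mpr (Finset.mem_filter.mpr ⟨(hadj : (pairGraph F').Adj x y).2, ?_⟩)
        intro v hv
        exact hc v (mem_sym2ToFinset.mp (by simpa using hv))
    · intro hf
      obtain ⟨hfF, hc⟩ := Finset.mem_filter.mp (Finset.mem_coe.mp hf)
      obtain ⟨x, y, hxy, rfl⟩ := Finset.card_eq_two.mp (h2 _ hfF)
      refine ⟨s(x, y), ⟨?_, ?_⟩, rfl⟩
      · exact (⟨hxy, hfF⟩ : (pairGraph F').Adj x y)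
      · intro v hv
        rcases Sym2.mem_iff.mp hv with rfl | rfl
        · exact hc v (Finset.mem_insert_self _ _)
        · exact hc v (Finset.mem_insert_of_mem (Finset.mem_singleton_self _))
  have h1 : A.ncard = (sym2ToFinset '' A).ncard := (Set.ncard_image_of_injOn hinj).symm
  rw [h1, himg, Set.ncard_coe_finset]

lemma vertex_count_translate (G : SimpleGraph V) (c : G.ConnectedComponent) :
    {v : V | G.connectedComponentMk v = c}.ncard =
      (Finset.univ.filter (fun v => G.connectedComponentMk v = c)).card := by
  rw [show {v : V | G.connectedComponentMk v = c} =
    ↑(Finset.univ.filter (fun v => G.connectedComponentMk v = c)) by ext v; simp,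
    Set.ncard_coe_finset]


lemma key {F' : Finset (Finset V)} (h2 : ∀ g ∈ F', g.card = 2)
    (hISF : IsSingleCycleForest (pairGraph F')) {S : Finset (Finset V)} (hS : S ⊆ F') :
    S.card ≤ (vtx S).card := by
  rcases S.eq_empty_or_nonempty with rfl | hSne
  · simp
  -- V is nonempty
  obtain ⟨e₀, he₀⟩ := hSne
  obtain ⟨p₀, q₀, hpq₀, hpe₀⟩ := Finset.card_eq_two.mp (h2 _ (hS he₀))
  have : Nonempty V := ⟨p₀⟩
  set G := pairGraph F'
  have : Nonempty G.ConnectedComponent := ⟨G.connectedComponentMk p₀⟩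
  -- the component assignment function
  set κ : Finset V → G.ConnectedComponent := fun e =>
    if h : e.Nonempty then G.connectedComponentMk h.choose else Classical.arbitrary _ with hκ
  -- both endpoints of an edge of F' are in the same component; κ e is that component
  have hκ_spec : ∀ e ∈ F', ∀ v ∈ e, G.connectedComponentMk v = κ e := by
    intro e heF v hv
    obtain ⟨p, q, hpq, rfl⟩ := Finset.card_eq_two.mp (h2 _ heF)
    have hadj : G.Adj p q := ⟨hpq, heF⟩
    have hsame : G.connectedComponentMk p = G.connectedComponentMk q :=
      SimpleGraph.ConnectedComponent.connectedComponentMk_eq_of_adj hadj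
    have hne : (({p, q} : Finset V)).Nonempty := ⟨p, Finset.mem_insert_self _ _⟩
    have hchoose := hne.choose_spec
    rw [hκ]
    simp only [dif_pos hne]
    rcases Finset.mem_insert.mp hchoose with h' | h'
    · rcases Finset.mem_insert.mp hv with rfl | hv'
      · rw [h']
      · rw [Finset.mem_singleton.mp hv', h', hsame]
    · rw [Finset.mem_singleton.mp h']
      rcases Finset.mem_insert.mp hv with rfl | hv'
      · rw [hsame]
      · rw [Finset.mem_singleton.mp hv']
  -- fibers are inside comC
  have hfiber_sub : ∀ c : G.ConnectedComponent, S.filter (fun e => κ e = c) ⊆ comC F' c := by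
    intro c e he
    obtain ⟨heS, heκ⟩ := Finset.mem_filter.mp he
    refine Finset.mem_filter.mpr ⟨hS heS, fun v hv => ?_⟩
    rw [hκ_spec e (hS heS) v hv, heκ]
  -- per-fiber counts
  have hfiber : ∀ c ∈ S.image κ, (S.filter (fun e => κ e = c)).card ≤
      (vtx (S.filter (fun e => κ e = c))).card := by
    intro c hc
    obtain ⟨e, heS, rfl⟩ := Finset.mem_image.mp hc
    have hcount : (comC F' (κ e)).card ≤ (Finset.univ.filter
        (fun v => G.connectedComponentMk v = κ e)).card := by
      rw [← edge_count_translate F' h2 (κ e), ← vertex_count_translate G (κ e)]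
      exact hISF (κ e)
    exact percomp h2 hcount (hfiber_sub (κ e)) ⟨e, Finset.mem_filter.mpr ⟨heS, rfl⟩⟩
  -- assemble
  have hcard : S.card = ∑ c ∈ S.image κ, (S.filter (fun e => κ e = c)).card :=
    Finset.card_eq_sum_card_fiberwise (fun e he => Finset.mem_image_of_mem κ he)
  have hdisj : ∀ c₁ ∈ S.image κ, ∀ c₂ ∈ S.image κ, c₁ ≠ c₂ →
      Disjoint (vtx (S.filter (fun e => κ e = c₁))) (vtx (S.filter (fun e => κ e = c₂))) := by
    intro c₁ _ c₂ _ hne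
    rw [Finset.disjoint_left]
    intro v hv1 hv2
    obtain ⟨e1, he1, hve1⟩ := mem_vtx.mp hv1
    obtain ⟨e2, he2, hve2⟩ := mem_vtx.mp hv2
    obtain ⟨he1S, he1κ⟩ := Finset.mem_filter.mp he1
    obtain ⟨he2S, he2κ⟩ := Finset.mem_filter.mp he2
    exact hne (he1κ ▸ (hκ_spec e1 (hS he1S) v hve1).symm ▸
      (hκ_spec e2 (hS he2S) v hve2) ▸ he2κ ▸ rfl)
  calc S.card = ∑ c ∈ S.image κ, (S.filter (fun e => κ e = c)).card := hcard
    _ ≤ ∑ c ∈ S.image κ, (vtx (S.filter (fun e => κ e = c))).card :=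
        Finset.sum_le_sum hfiber
    _ = ((S.image κ).biUnion (fun c => vtx (S.filter (fun e => κ e = c)))).card :=
        (Finset.card_biUnion hdisj).symm
    _ ≤ (vtx S).card := by
        apply Finset.card_le_card
        intro v hv
        obtain ⟨c, _, hvc⟩ := Finset.mem_biUnion.mp hv
        obtain ⟨e, he, hve⟩ := mem_vtx.mp hvc
        exact mem_vtx.mpr ⟨e, (Finset.mem_filter.mp he).1, hve⟩


def Pm (E : Finset (Finset V)) (x : Finset V → ℝ) : Prop :=
  (∀ e ∈ E, 0 ≤ x e ∧ x e ≤ 1) ∧ (∀ e ∉ E, x e = 0) ∧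
    ∀ U : Finset V, ∑ e ∈ E.filter (fun e => e ⊆ U), x e ≤ (U.card : ℝ)

lemma convex_Pm (E : Finset (Finset V)) : Convex ℝ {x : Finset V → ℝ | Pm E x} := by
  rintro x hx y hy a b ha hb hab
  refine ⟨fun e he => ?_, fun e he => ?_, fun U => ?_⟩
  · obtain ⟨hx0, hx1⟩ := hx.1 e he
    obtain ⟨hy0, hy1⟩ := hy.1 e he
    simp only [Pi.add_apply, Pi.smul_apply, smul_eq_mul]
    constructor
    · nlinarith
    · nlinarith
  · simp only [Pi.add_apply, Pi.smul_apply, smul_eq_mul, hx.2.1 e he, hy.2.1 e he]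
    ring
  · have hxU := hx.2.2 U
    have hyU := hy.2.2 U
    have h1 : ∑ e ∈ E.filter (fun e => e ⊆ U), (a • x + b • y) e
        = a * ∑ e ∈ E.filter (fun e => e ⊆ U), x e
          + b * ∑ e ∈ E.filter (fun e => e ⊆ U), y e := by
      simp only [Pi.add_apply, Pi.smul_apply, smul_eq_mul]
      rw [Finset.sum_add_distrib, Finset.mul_sum, Finset.mul_sum]
    rw [h1]
    nlinarith

lemma indicator_mem (E : Finset (Finset V)) (hE : ∀ e ∈ E, e.card = 2)
    (F' : Finset (Finset V)) (hF : F' ⊆ E) (hISF : IsSingleCycleForest (pairGraph F')) :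
    Pm E (fun e => if e ∈ F' then (1 : ℝ) else 0) := by
  have h2 : ∀ g ∈ F', g.card = 2 := fun g hg => hE g (hF hg)
  refine ⟨fun e he => ?_, fun e he => ?_, fun U => ?_⟩
  · by_cases h : e ∈ F' <;> simp [h]
  · have : e ∉ F' := fun h => he (hF h)
    simp [this]
  · set S := F'.filter (fun e => e ⊆ U) with hS
    have hsum : ∑ e ∈ E.filter (fun e => e ⊆ U), (if e ∈ F' then (1:ℝ) else 0) = S.card := by
      rw [Finset.sum_ite_mem]
      have : E.filter (fun e => e ⊆ U) ∩ F' = S := by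
        ext e
        simp only [Finset.mem_inter, Finset.mem_filter, hS]
        exact ⟨fun ⟨⟨_, hsub⟩, hf⟩ => ⟨hf, hsub⟩, fun ⟨hf, hsub⟩ => ⟨⟨hF hf, hsub⟩, hf⟩⟩
      rw [this]
      simp
    rw [hsum]
    have hkey : S.card ≤ (vtx S).card := key h2 hISF (Finset.filter_subset _ _)
    have hvtx : vtx S ⊆ U := by
      intro v hv
      obtain ⟨e, he, hve⟩ := mem_vtx.mp hv
      exact (Finset.mem_filter.mp he).2 hve
    exact_mod_cast hkey.trans (Finset.card_le_card hvtx)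

lemma integral_mem (E : Finset (Finset V)) (hE : ∀ e ∈ E, e.card = 2) (x : Finset V → ℝ)
    (hx : Pm E x) (hint : ∀ e ∈ E, x e = 0 ∨ x e = 1) :
    ∃ F' : Finset (Finset V), F' ⊆ E ∧ IsSingleCycleForest (pairGraph F') ∧
      x = fun e => if e ∈ F' then (1 : ℝ) else 0 := by
  set F' := E.filter (fun e => x e = 1) with hF'
  have hFE : F' ⊆ E := Finset.filter_subset _ _
  have h2 : ∀ g ∈ F', g.card = 2 := fun g hg => hE g (hFE hg)
  refine ⟨F', hFE, ?_, ?_⟩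
  · intro c
    rw [edge_count_translate F' h2 c, vertex_count_translate]
    set U := Finset.univ.filter (fun v => (pairGraph F').connectedComponentMk v = c) with hU
    have hsub : comC F' c ⊆ E.filter (fun e => e ⊆ U) := by
      intro e he
      obtain ⟨heF, hc⟩ := Finset.mem_filter.mp he
      refine Finset.mem_filter.mpr ⟨hFE heF, fun v hv => ?_⟩
      exact Finset.mem_filter.mpr ⟨Finset.mem_univ v, hc v hv⟩
    have hsub2 : comC F' c ⊆ F' := Finset.filter_subset _ _
    have hlb : ((comC F' c).card : ℝ) ≤ ∑ e ∈ E.filter (fun e => e ⊆ U), x e := by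
      calc ((comC F' c).card : ℝ) = ∑ e ∈ comC F' c, x e := by
            rw [Finset.sum_congr rfl (fun e he => (Finset.mem_filter.mp (hsub2 he)).2)]
            simp
        _ ≤ ∑ e ∈ E.filter (fun e => e ⊆ U), x e := by
            apply Finset.sum_le_sum_of_subset_of_nonneg hsub
            intro e he _
            exact (hx.1 e (Finset.mem_filter.mp he).1).1
    have := (hlb.trans (hx.2.2 U))
    exact_mod_cast this
  · funext e
    by_cases heE : e ∈ E
    · rcases hint e heE with h0 | h1
      · have : e ∉ F' := by
          simp only [hF', Finset.mem_filter]
          rintro ⟨-, h⟩; rw [h0] at h; norm_num at h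
        simp [this, h0]
      · have : e ∈ F' := Finset.mem_filter.mpr ⟨heE, h1⟩
        simp [this, h1]
    · have : e ∉ F' := fun h => heE (hFE h)
      simp [this, hx.2.1 e heE]


def tight (E : Finset (Finset V)) (x : Finset V → ℝ) (U : Finset V) : Prop :=
  ∑ e ∈ E.filter (fun e => e ⊆ U), x e = (U.card : ℝ)

noncomputable def fracs (E : Finset (Finset V)) (x : Finset V → ℝ) : Finset (Finset V) :=
  E.filter (fun e => x e ≠ 0 ∧ x e ≠ 1)

noncomputable def slacks (E : Finset (Finset V)) (x : Finset V → ℝ) : Finset (Finset V) :=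
  Finset.univ.filter (fun U => ¬ tight E x U)

noncomputable def measure' (E : Finset (Finset V)) (x : Finset V → ℝ) : ℕ :=
  (fracs E x).card * ((Finset.univ : Finset (Finset V)).card + 1) + (slacks E x).card

lemma filter_subset_inter (E : Finset (Finset V)) (U W : Finset V) :
    E.filter (fun e => e ⊆ U) ∩ E.filter (fun e => e ⊆ W) = E.filter (fun e => e ⊆ U ∩ W) := by
  ext e
  simp only [Finset.mem_inter, Finset.mem_filter, Finset.subset_inter_iff]
  tauto

lemma tight_inter {E : Finset (Finset V)} {x : Finset V → ℝ} (hx : Pm E x) {U W : Finset V}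
    (hU : tight E x U) (hW : tight E x W) : tight E x (U ∩ W) := by
  have hsum : ∑ e ∈ E.filter (fun e => e ⊆ U) ∪ E.filter (fun e => e ⊆ W), x e
      + ∑ e ∈ E.filter (fun e => e ⊆ U) ∩ E.filter (fun e => e ⊆ W), x e
      = ∑ e ∈ E.filter (fun e => e ⊆ U), x e + ∑ e ∈ E.filter (fun e => e ⊆ W), x e :=
    Finset.sum_union_inter
  have hsub : E.filter (fun e => e ⊆ U) ∪ E.filter (fun e => e ⊆ W)
      ⊆ E.filter (fun e => e ⊆ U ∪ W) := by
    intro e he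
    rcases Finset.mem_union.mp he with h | h <;>
      obtain ⟨heE, hes⟩ := Finset.mem_filter.mp h
    · exact Finset.mem_filter.mpr ⟨heE, hes.trans Finset.subset_union_left⟩
    · exact Finset.mem_filter.mpr ⟨heE, hes.trans Finset.subset_union_right⟩
  have hmono : ∑ e ∈ E.filter (fun e => e ⊆ U) ∪ E.filter (fun e => e ⊆ W), x e
      ≤ ∑ e ∈ E.filter (fun e => e ⊆ U ∪ W), x e := by
    apply Finset.sum_le_sum_of_subset_of_nonneg hsub
    intro e he _
    exact (hx.1 e (Finset.mem_filter.mp he).1).1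
  have hcardUW : ((U ∪ W).card : ℝ) + ((U ∩ W).card : ℝ) = (U.card : ℝ) + (W.card : ℝ) := by
    exact_mod_cast congrArg (Nat.cast (R := ℝ)) (Finset.card_union_add_card_inter U W)
  have h1 := hx.2.2 (U ∪ W)
  have h2 := hx.2.2 (U ∩ W)
  rw [filter_subset_inter] at hsum
  unfold tight at hU hW ⊢
  linarith

lemma tight_inf {E : Finset (Finset V)} {x : Finset V → ℝ} (hx : Pm E x)
    {fam : Finset (Finset V)} (hne : fam.Nonempty) (hfam : ∀ U ∈ fam, tight E x U) :
    tight E x (fam.inf id) := by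
  induction hne using Finset.Nonempty.cons_induction with
  | singleton U => simpa using hfam U (Finset.mem_singleton_self U)
  | cons U s hUs hs ih =>
    rw [Finset.inf_cons]
    exact tight_inter hx (hfam U (Finset.mem_cons_self U s))
      (ih (fun W hW => hfam W (Finset.mem_cons_of_mem hW)))

lemma exists_direction {E : Finset (Finset V)} {x : Finset V → ℝ} (hx : Pm E x)
    (hfr : (fracs E x).Nonempty) :
    ∃ d : Finset V → ℝ,
      (∀ e, d e = 0 ∨ d e = 1 ∨ d e = -1) ∧
      (∀ e, d e ≠ 0 → e ∈ fracs E x) ∧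
      (∀ U, tight E x U → ∑ e ∈ E.filter (fun e => e ⊆ U), d e = 0) ∧
      (∃ e₀, d e₀ ≠ 0) := by
  classical
  by_cases hall : ∀ e ∈ fracs E x, ∃ U, tight E x U ∧ e ⊆ U
  · -- every fractional edge is in some tight set
    set fam : Finset V → Finset (Finset V) :=
      fun e => Finset.univ.filter (fun U => tight E x U ∧ e ⊆ U) with hfam
    set Te : Finset V → Finset V := fun e => (fam e).inf id with hTe
    have hfamne : ∀ e ∈ fracs E x, (fam e).Nonempty := by
      intro e he
      obtain ⟨U, hU, heU⟩ := hall e he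
      exact ⟨U, Finset.mem_filter.mpr ⟨Finset.mem_univ U, hU, heU⟩⟩
    have hTtight : ∀ e ∈ fracs E x, tight E x (Te e) :=
      fun e he => tight_inf hx (hfamne e he) (fun U hU => (Finset.mem_filter.mp hU).2.1)
    have hTsub : ∀ e ∈ fracs E x, e ⊆ Te e := by
      intro e he
      show e ≤ (fam e).inf id
      refine Finset.le_inf (fun U hU => ?_)
      exact (Finset.mem_filter.mp hU).2.2
    have hTmin : ∀ e ∈ fracs E x, ∀ U, tight E x U → e ⊆ U → Te e ⊆ U := by
      intro e he U hU heU
      show (fam e).inf id ≤ U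
      exact Finset.inf_le (α := Finset V) (b := U)
        (Finset.mem_filter.mpr ⟨Finset.mem_univ U, hU, heU⟩)
    -- pick e₀ minimizing the cardinality of Te
    obtain ⟨e₀, he₀, hmin⟩ := Finset.exists_min_image (fracs E x) (fun e => (Te e).card) hfr
    -- there is another fractional edge inside Te e₀
    have hother : ∃ e₁ ∈ fracs E x, e₁ ≠ e₀ ∧ e₁ ⊆ Te e₀ := by
      by_contra hno
      push_neg at hno
      have htig := hTtight e₀ he₀
      unfold tight at htig
      set A := E.filter (fun e => e ⊆ Te e₀) with hA
      have he₀A : e₀ ∈ A :=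
        Finset.mem_filter.mpr ⟨(Finset.mem_filter.mp he₀).1, hTsub e₀ he₀⟩
      have hsplit : ∑ e ∈ A, x e = x e₀ + ∑ e ∈ A.erase e₀, x e :=
        (Finset.add_sum_erase A x he₀A).symm
      -- every other edge in A is integral
      have hint : ∀ e ∈ A.erase e₀, x e = 0 ∨ x e = 1 := by
        intro e he
        obtain ⟨hne, heA⟩ := Finset.mem_erase.mp he
        by_contra hcon
        push_neg at hcon
        have : e ∈ fracs E x :=
          Finset.mem_filter.mpr ⟨(Finset.mem_filter.mp heA).1, hcon.1, hcon.2⟩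
        exact hno e this hne (Finset.mem_filter.mp heA).2
      -- so the erased sum is a natural number
      have hsum_nat : ∑ e ∈ A.erase e₀, x e
          = (((A.erase e₀).filter (fun e => x e = 1)).card : ℝ) := by
        rw [Finset.card_filter]
        rw [Finset.sum_congr rfl (fun e he => ?_)]
        · push_cast
          rfl
        · rcases hint e he with h | h
          · simp [h]
          · simp [h]
      have hfrac := Finset.mem_filter.mp he₀
      have hx0 : x e₀ ≠ 0 := hfrac.2.1
      have hx1 : x e₀ ≠ 1 := hfrac.2.2
      have hxb := hx.1 e₀ hfrac.1
      -- x e₀ = (Te e₀).card - nat, an integer in (0,1), contradiction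
      have : x e₀ = ((Te e₀).card : ℝ) - (((A.erase e₀).filter (fun e => x e = 1)).card : ℝ) := by
        rw [hsplit, hsum_nat] at htig
        linarith
      have h0 : 0 < x e₀ := lt_of_le_of_ne hxb.1 (Ne.symm hx0)
      have h1 : x e₀ < 1 := lt_of_le_of_ne hxb.2 hx1
      rw [this] at h0 h1
      -- cast contradiction
      have hz : ((((Te e₀).card : ℤ) - (((A.erase e₀).filter (fun e => x e = 1)).card : ℤ) : ℤ) : ℝ)
          = ((Te e₀).card : ℝ) - (((A.erase e₀).filter (fun e => x e = 1)).card : ℝ) := by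
        push_cast; ring
      rw [← hz] at h0 h1
      set z : ℤ := ((Te e₀).card : ℤ) - (((A.erase e₀).filter (fun e => x e = 1)).card : ℤ)
      have hz0 : (0 : ℤ) < z := by exact_mod_cast h0
      have hz1 : z < 1 := by exact_mod_cast h1
      omega
    obtain ⟨e₁, he₁, hne₁, hsub₁⟩ := hother
    -- Te e₁ = Te e₀
    have hTe₁ : Te e₁ = Te e₀ := by
      have hsub : Te e₁ ⊆ Te e₀ := hTmin e₁ he₁ (Te e₀) (hTtight e₀ he₀) hsub₁
      exact Finset.eq_of_subset_of_card_le hsub (hmin e₁ he₁)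
    -- the direction
    refine ⟨fun e => if e = e₀ then 1 else if e = e₁ then -1 else 0, ?_, ?_, ?_, ?_⟩
    · intro e
      by_cases h0 : e = e₀
      · simp [h0]
      · by_cases h1 : e = e₁ <;> simp [h0, h1, hne₁]
    · intro e he
      by_cases h0 : e = e₀
      · subst h0; exact he₀
      · by_cases h1 : e = e₁
        · subst h1; exact he₁
        · simp [h0, h1] at he
    · intro U hU
      have hiff₀ : e₀ ⊆ U ↔ Te e₀ ⊆ U :=
        ⟨fun h => hTmin e₀ he₀ U hU h, fun h => (hTsub e₀ he₀).trans h⟩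
      have hiff₁ : e₁ ⊆ U ↔ Te e₀ ⊆ U := by
        rw [← hTe₁]
        exact ⟨fun h => hTmin e₁ he₁ U hU h, fun h => (hTsub e₁ he₁).trans h⟩
      by_cases hT : Te e₀ ⊆ U
      · have h₀U : e₀ ∈ E.filter (fun e => e ⊆ U) :=
          Finset.mem_filter.mpr ⟨(Finset.mem_filter.mp he₀).1, hiff₀.mpr hT⟩
        have h₁U : e₁ ∈ E.filter (fun e => e ⊆ U) :=
          Finset.mem_filter.mpr ⟨(Finset.mem_filter.mp he₁).1, hiff₁.mpr hT⟩
        rw [Finset.sum_eq_add_of_mem e₀ e₁ h₀U h₁U hne₁.symm ?_]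
        · simp [hne₁]
        · intro e _ he
          simp [he.1, he.2]
      · rw [Finset.sum_eq_zero]
        intro e heU
        have h0 : e ≠ e₀ := fun h => hT (hiff₀.mp (h ▸ (Finset.mem_filter.mp heU).2))
        have h1 : e ≠ e₁ := fun h => hT (hiff₁.mp (h ▸ (Finset.mem_filter.mp heU).2))
        simp [h0, h1]
    · exact ⟨e₀, by simp⟩
  · -- some fractional edge lies in no tight set
    push_neg at hall
    obtain ⟨e₀, he₀, hno⟩ := hall
    refine ⟨fun e => if e = e₀ then 1 else 0, ?_, ?_, ?_, ⟨e₀, by simp⟩⟩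
    · intro e
      by_cases h : e = e₀ <;> simp [h]
    · intro e he
      by_cases h : e = e₀
      · subst h; exact he₀
      · simp [h] at he
    · intro U hU
      rw [Finset.sum_eq_zero]
      intro e heU
      have : e ≠ e₀ := by
        rintro rfl
        exact hno U hU (Finset.mem_filter.mp heU).2
      simp [this]


lemma perturb {E : Finset (Finset V)} {x d : Finset V → ℝ} (hx : Pm E x)
    (hd01 : ∀ e, d e = 0 ∨ d e = 1 ∨ d e = -1)
    (hsupp : ∀ e, d e ≠ 0 → e ∈ fracs E x)
    (htight : ∀ U, tight E x U → ∑ e ∈ E.filter (fun e => e ⊆ U), d e = 0)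
    (hne : ∃ e₀, d e₀ ≠ 0) :
    ∃ ε : ℝ, 0 < ε ∧ Pm E (fun e => x e + ε * d e) ∧
      measure' E (fun e => x e + ε * d e) < measure' E x := by
  classical
  obtain ⟨e₀, he₀⟩ := hne
  set D : Finset V → ℝ := fun U => ∑ e ∈ E.filter (fun e => e ⊆ U), d e with hD
  set O₁ := (E.filter (fun e => d e = 1)).image (fun e => 1 - x e) with hO₁
  set O₂ := (E.filter (fun e => d e = -1)).image (fun e => x e) with hO₂
  set O₃ := ((Finset.univ : Finset (Finset V)).filter (fun U => 0 < D U)).image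
      (fun U => ((U.card : ℝ) - ∑ e ∈ E.filter (fun e => e ⊆ U), x e) / D U) with hO₃
  set O := O₁ ∪ O₂ ∪ O₃ with hO
  have he₀E : e₀ ∈ E := (Finset.mem_filter.mp (hsupp e₀ he₀)).1
  have hOne : O.Nonempty := by
    rcases hd01 e₀ with h | h | h
    · exact absurd h he₀
    · exact ⟨1 - x e₀, Finset.mem_union.mpr (Or.inl (Finset.mem_union.mpr (Or.inl
        (Finset.mem_image_of_mem _ (Finset.mem_filter.mpr ⟨he₀E, h⟩)))))⟩
    · exact ⟨x e₀, Finset.mem_union.mpr (Or.inl (Finset.mem_union.mpr (Or.inr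
        (Finset.mem_image_of_mem _ (Finset.mem_filter.mpr ⟨he₀E, h⟩)))))⟩
  set ε := O.min' hOne with hε
  -- positivity of all elements of O
  have hpos : ∀ t ∈ O, 0 < t := by
    intro t ht
    rcases Finset.mem_union.mp ht with h | h
    · rcases Finset.mem_union.mp h with h | h
      · obtain ⟨e, he, rfl⟩ := Finset.mem_image.mp h
        obtain ⟨heE, hde⟩ := Finset.mem_filter.mp he
        have hfr := hsupp e (by rw [hde]; norm_num)
        have := (hx.1 e heE).2
        have hne1 := (Finset.mem_filter.mp hfr).2.2
        have : x e < 1 := lt_of_le_of_ne this hne1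
        linarith
      · obtain ⟨e, he, rfl⟩ := Finset.mem_image.mp h
        obtain ⟨heE, hde⟩ := Finset.mem_filter.mp he
        have hfr := hsupp e (by rw [hde]; norm_num)
        have := (hx.1 e heE).1
        have hne0 := (Finset.mem_filter.mp hfr).2.1
        exact lt_of_le_of_ne this (Ne.symm hne0)
    · obtain ⟨U, hU, rfl⟩ := Finset.mem_image.mp h
      have hDU : 0 < D U := (Finset.mem_filter.mp hU).2
      have hnt : ¬ tight E x U := fun ht => by
        have h0 : D U = 0 := htight U ht
        rw [h0] at hDU; exact lt_irrefl _ hDU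
      have hlt : ∑ e ∈ E.filter (fun e => e ⊆ U), x e < (U.card : ℝ) :=
        lt_of_le_of_ne (hx.2.2 U) hnt
      exact div_pos (by linarith) hDU
  have hεpos : 0 < ε := hpos _ (O.min'_mem hOne)
  have hεle : ∀ t ∈ O, ε ≤ t := fun t ht => O.min'_le t ht
  set y : Finset V → ℝ := fun e => x e + ε * d e with hy
  -- sums transform linearly
  have hsum : ∀ U : Finset V, ∑ e ∈ E.filter (fun e => e ⊆ U), y e
      = ∑ e ∈ E.filter (fun e => e ⊆ U), x e + ε * D U := by
    intro U
    rw [hD, Finset.mul_sum, ← Finset.sum_add_distrib]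
  -- membership in the polytope
  have hyP : Pm E y := by
    refine ⟨fun e he => ?_, fun e he => ?_, fun U => ?_⟩
    · rcases hd01 e with h | h | h
      · rw [hy]; simp only [h, mul_zero, add_zero]; exact hx.1 e he
      · have hle : ε ≤ 1 - x e := hεle _ (Finset.mem_union.mpr (Or.inl (Finset.mem_union.mpr
          (Or.inl (Finset.mem_image_of_mem _ (Finset.mem_filter.mpr ⟨he, h⟩))))))
        have := (hx.1 e he).1
        constructor
        · rw [hy]; simp only [h, mul_one]; linarith
        · rw [hy]; simp only [h, mul_one]; linarith
      · have hle : ε ≤ x e := hεle _ (Finset.mem_union.mpr (Or.inl (Finset.mem_union.mpr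
          (Or.inr (Finset.mem_image_of_mem _ (Finset.mem_filter.mpr ⟨he, h⟩))))))
        have := (hx.1 e he).2
        constructor
        · rw [hy]; simp only [h]; linarith
        · rw [hy]; simp only [h]; linarith
    · have hde : d e = 0 := by
        by_contra hcon
        exact he (Finset.mem_filter.mp (hsupp e hcon)).1
      rw [hy]; simp only [hde, mul_zero, add_zero]; exact hx.2.1 e he
    · rw [hsum U]
      by_cases hDU : 0 < D U
      · have hle : ε ≤ ((U.card : ℝ) - ∑ e ∈ E.filter (fun e => e ⊆ U), x e) / D U :=
          hεle _ (Finset.mem_union.mpr (Or.inr (Finset.mem_image_of_mem _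
            (Finset.mem_filter.mpr ⟨Finset.mem_univ U, hDU⟩))))
        have h2 : ε * D U ≤ (U.card : ℝ) - ∑ e ∈ E.filter (fun e => e ⊆ U), x e := by
          rw [← le_div_iff₀ hDU]
          exact hle
        linarith
      · push_neg at hDU
        have : ε * D U ≤ 0 := mul_nonpos_of_nonneg_of_nonpos (le_of_lt hεpos) hDU
        have := hx.2.2 U
        linarith
  -- fractional set shrinks (weakly)
  have hfr_sub : fracs E y ⊆ fracs E x := by
    intro e he
    obtain ⟨heE, hy0, hy1⟩ := Finset.mem_filter.mp he
    by_contra hcon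
    have hde : d e = 0 := by
      by_contra hd
      exact hcon (hsupp e hd)
    rw [hy] at hy0 hy1
    simp only [hde, mul_zero, add_zero] at hy0 hy1
    have : e ∈ fracs E x := Finset.mem_filter.mpr ⟨heE, hy0, hy1⟩
    exact hcon this
  -- tight sets are preserved
  have htight_pres : ∀ U, tight E x U → tight E y U := by
    intro U hU
    unfold tight
    have h0 : D U = 0 := htight U hU
    rw [hsum U, h0, mul_zero, add_zero]
    exact hU
  have hsl_sub : slacks E y ⊆ slacks E x := by
    intro U hU
    obtain ⟨hU1, hU2⟩ := Finset.mem_filter.mp hU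
    refine Finset.mem_filter.mpr ⟨hU1, fun hc => hU2 (htight_pres U hc)⟩
  -- strict decrease of measure
  have hKbound : (slacks E y).card ≤ (Finset.univ : Finset (Finset V)).card :=
    Finset.card_le_card (Finset.filter_subset _ _)
  have hstrict : measure' E y < measure' E x := by
    have hmem := O.min'_mem hOne
    rw [← hε] at hmem
    rcases Finset.mem_union.mp hmem with h | h
    · -- a box constraint becomes tight : a fractional edge becomes integral
      have : ∃ e, e ∈ fracs E x ∧ e ∉ fracs E y := by
        rcases Finset.mem_union.mp h with h | h
        · obtain ⟨e, he, heq⟩ := Finset.mem_image.mp h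
          obtain ⟨heE, hde⟩ := Finset.mem_filter.mp he
          refine ⟨e, hsupp e (by rw [hde]; norm_num), ?_⟩
          intro hcon
          have : y e = 1 := by rw [hy]; simp only [hde, mul_one]; linarith
          exact (Finset.mem_filter.mp hcon).2.2 this
        · obtain ⟨e, he, heq⟩ := Finset.mem_image.mp h
          obtain ⟨heE, hde⟩ := Finset.mem_filter.mp he
          refine ⟨e, hsupp e (by rw [hde]; norm_num), ?_⟩
          intro hcon
          have : y e = 0 := by rw [hy]; simp only [hde]; linarith
          exact (Finset.mem_filter.mp hcon).2.1 this
      obtain ⟨e, heX, heY⟩ := this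
      have hcard : (fracs E y).card < (fracs E x).card :=
        Finset.card_lt_card (Finset.ssubset_iff_of_subset hfr_sub |>.mpr ⟨e, heX, heY⟩)
      unfold measure'
      have h1 : (fracs E y).card + 1 ≤ (fracs E x).card := hcard
      nlinarith [hKbound, Nat.zero_le (slacks E x).card]
    · -- a U constraint becomes tight
      obtain ⟨U, hU, heq⟩ := Finset.mem_image.mp h
      have hDU : 0 < D U := (Finset.mem_filter.mp hU).2
      have hslX : U ∈ slacks E x := by
        refine Finset.mem_filter.mpr ⟨Finset.mem_univ U, fun hc => ?_⟩
        have h0 : D U = 0 := htight U hc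
        rw [h0] at hDU; exact lt_irrefl _ hDU
      have hslY : U ∉ slacks E y := by
        simp only [slacks, Finset.mem_filter, not_and, not_not]
        intro _
        unfold tight
        rw [hsum U, ← heq]
        field_simp
        ring
      have hcard : (slacks E y).card < (slacks E x).card :=
        Finset.card_lt_card (Finset.ssubset_iff_of_subset hsl_sub |>.mpr ⟨U, hslX, hslY⟩)
      unfold measure'
      have h2 : (fracs E y).card ≤ (fracs E x).card := Finset.card_le_card hfr_sub
      nlinarith
  exact ⟨ε, hεpos, hyP, hstrict⟩


lemma main_induction (E : Finset (Finset V)) (hE : ∀ e ∈ E, e.card = 2) :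
    ∀ (n : ℕ) (x : Finset V → ℝ), Pm E x → measure' E x = n →
      x ∈ convexHull ℝ {x : Finset V → ℝ | ∃ F' : Finset (Finset V), F' ⊆ E ∧
        IsSingleCycleForest (pairGraph F') ∧
        x = fun e => if e ∈ F' then (1 : ℝ) else 0} := by
  intro n
  induction n using Nat.strong_induction_on with
  | _ n ih =>
    intro x hx hm
    rcases (fracs E x).eq_empty_or_nonempty with hfr | hfr
    · -- integral point
      have hint : ∀ e ∈ E, x e = 0 ∨ x e = 1 := by
        intro e he
        by_contra hcon
        push_neg at hcon
        have : e ∈ fracs E x := Finset.mem_filter.mpr ⟨he, hcon.1, hcon.2⟩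
        simp [hfr] at this
      exact subset_convexHull ℝ _ (integral_mem E hE x hx hint)
    · obtain ⟨d, hd01, hsupp, htight, hdne⟩ := exists_direction hx hfr
      obtain ⟨ε₁, hε₁, hyP, hym⟩ := perturb hx hd01 hsupp htight hdne
      have hd01' : ∀ e, -d e = 0 ∨ -d e = 1 ∨ -d e = -1 := by
        intro e
        rcases hd01 e with h | h | h <;> simp [h]
      have hsupp' : ∀ e, -d e ≠ 0 → e ∈ fracs E x := by
        intro e he
        exact hsupp e (fun h => he (by rw [h, neg_zero]))
      have htight' : ∀ U, tight E x U → ∑ e ∈ E.filter (fun e => e ⊆ U), -d e = 0 := by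
        intro U hU
        rw [Finset.sum_neg_distrib, htight U hU, neg_zero]
      have hdne' : ∃ e₀, -d e₀ ≠ 0 := by
        obtain ⟨e₀, h⟩ := hdne
        exact ⟨e₀, by simpa using h⟩
      obtain ⟨ε₂, hε₂, hzP, hzm⟩ := perturb hx hd01' hsupp' htight' hdne'
      set y := fun e => x e + ε₁ * d e with hy
      set z := fun e => x e + ε₂ * (-d e) with hz
      have hyH := ih _ (hm ▸ hym) y hyP rfl
      have hzH := ih _ (hm ▸ hzm) z hzP rfl
      have hsumpos : 0 < ε₁ + ε₂ := by linarith
      set a := ε₂ / (ε₁ + ε₂) with ha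
      set b := ε₁ / (ε₁ + ε₂) with hb
      have ha0 : 0 ≤ a := le_of_lt (div_pos hε₂ hsumpos)
      have hb0 : 0 ≤ b := le_of_lt (div_pos hε₁ hsumpos)
      have hab : a + b = 1 := by
        rw [ha, hb, ← add_div, add_comm]
        field_simp
      have hcomb : a • y + b • z = x := by
        funext e
        simp only [Pi.add_apply, Pi.smul_apply, smul_eq_mul, hy, hz, ha, hb]
        field_simp
        ring
      rw [← hcomb]
      exact (convex_convexHull ℝ _) hyH hzH ha0 hb0 hab

theorem final {E : Finset (Finset V)} (hE : ∀ e ∈ E, e.card = 2) :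
    {x : Finset V → ℝ |
        (∀ e ∈ E, 0 ≤ x e ∧ x e ≤ 1) ∧ (∀ e ∉ E, x e = 0) ∧
        ∀ U : Finset V, ∑ e ∈ E.filter (fun e => e ⊆ U), x e ≤ (U.card : ℝ)} =
      convexHull ℝ
        {x : Finset V → ℝ | ∃ F' : Finset (Finset V), F' ⊆ E ∧
          IsSingleCycleForest (pairGraph F') ∧
          x = fun e => if e ∈ F' then (1 : ℝ) else 0} := by
  apply Set.Subset.antisymm
  · intro x hx
    exact main_induction E hE (measure' E x) x hx rfl
  · refine convexHull_min ?_ (convex_Pm E)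
    rintro s ⟨F', hF, hISF, rfl⟩
    exact indicator_mem E hE F' hF hISF


end SCF

/-- The polytope `{x ∈ [0,1]^E : Σ_{e ∈ E(U)} x_e ≤ |U| for all U ⊆ V}` equals the convex
hull of the indicator vectors of single-cycle forests of `G`. -/
theorem stmt9 {V : Type*} [Fintype V] [DecidableEq V] (E : Finset (Finset V))
    (hE : ∀ e ∈ E, e.card = 2) :
    {x : Finset V → ℝ |
        (∀ e ∈ E, 0 ≤ x e ∧ x e ≤ 1) ∧ (∀ e ∉ E, x e = 0) ∧
        ∀ U : Finset V, ∑ e ∈ E.filter (fun e => e ⊆ U), x e ≤ (U.card : ℝ)} =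
      convexHull ℝ
        {x : Finset V → ℝ | ∃ F' : Finset (Finset V), F' ⊆ E ∧
          IsSingleCycleForest (pairGraph F') ∧
          x = fun e => if e ∈ F' then (1 : ℝ) else 0} := by
  exact SCF.final hE
end

section
/- Consider the two-layer region graph with vertices V = {1,2,3,4,5} and factors α₁ = {1,2,3}, α₂ = {2,3,4}, α₃ = {3,4,5}. The point ρ = (1, 1/2, 1) satisfies Σ_{αᵢ : αᵢ∩U ≠ ∅} (|αᵢ ∩ U| − 1) ρᵢ ≤ |U| for all U ⊆ V, but ρ is not in the convex hull of {1_{F'} : F' ⊆ {α₁,α₂,α₃}, the incidence graph of F' with its incident vertices is a single-cycle forest}. -/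
open scoped Classical

/-- The factors of the example: `α₁ = {1,2,3}`, `α₂ = {2,3,4}`, `α₃ = {3,4,5}` (as subsets
of `{1,…,5}`, here indexed by `Fin 5`). -/
def exFactors : Fin 3 → Finset (Fin 5) := ![{0, 1, 2}, {1, 2, 3}, {2, 3, 4}]

abbrev Gfull := incidenceGraph exFactors (Finset.univ : Finset (Fin 3))

instance : DecidableRel Gfull.Adj := fun x y =>
  inferInstanceAs (Decidable
    ((∃ s i, x = Sum.inl s ∧ y = Sum.inr i ∧ i ∈ (Finset.univ : Finset (Fin 3)) ∧
        s ∈ exFactors i) ∨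
     (∃ s i, y = Sum.inl s ∧ x = Sum.inr i ∧ i ∈ (Finset.univ : Finset (Fin 3)) ∧
        s ∈ exFactors i)))

lemma adj_li (s : Fin 5) (i : Fin 3) (h : s ∈ exFactors i) :
    Gfull.Adj (Sum.inl s) (Sum.inr i) :=
  Or.inl ⟨s, i, rfl, rfl, Finset.mem_univ _, h⟩

lemma reach_all (v : Fin 5 ⊕ Fin 3) : Gfull.Reachable v (Sum.inl 2) := by
  have h0 : Gfull.Reachable (Sum.inr 0) (Sum.inl 2) := (adj_li 2 0 (by decide)).symm.reachable
  have h1 : Gfull.Reachable (Sum.inr 1) (Sum.inl 2) := (adj_li 2 1 (by decide)).symm.reachable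
  have h2 : Gfull.Reachable (Sum.inr 2) (Sum.inl 2) := (adj_li 2 2 (by decide)).symm.reachable
  match v with
  | Sum.inl 0 => exact (adj_li 0 0 (by decide)).reachable.trans h0
  | Sum.inl 1 => exact (adj_li 1 0 (by decide)).reachable.trans h0
  | Sum.inl 2 => exact SimpleGraph.Reachable.refl _
  | Sum.inl 3 => exact (adj_li 3 1 (by decide)).reachable.trans h1
  | Sum.inl 4 => exact (adj_li 4 2 (by decide)).reachable.trans h2
  | Sum.inr 0 => exact h0
  | Sum.inr 1 => exact h1
  | Sum.inr 2 => exact h2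

lemma not_scf : ¬ IsSingleCycleForest Gfull := by
  intro h
  have hc := h (Gfull.connectedComponentMk (Sum.inl 2))
  have hall : ∀ v, Gfull.connectedComponentMk v = Gfull.connectedComponentMk (Sum.inl 2) :=
    fun v => SimpleGraph.ConnectedComponent.sound (reach_all v)
  have hV : {v : Fin 5 ⊕ Fin 3 |
      Gfull.connectedComponentMk v = Gfull.connectedComponentMk (Sum.inl 2)} = Set.univ := by
    ext v; simp only [Set.mem_setOf_eq, Set.mem_univ, iff_true]; exact hall v
  have hE : {e ∈ Gfull.edgeSet | ∀ v ∈ e,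
      Gfull.connectedComponentMk v = Gfull.connectedComponentMk (Sum.inl 2)} =
      Gfull.edgeSet := by
    ext e; simp only [Set.mem_setOf_eq, Set.mem_sep_iff]
    exact ⟨fun ⟨h1, _⟩ => h1, fun h1 => ⟨h1, fun v _ => hall v⟩⟩
  rw [hV, hE] at hc
  have hVcard : (Set.univ : Set (Fin 5 ⊕ Fin 3)).ncard = 8 := by
    rw [Set.ncard_univ]; simp [Nat.card_eq_fintype_card]
  have hEcard : Gfull.edgeSet.ncard = 9 := by
    rw [← SimpleGraph.coe_edgeFinset, Set.ncard_coe_finset]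
    decide
  rw [hVcard, hEcard] at hc
  omega

/-- For the two-layer region graph with `V = {1,…,5}` and factors `{1,2,3}, {2,3,4}, {3,4,5}`,
the point `ρ = (1, 1/2, 1)` lies in the polytope of concavity `ℂ` but not in the convex hull
of indicator vectors of single-cycle-forest factor subsets. -/
theorem stmt11 :
    (∀ U : Finset (Fin 5),
        ∑ i ∈ Finset.univ.filter (fun i => (exFactors i ∩ U).Nonempty),
            (((exFactors i ∩ U).card : ℝ) - 1) * (![1, 1/2, 1] : Fin 3 → ℝ) i
          ≤ (U.card : ℝ)) ∧
    (![1, 1/2, 1] : Fin 3 → ℝ) ∉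
      convexHull ℝ
        {x : Fin 3 → ℝ | ∃ S : Finset (Fin 3),
          IsSingleCycleForest (incidenceGraph exFactors S) ∧
          x = fun i => if i ∈ S then (1 : ℝ) else 0} := by
  constructor
  · intro U
    rw [Finset.sum_filter, Fin.sum_univ_three]
    fin_cases U <;> simp [exFactors, Finset.sum_filter, Fin.sum_univ_three] <;> norm_num
  · intro hmem
    set f : (Fin 3 → ℝ) →ₗ[ℝ] ℝ :=
      (LinearMap.proj 0 : (Fin 3 → ℝ) →ₗ[ℝ] ℝ) + LinearMap.proj 1 + LinearMap.proj 2 with hf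
    have hconv : Convex ℝ {x : Fin 3 → ℝ | f x ≤ 2} := convex_halfSpace_le f.isLinear 2
    have hsub : {x : Fin 3 → ℝ | ∃ S : Finset (Fin 3),
        IsSingleCycleForest (incidenceGraph exFactors S) ∧
        x = fun i => if i ∈ S then (1 : ℝ) else 0} ⊆ {x | f x ≤ 2} := by
      rintro x ⟨S, hS, rfl⟩
      have hSne : S ≠ Finset.univ := by
        rintro rfl
        exact not_scf hS
      simp only [Set.mem_setOf_eq, hf, LinearMap.add_apply, LinearMap.proj_apply]
      by_cases h0 : (0 : Fin 3) ∈ S <;> by_cases h1 : (1 : Fin 3) ∈ S <;>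
        by_cases h2 : (2 : Fin 3) ∈ S <;> simp [h0, h1, h2] <;> try norm_num
      exact absurd (by ext i; fin_cases i <;> simp [h0, h1, h2]) hSne
    have := convexHull_min hsub hconv hmem
    simp [hf, LinearMap.proj_apply] at this
    norm_num at this
end

section
/- Let R be a finite poset (of regions) and ρ : R → ℝ a weight function such that Σ_{s ∈ F(S)} ρ_s ≥ 0 for all S ⊆ R, where F(S) = {t ∈ R : ∃ s ∈ S, s ≤ t}. Then, in the bipartite graph whose parts are V₁ = {r : ρ_r < 0} and V₂ = {r : ρ_r > 0}, with edges (s,t) whenever s < t, there exists a nonnegative edge labeling γ with Σ_{t : s<t, ρ_t>0} γ(s,t) = −ρ_s for all s ∈ V₁ and Σ_{s : s<t, ρ_s<0} γ(s,t) ≤ ρ_t for all t ∈ V₂. -/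
open scoped Classical
open Finset in
lemma gale {ι : Type*} [Fintype ι] (E : ι → ι → Prop) (d b : ι → ℝ)
    (hd : ∀ a, 0 ≤ d a) (hb : ∀ x, 0 ≤ b x)
    (hall : ∀ S : Finset ι,
      ∑ a ∈ S, d a ≤ ∑ x ∈ univ.filter (fun x => ∃ a ∈ S, E a x), b x) :
    ∃ γ : ι × ι → ℝ, (∀ p, 0 ≤ γ p) ∧ (∀ a x, γ (a, x) ≠ 0 → E a x) ∧
      (∀ a, ∑ x, γ (a, x) = d a) ∧ (∀ x, ∑ a, γ (a, x) ≤ b x) := by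
  set K : Set (ι × ι → ℝ) :=
    {γ | (∀ p, 0 ≤ γ p) ∧ (∀ a x, ¬ E a x → γ (a, x) = 0) ∧
      (∀ a, ∑ x, γ (a, x) ≤ d a) ∧ (∀ x, ∑ a, γ (a, x) ≤ b x)} with hKdef
  have hclosed : IsClosed K := by
    rw [hKdef, Set.setOf_and, Set.setOf_and, Set.setOf_and]
    refine IsClosed.inter ?_ (IsClosed.inter ?_ (IsClosed.inter ?_ ?_))
    · rw [Set.setOf_forall]
      exact isClosed_iInter fun p => isClosed_le continuous_const (continuous_apply p)
    · rw [Set.setOf_forall]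
      refine isClosed_iInter fun a => ?_
      rw [Set.setOf_forall]
      refine isClosed_iInter fun x => ?_
      by_cases hE : E a x
      · simp [hE]
      · simp only [hE, not_false_iff, true_implies]
        exact isClosed_eq (continuous_apply _) continuous_const
    · rw [Set.setOf_forall]
      exact isClosed_iInter fun a =>
        isClosed_le (continuous_finset_sum univ fun x _ => continuous_apply (a, x)) continuous_const
    · rw [Set.setOf_forall]
      exact isClosed_iInter fun x =>
        isClosed_le (continuous_finset_sum univ fun a _ => continuous_apply (a, x)) continuous_const
  have hbounded : K ⊆ Set.Icc (0 : ι × ι → ℝ) (fun p => d p.1) := by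
    rintro γ ⟨hpos, -, hrow, -⟩
    refine ⟨fun p => hpos p, fun p => ?_⟩
    calc γ p = γ (p.1, p.2) := by rw [Prod.mk.eta]
    _ ≤ ∑ x, γ (p.1, x) := Finset.single_le_sum (fun x _ => hpos _) (mem_univ p.2)
    _ ≤ d p.1 := hrow p.1
  have hKcompact : IsCompact K := (isCompact_Icc).of_isClosed_subset hclosed hbounded
  have hKne : K.Nonempty :=
    ⟨0, fun p => le_rfl, fun a x _ => rfl, by simpa using hd, by simpa using hb⟩
  have hcont : ContinuousOn (fun γ : ι × ι → ℝ => ∑ p, γ p) K :=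
    (continuous_finset_sum univ fun p _ => continuous_apply p).continuousOn
  obtain ⟨γ, hγK, hmax⟩ := hKcompact.exists_isMaxOn hKne hcont
  obtain ⟨hpos, hsupp, hrow, hcol⟩ := hγK
  have main : ∀ a, ∑ x, γ (a, x) = d a := by
    by_contra hmain
    push_neg at hmain
    obtain ⟨a₀, ha₀⟩ := hmain
    have hlt : ∑ x, γ (a₀, x) < d a₀ := lt_of_le_of_ne (hrow a₀) ha₀
    set step : ι → ι → Prop := fun a a' => ∃ x, E a x ∧ 0 < γ (a', x) with hstep
    -- augmenting-path lemma
    have key : ∀ a', Relation.ReflTransGen step a₀ a' →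
        ∃ δ c : ℝ, 0 < δ ∧ 0 ≤ c ∧ ∀ ε : ℝ, 0 < ε → ε ≤ δ →
          ∃ γ' : ι × ι → ℝ, (∀ p, 0 ≤ γ' p) ∧ (∀ a x, ¬ E a x → γ' (a, x) = 0) ∧
            (∀ x, ∑ a, γ' (a, x) = ∑ a, γ (a, x)) ∧
            (∀ a, ∑ x, γ' (a, x) =
              ∑ x, γ (a, x) + (if a = a₀ then ε else 0) - (if a = a' then ε else 0)) ∧
            (∀ p, γ p - c * ε ≤ γ' p) := by
      intro a' h
      induction h with
      | refl =>
          exact ⟨1, 0, one_pos, le_rfl, fun ε hε hε1 =>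
            ⟨γ, hpos, hsupp, fun x => rfl, fun a => by simp, fun p => by simp⟩⟩
      | @tail a' a'' hr hstep' ih =>
          obtain ⟨x, hEx, hγpos⟩ := hstep'
          by_cases hca : a'' = a₀
          · subst hca
            exact ⟨1, 0, one_pos, le_rfl, fun ε hε hε1 =>
              ⟨γ, hpos, hsupp, fun x => rfl, fun a => by simp, fun p => by simp⟩⟩
          by_cases hcb : a'' = a'
          · subst hcb; exact ih
          obtain ⟨δ, c, hδ, hc, H⟩ := ih
          refine ⟨min δ (γ (a'', x) / (c + 1)), c + 1, lt_min hδ (div_pos hγpos (by linarith)),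
            by linarith, fun ε hε hεle => ?_⟩
          obtain ⟨γ', h1, h2, h3, h4, h5⟩ :=
            H ε hε (le_trans hεle (min_le_left _ _))
          have hεx : ε * (c + 1) ≤ γ (a'', x) := by
            have := le_trans hεle (min_le_right _ _)
            rwa [le_div_iff₀ (by linarith)] at this
          refine ⟨fun p => γ' p + (if p = (a', x) then ε else 0)
              - (if p = (a'', x) then ε else 0), ?_, ?_, ?_, ?_, ?_⟩
          · intro p
            dsimp only
            by_cases hp : p = (a'', x)
            · subst hp
              have hne : ((a'', x) : ι × ι) ≠ (a', x) := by
                simp [Prod.ext_iff, hcb]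
              have h5' := h5 (a'', x)
              rw [if_neg hne, if_pos rfl]
              nlinarith
            · rw [if_neg hp, sub_zero]
              split_ifs <;> linarith [h1 p]
          · intro a y hEa
            have hne1 : ((a, y) : ι × ι) ≠ (a', x) := by
              rintro h; rw [Prod.mk.injEq] at h; obtain ⟨rfl, rfl⟩ := h; exact hEa hEx
            have hne2 : ((a, y) : ι × ι) ≠ (a'', x) := by
              rintro h; rw [Prod.mk.injEq] at h; obtain ⟨rfl, rfl⟩ := h
              exact absurd (hsupp _ _ hEa) (ne_of_gt hγpos)
            simp [hne1, hne2, h2 a y hEa]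
          · intro y
            rw [Finset.sum_sub_distrib, Finset.sum_add_distrib, h3 y]
            have e1 : ∑ a, (if (a, y) = (a', x) then ε else 0)
                = ∑ a, (if y = x then (if a = a' then ε else 0) else 0) := by
              apply Finset.sum_congr rfl; intro a _
              by_cases hy : y = x <;> by_cases ha : a = a' <;> simp [Prod.ext_iff, hy, ha]
            have e2 : ∑ a, (if (a, y) = (a'', x) then ε else 0)
                = ∑ a, (if y = x then (if a = a'' then ε else 0) else 0) := by
              apply Finset.sum_congr rfl; intro a _
              by_cases hy : y = x <;> by_cases ha : a = a'' <;> simp [Prod.ext_iff, hy, ha]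
            rw [e1, e2]
            by_cases hy : y = x <;> simp [hy, Finset.sum_ite_eq']
          · intro a
            rw [Finset.sum_sub_distrib, Finset.sum_add_distrib, h4 a]
            have e1 : ∑ y, (if (a, y) = (a', x) then ε else 0)
                = if a = a' then ε else 0 := by
              by_cases ha : a = a' <;> simp [Prod.ext_iff, ha, Finset.sum_ite_eq']
            have e2 : ∑ y, (if (a, y) = (a'', x) then ε else 0)
                = if a = a'' then ε else 0 := by
              by_cases ha : a = a'' <;> simp [Prod.ext_iff, ha, Finset.sum_ite_eq']
            rw [e1, e2]
            by_cases h1' : a = a₀ <;> by_cases h2' : a = a' <;> by_cases h3' : a = a'' <;>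
              simp [h1', h2', h3'] <;> ring_nf <;>
              first
                | rfl
                | (exfalso; first
                    | exact hca (h3' ▸ h1' ▸ rfl)
                    | exact hcb (h3' ▸ h2' ▸ rfl)
                    | skip)
          · intro p
            dsimp only
            have := h5 p
            have h6 : (0:ℝ) ≤ if p = (a', x) then ε else 0 := by positivity
            have h7 : (if p = (a'', x) then ε else 0) ≤ ε := by
              by_cases hp : p = (a'', x) <;> simp [hp, le_of_lt hε]
            nlinarith
    have sat : ∀ a', Relation.ReflTransGen step a₀ a' → ∀ x, E a' x →
        ∑ a, γ (a, x) = b x := by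
      intro a' hr x hEx
      by_contra hnex
      have hlt2 : ∑ a, γ (a, x) < b x := lt_of_le_of_ne (hcol x) hnex
      obtain ⟨δ, c, hδ, hc, H⟩ := key a' hr
      set ε := min δ (min (d a₀ - ∑ y, γ (a₀, y)) (b x - ∑ a, γ (a, x))) with hεdef
      have hε : 0 < ε := lt_min hδ (lt_min (by linarith) (by linarith))
      have hε1 : ε ≤ d a₀ - ∑ y, γ (a₀, y) := le_trans (min_le_right _ _) (min_le_left _ _)
      have hε2 : ε ≤ b x - ∑ a, γ (a, x) := le_trans (min_le_right _ _) (min_le_right _ _)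
      obtain ⟨γ', h1, h2, h3, h4, h5⟩ := H ε hε (min_le_left _ _)
      set γ'' : ι × ι → ℝ := fun p => γ' p + (if p = (a', x) then ε else 0) with hγ''
      have hrow'' : ∀ a, ∑ y, γ'' (a, y)
          = (∑ y, γ (a, y) + (if a = a₀ then ε else 0)) := by
        intro a
        have e1 : ∑ y, (if ((a, y) : ι × ι) = (a', x) then ε else 0)
            = if a = a' then ε else 0 := by
          by_cases ha : a = a' <;> simp [Prod.ext_iff, ha, Finset.sum_ite_eq']
        have e2 : ∑ y, γ'' (a, y) = ∑ y, γ' (a, y) + (if a = a' then ε else 0) := by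
          simp only [hγ'']; rw [Finset.sum_add_distrib, e1]
        rw [e2, h4 a]; ring
      have hcol'' : ∀ y, ∑ a, γ'' (a, y)
          = (∑ a, γ (a, y) + (if y = x then ε else 0)) := by
        intro y
        have e1 : ∑ a, (if ((a, y) : ι × ι) = (a', x) then ε else 0)
            = ∑ a, (if y = x then (if a = a' then ε else 0) else 0) := by
          apply Finset.sum_congr rfl; intro a _
          by_cases hy : y = x <;> by_cases ha : a = a' <;> simp [Prod.ext_iff, hy, ha]
        have e2 : ∑ a, γ'' (a, y) = ∑ a, γ' (a, y)
            + ∑ a, (if y = x then (if a = a' then ε else 0) else 0) := by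
          simp only [hγ'']; rw [Finset.sum_add_distrib, e1]
        rw [e2, h3 y]
        by_cases hy : y = x <;> simp [hy, Finset.sum_ite_eq']
      have hK'' : γ'' ∈ K := by
        refine ⟨?_, ?_, ?_, ?_⟩
        · intro p
          have : γ'' p = γ' p + (if p = (a', x) then ε else 0) := rfl
          rw [this]
          split_ifs <;> linarith [h1 p]
        · intro a y hEa
          have hne1 : ((a, y) : ι × ι) ≠ (a', x) := by
            rintro h; rw [Prod.mk.injEq] at h; obtain ⟨rfl, rfl⟩ := h; exact hEa hEx
          simp [hγ'', hne1, h2 a y hEa]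
        · intro a
          rw [hrow'' a]
          by_cases ha0 : a = a₀
          · subst ha0; rw [if_pos rfl]; linarith
          · rw [if_neg ha0]; linarith [hrow a]
        · intro y
          rw [hcol'' y]
          by_cases hy : y = x
          · subst hy; rw [if_pos rfl]; linarith
          · rw [if_neg hy]; linarith [hcol y]
      have hΦ : ∑ p, γ'' p = ∑ p, γ p + ε := by
        rw [Fintype.sum_prod_type, Fintype.sum_prod_type]
        rw [Finset.sum_congr rfl fun a (_ : a ∈ univ) => hrow'' a]
        rw [Finset.sum_add_distrib, Finset.sum_ite_eq' univ a₀ (fun _ => ε)]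
        simp
      have hle := hmax hK''
      simp only [Set.mem_setOf_eq] at hle
      rw [hΦ] at hle
      linarith [hle]
    -- the cut argument
    set X : Finset ι := univ.filter (fun a => Relation.ReflTransGen step a₀ a) with hX
    set N : Finset ι := univ.filter (fun x => ∃ a ∈ X, E a x) with hN
    have hXa₀ : a₀ ∈ X := by
      rw [hX, mem_filter]; exact ⟨mem_univ a₀, Relation.ReflTransGen.refl⟩
    have hNsat : ∀ x ∈ N, ∑ a, γ (a, x) = b x := by
      intro x hx
      rw [hN, mem_filter] at hx
      obtain ⟨-, a', ha', hEx⟩ := hx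
      rw [hX, mem_filter] at ha'
      exact sat a' ha'.2 x hEx
    have hzero : ∀ a, a ∉ X → ∀ x ∈ N, γ (a, x) = 0 := by
      intro a haX x hxN
      by_contra hne
      have hpos' : 0 < γ (a, x) := lt_of_le_of_ne (hpos _) (Ne.symm hne)
      rw [hN, mem_filter] at hxN
      obtain ⟨-, a', ha', hEx⟩ := hxN
      rw [hX, mem_filter] at ha'
      exact haX (by rw [hX, mem_filter]
                    exact ⟨mem_univ a, ha'.2.tail ⟨x, hEx, hpos'⟩⟩)
    have chain : ∑ a ∈ X, d a ≤ ∑ a ∈ X, ∑ x, γ (a, x) := by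
      calc ∑ a ∈ X, d a ≤ ∑ x ∈ N, b x := hall X
      _ = ∑ x ∈ N, ∑ a, γ (a, x) := (Finset.sum_congr rfl fun x hx => (hNsat x hx).symm)
      _ = ∑ a, ∑ x ∈ N, γ (a, x) := Finset.sum_comm
      _ = ∑ a ∈ X, ∑ x ∈ N, γ (a, x) := by
            refine (Finset.sum_subset (subset_univ X) ?_).symm
            intro a _ haX
            exact Finset.sum_eq_zero fun x hx => hzero a haX x hx
      _ ≤ ∑ a ∈ X, ∑ x, γ (a, x) :=
            Finset.sum_le_sum fun a _ => Finset.sum_le_sum_of_subset_of_nonneg (subset_univ N)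
              (fun x _ _ => hpos (a, x))
    have strict : ∑ a ∈ X, ∑ x, γ (a, x) < ∑ a ∈ X, d a :=
      Finset.sum_lt_sum (fun a _ => hrow a) ⟨a₀, hXa₀, hlt⟩
    linarith
  exact ⟨γ, hpos, fun a x h => by_contra fun hE => h (hsupp a x hE), main, hcol⟩


open Finset in
set_option maxHeartbeats 1000000 in
/-- Key combinatorial step for concavity of the reweighted Kikuchi entropy: if the weights
`ρ` on a finite poset of regions satisfy `Σ_{t ∈ F(S)} ρ_t ≥ 0` for every subset `S`
(where `F(S)` is the upward closure of `S`), then in the bipartite graph on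
`V₁ = {ρ < 0}`, `V₂ = {ρ > 0}` with edges `s < t`, there exists a nonnegative edge labeling
`γ` with row sums `−ρ_s` on `V₁` and column sums at most `ρ_t` on `V₂`. -/
theorem stmt13 {R : Type*} [Fintype R] [PartialOrder R] (ρ : R → ℝ)
    (hF : ∀ S : Finset R,
      0 ≤ ∑ t ∈ Finset.univ.filter (fun t => ∃ s ∈ S, s ≤ t), ρ t) :
    ∃ γ : R × R → ℝ,
      (∀ p, 0 ≤ γ p) ∧
      (∀ s t, γ (s, t) ≠ 0 → s < t ∧ ρ s < 0 ∧ 0 < ρ t) ∧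
      (∀ s, ρ s < 0 →
        ∑ t ∈ Finset.univ.filter (fun t => s < t ∧ 0 < ρ t), γ (s, t) = -ρ s) ∧
      (∀ t, 0 < ρ t →
        ∑ s ∈ Finset.univ.filter (fun s => s < t ∧ ρ s < 0), γ (s, t) ≤ ρ t) := by
  obtain ⟨E, hE⟩ : ∃ E : R → R → Prop, E = fun s t => s < t ∧ ρ s < 0 ∧ 0 < ρ t :=
    ⟨_, rfl⟩
  set d : R → ℝ := fun s => max (-ρ s) 0 with hd'
  set b : R → ℝ := fun t => max (ρ t) 0 with hb'
  have hd : ∀ s, 0 ≤ d s := fun s => le_max_right _ _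
  have hb : ∀ t, 0 ≤ b t := fun t => le_max_right _ _
  have hall : ∀ S : Finset R,
      ∑ s ∈ S, d s ≤ ∑ t ∈ univ.filter (fun t => ∃ s ∈ S, E s t), b t := by
    intro S
    set S' : Finset R := S.filter (fun s => ρ s < 0) with hS'
    set F : Finset R := univ.filter (fun t => ∃ s ∈ S', s ≤ t) with hFdef
    have hS'F : S' ⊆ F := by
      intro s hs
      rw [hFdef, mem_filter]
      exact ⟨mem_univ s, s, hs, le_refl s⟩
    have hL : ∑ s ∈ S, d s = ∑ s ∈ S', -ρ s := by
      rw [hS', Finset.sum_filter]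
      apply Finset.sum_congr rfl
      intro s _
      by_cases hρ : ρ s < 0
      · rw [if_pos hρ, hd']; exact max_eq_left (by linarith)
      · rw [if_neg hρ, hd']; exact max_eq_right (by push_neg at hρ; linarith)
    have h0 : 0 ≤ ∑ t ∈ F, ρ t := hF S'
    have hsplit : ∑ t ∈ F, ρ t = ∑ s ∈ S', ρ s + ∑ t ∈ F \ S', ρ t := by
      rw [add_comm]; exact (Finset.sum_sdiff hS'F).symm
    have h1 : ∑ s ∈ S', -ρ s ≤ ∑ t ∈ F \ S', ρ t := by
      rw [Finset.sum_neg_distrib]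
      linarith
    have h2 : ∑ t ∈ F \ S', ρ t ≤ ∑ t ∈ (F \ S').filter (fun t => 0 < ρ t), b t := by
      rw [Finset.sum_filter]
      apply Finset.sum_le_sum
      intro t _
      by_cases hρ : 0 < ρ t
      · rw [if_pos hρ, hb']; exact le_max_left _ _
      · rw [if_neg hρ]; push_neg at hρ; linarith
    have h3 : (F \ S').filter (fun t => 0 < ρ t) ⊆ univ.filter (fun t => ∃ s ∈ S, E s t) := by
      intro t ht
      rw [mem_filter, Finset.mem_sdiff, hFdef, mem_filter] at ht
      obtain ⟨⟨⟨-, s, hsS', hst⟩, htS'⟩, hρt⟩ := ht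
      rw [hS', mem_filter] at hsS'
      obtain ⟨hsS, hρs⟩ := hsS'
      have hne : s ≠ t := by rintro rfl; linarith
      rw [mem_filter]
      refine ⟨mem_univ t, s, hsS, ?_⟩
      rw [hE]
      exact ⟨lt_of_le_of_ne hst hne, hρs, hρt⟩
    have h4 : ∑ t ∈ (F \ S').filter (fun t => 0 < ρ t), b t
        ≤ ∑ t ∈ univ.filter (fun t => ∃ s ∈ S, E s t), b t :=
      Finset.sum_le_sum_of_subset_of_nonneg h3 (fun t _ _ => hb t)
    linarith
  obtain ⟨γ, h1, h2, h3, h4⟩ := gale E d b hd hb hall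
  rw [hE] at h2
  refine ⟨γ, h1, fun s t h => h2 s t h, ?_, ?_⟩
  · intro s hρs
    have e : ∑ t ∈ univ.filter (fun t => s < t ∧ 0 < ρ t), γ (s, t) = ∑ t, γ (s, t) :=
      Finset.sum_filter_of_ne fun t _ h => ⟨(h2 s t h).1, (h2 s t h).2.2⟩
    rw [e, h3 s, hd']
    exact max_eq_left (by linarith)
  · intro t hρt
    have e : ∑ s ∈ univ.filter (fun s => s < t ∧ ρ s < 0), γ (s, t) = ∑ s, γ (s, t) :=
      Finset.sum_filter_of_ne fun s _ h => ⟨(h2 s t h).1, (h2 s t h).2.1⟩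
    rw [e]
    calc ∑ s, γ (s, t) ≤ b t := h4 t
    _ = ρ t := max_eq_left (by linarith)
end
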